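/- arXiv:0901.4225 — 8 statements merged into one kernel-verified Lean document; each statement's English description precedes it below -/
import Mathlib

section
/- Let p be a prime, d ≥ 1, and f ∈ ℤ_p[x_1,…,x_d]. For every integer m ≥ 1, the Haar measure of the set {z ∈ ℤ_p^d : f(z) ∈ p^m ℤ_p} equals N_m(f) · p^{−dm}. -/
open MeasureTheory
open scoped ENNReal

noncomputable instance (p : ℕ) [Fact p.Prime] : MeasurableSpace ℤ_[p] := borel _
instance (p : ℕ) [Fact p.Prime] : BorelSpace ℤ_[p] := ⟨rfl⟩

/-- `N_m(f)`: the number of solutions of `f ≡ 0` in `(ℤ/p^mℤ)^d`. -/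
noncomputable def igusaN (p : ℕ) [Fact p.Prime] (d : ℕ)
    (f : MvPolynomial (Fin d) ℤ_[p]) (m : ℕ) : ℕ :=
  Nat.card {u : Fin d → ZMod (p ^ m) //
    MvPolynomial.eval u (MvPolynomial.map (PadicInt.toZModPow m) f) = 0}

lemma measurable_fiber (p : ℕ) [Fact p.Prime] (m : ℕ) (a : ZMod (p^m)) :
    MeasurableSet ((PadicInt.toZModPow m) ⁻¹' {a} : Set ℤ_[p]) := by
  haveI : NeZero (p ^ m) := ⟨pow_ne_zero _ (Nat.Prime.ne_zero Fact.out)⟩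
  have hc : (PadicInt.toZModPow (p := p) m) ((a.val : ℕ) : ℤ_[p]) = a := by
    simp [ZMod.natCast_zmod_val]
  have h : ((PadicInt.toZModPow m) ⁻¹' {a} : Set ℤ_[p])
      = Metric.closedBall ((a.val : ℕ) : ℤ_[p]) ((p : ℝ) ^ (-(m:ℤ))) := by
    ext x
    simp only [Set.mem_preimage, Set.mem_singleton_iff, Metric.mem_closedBall, dist_eq_norm]
    rw [PadicInt.norm_le_pow_iff_mem_span_pow, ← PadicInt.ker_toZModPow, RingHom.mem_ker,
      map_sub, hc, sub_eq_zero]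
  rw [h]
  exact measurableSet_closedBall

/-- For every `m ≥ 1`, the Haar measure (normalized so that
`μ(ℤ_p^d) = 1`) of `{z ∈ ℤ_p^d : f(z) ∈ p^m ℤ_p}` equals `N_m(f) · p^{-dm}`. -/
theorem measure_congruence_set (p : ℕ) [Fact p.Prime] (d : ℕ) (hd : 1 ≤ d)
    (f : MvPolynomial (Fin d) ℤ_[p])
    (μ : Measure (Fin d → ℤ_[p])) [μ.IsAddHaarMeasure] (hμ : μ Set.univ = 1)
    (m : ℕ) (hm : 1 ≤ m) :
    μ {z : Fin d → ℤ_[p] | (p : ℤ_[p]) ^ m ∣ MvPolynomial.eval z f}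
      = igusaN p d f m * ((p : ℝ≥0∞) ^ (d * m))⁻¹ := by
  classical
  haveI : NeZero (p ^ m) := ⟨pow_ne_zero _ (Nat.Prime.ne_zero Fact.out)⟩
  set π : (Fin d → ℤ_[p]) → (Fin d → ZMod (p ^ m)) :=
    fun z i => PadicInt.toZModPow m (z i) with hπ
  -- fibers of π are measurable
  have hmeas : ∀ u : Fin d → ZMod (p ^ m), MeasurableSet (π ⁻¹' {u}) := by
    intro u
    have : π ⁻¹' {u} = ⋂ i, (fun z : Fin d → ℤ_[p] => z i) ⁻¹'
        ((PadicInt.toZModPow m) ⁻¹' {u i}) := by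
      ext z
      simp [hπ, funext_iff, Set.mem_iInter]
    rw [this]
    exact MeasurableSet.iInter fun i =>
      (measurable_pi_apply i) (measurable_fiber p m (u i))
  -- all fibers have the same measure
  have hsurj : Function.Surjective π := by
    intro u
    refine ⟨fun i => ((u i).val : ℤ_[p]), ?_⟩
    funext i
    simp [hπ, ZMod.natCast_zmod_val]
  have hfiber : ∀ u : Fin d → ZMod (p ^ m), μ (π ⁻¹' {u}) = μ (π ⁻¹' {0}) := by
    intro u
    obtain ⟨z₀, hz₀⟩ := hsurj u
    have hset : π ⁻¹' {u} = (fun z => -z₀ + z) ⁻¹' (π ⁻¹' {0}) := by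
      ext z
      simp only [Set.mem_preimage, Set.mem_singleton_iff]
      constructor
      · intro h
        funext i
        have h1 := congrFun h i
        have h2 := congrFun hz₀ i
        simp only [hπ] at h1 h2
        show PadicInt.toZModPow m ((-z₀ + z) i) = 0
        simp only [Pi.add_apply, Pi.neg_apply, map_add, map_neg]
        linear_combination h1 - h2
      · intro h
        funext i
        have h1 := congrFun h i
        have h2 := congrFun hz₀ i
        simp only [hπ, Pi.add_apply, Pi.neg_apply, map_add, map_neg, Pi.zero_apply] at h1
        simp only [hπ] at h2
        show PadicInt.toZModPow m (z i) = u i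
        rw [← h2]
        linear_combination h1
    rw [hset, measure_preimage_add]
  -- measure of the preimage of any set
  have hcount : ∀ S : Set (Fin d → ZMod (p ^ m)),
      μ (π ⁻¹' S) = (Nat.card S : ℝ≥0∞) * μ (π ⁻¹' {0}) := by
    intro S
    have hS : π ⁻¹' S = ⋃ u ∈ S.toFinset, π ⁻¹' {u} := by
      ext z; simp
    rw [hS, measure_biUnion_finset ?_ (fun u _ => hmeas u)]
    · rw [Finset.sum_congr rfl (fun u _ => hfiber u), Finset.sum_const, nsmul_eq_mul]
      congr 1
      rw [Nat.card_eq_card_toFinset]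
    · intro a _ b _ hab
      simp only [Function.onFun]
      refine Set.disjoint_left.mpr fun z hza hzb => hab ?_
      simp only [Set.mem_preimage, Set.mem_singleton_iff] at hza hzb
      rw [← hza, hzb]
  -- total measure gives the fiber measure
  have hcard_univ : (Nat.card (Set.univ : Set (Fin d → ZMod (p ^ m))) : ℝ≥0∞)
      = (p : ℝ≥0∞) ^ (d * m) := by
    rw [Nat.card_coe_set_eq, Set.ncard_univ, Nat.card_eq_fintype_card]
    rw [Fintype.card_pi]
    simp only [ZMod.card, Finset.prod_const, Finset.card_univ, Fintype.card_fin]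
    push_cast
    rw [← pow_mul, mul_comm m d]
  have huniv : (p : ℝ≥0∞) ^ (d * m) * μ (π ⁻¹' {0}) = 1 := by
    rw [← hcard_univ, ← hcount Set.univ, Set.preimage_univ, hμ]
  have hp0 : ((p : ℝ≥0∞) ^ (d * m)) ≠ 0 := by
    simp [Nat.Prime.ne_zero (Fact.out : p.Prime)]
  have hptop : ((p : ℝ≥0∞) ^ (d * m)) ≠ ⊤ := by
    exact ENNReal.pow_ne_top (ENNReal.natCast_ne_top p)
  have hfib0 : μ (π ⁻¹' {0}) = ((p : ℝ≥0∞) ^ (d * m))⁻¹ := by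
    have := congrArg (fun x => ((p : ℝ≥0∞) ^ (d * m))⁻¹ * x) huniv
    simpa [← mul_assoc, ENNReal.inv_mul_cancel hp0 hptop] using this
  -- rewrite the congruence set as a preimage
  have hkey : ∀ z : Fin d → ℤ_[p],
      (p : ℤ_[p]) ^ m ∣ MvPolynomial.eval z f ↔
        MvPolynomial.eval (π z) (MvPolynomial.map (PadicInt.toZModPow m) f) = 0 := by
    intro z
    rw [← Ideal.mem_span_singleton, ← PadicInt.ker_toZModPow, RingHom.mem_ker]
    have hcomm : PadicInt.toZModPow m (MvPolynomial.eval z f)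
        = MvPolynomial.eval (π z) (MvPolynomial.map (PadicInt.toZModPow m) f) := by
      rw [← MvPolynomial.eval₂_id f, MvPolynomial.eval₂_comp_left, RingHom.comp_id,
        MvPolynomial.eval₂_eq_eval_map]
      rfl
    rw [hcomm]
  have hsetE : {z : Fin d → ℤ_[p] | (p : ℤ_[p]) ^ m ∣ MvPolynomial.eval z f}
      = π ⁻¹' {u | MvPolynomial.eval u (MvPolynomial.map (PadicInt.toZModPow m) f) = 0} := by
    ext z; exact hkey z
  rw [hsetE, hcount, hfib0]
  congr 2
end

section
/- Let p be a prime, d ≥ 1, f ∈ ℤ_p[x_1,…,x_d], and s ∈ ℂ with Re(s) > 0. Then the function z ↦ |f(z)|_p^s is integrable on ℤ_p^d with respect to μ, the series ∑_{i=0}^{∞} μ({z ∈ ℤ_p^d : |f(z)|_p = p^{−i}}) · p^{−is} converges absolutely, and ∫_{ℤ_p^d} |f(z)|_p^s dμ(z) = ∑_{i=0}^{∞} μ({z ∈ ℤ_p^d : |f(z)|_p = p^{−i}}) · p^{−is}. -/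
open MeasureTheory
open scoped ENNReal

private lemma igusa_aux_cpow (p : ℕ) [Fact p.Prime] (s : ℂ) (i : ℕ) :
    (((p : ℝ) ^ (-(i : ℤ)) : ℝ) : ℂ) ^ s = (p : ℂ) ^ (-(i : ℂ) * s) := by
  have hp : (1 : ℝ) < p := Nat.one_lt_cast.2 (Fact.out : p.Prime).one_lt
  have hp0 : (0 : ℝ) < p := by linarith
  have hb : (0:ℝ) < (p : ℝ) ^ (-(i : ℤ)) := zpow_pos hp0 _
  have hcast : ((p : ℂ)) = (((p : ℝ) : ℂ)) := by push_cast; ring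
  rw [hcast, Complex.cpow_def_of_ne_zero (by exact_mod_cast hb.ne'),
    Complex.cpow_def_of_ne_zero (by exact_mod_cast hp0.ne')]
  congr 1
  rw [← Complex.ofReal_log hb.le, ← Complex.ofReal_log hp0.le, Real.log_zpow]
  push_cast
  ring

/-- For `Re(s) > 0`, the function `z ↦ |f(z)|_p^s` is integrable
on `ℤ_p^d` with respect to the normalized Haar measure `μ`, the series
`∑_{i≥0} μ({z : |f(z)|_p = p^{-i}}) p^{-is}` converges absolutely, and the
integral equals the sum of the series.  (Here `0^s = 0` since `s ≠ 0`.) -/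
theorem igusa_integral_as_series (p : ℕ) [Fact p.Prime] (d : ℕ) (hd : 1 ≤ d)
    (f : MvPolynomial (Fin d) ℤ_[p])
    (μ : Measure (Fin d → ℤ_[p])) [μ.IsAddHaarMeasure] (hμ : μ Set.univ = 1)
    (s : ℂ) (hs : 0 < s.re) :
    Integrable (fun z : Fin d → ℤ_[p] => (‖MvPolynomial.eval z f‖ : ℂ) ^ s) μ ∧
    Summable (fun i : ℕ =>
      ‖((μ {z : Fin d → ℤ_[p] | ‖MvPolynomial.eval z f‖ = (p : ℝ) ^ (-(i : ℤ))}).toReal : ℂ)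
        * (p : ℂ) ^ (-(i : ℂ) * s)‖) ∧
    ∫ z : Fin d → ℤ_[p], (‖MvPolynomial.eval z f‖ : ℂ) ^ s ∂μ
      = ∑' i : ℕ,
          ((μ {z : Fin d → ℤ_[p] | ‖MvPolynomial.eval z f‖ = (p : ℝ) ^ (-(i : ℤ))}).toReal : ℂ)
            * (p : ℂ) ^ (-(i : ℂ) * s) := by
  classical
  have hp1 : (1 : ℝ) < p := Nat.one_lt_cast.2 (Fact.out : p.Prime).one_lt
  have hp0 : (0 : ℝ) < p := by linarith
  haveI : IsProbabilityMeasure μ := ⟨hμ⟩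
  have hs0 : s ≠ 0 := fun h => by simp [h] at hs
  have hFcont : Continuous fun z : Fin d → ℤ_[p] => ‖MvPolynomial.eval z f‖ :=
    (MvPolynomial.continuous_eval f).norm
  have hF0 : ∀ z : Fin d → ℤ_[p], (0:ℝ) ≤ ‖MvPolynomial.eval z f‖ := fun z => norm_nonneg _
  have hF1 : ∀ z : Fin d → ℤ_[p], ‖MvPolynomial.eval z f‖ ≤ 1 :=
    fun z => PadicInt.norm_le_one _
  have hgcont : Continuous fun z : Fin d → ℤ_[p] => (‖MvPolynomial.eval z f‖ : ℂ) ^ s := by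
    rw [continuous_iff_continuousAt]
    intro z
    exact (Complex.continuousAt_cpow_const_of_re_pos (Or.inl (by simp [hF0 z])) hs).comp
      ((Complex.continuous_ofReal.comp hFcont).continuousAt)
  have hbound : ∀ z : Fin d → ℤ_[p], ‖(‖MvPolynomial.eval z f‖ : ℂ) ^ s‖ ≤ 1 := by
    intro z
    by_cases h0 : ‖MvPolynomial.eval z f‖ = 0
    · simp [h0, Complex.zero_cpow hs0]
    · have hpos : (0:ℝ) < ‖MvPolynomial.eval z f‖ := lt_of_le_of_ne (hF0 z) (Ne.symm h0)
      rw [Complex.norm_cpow_eq_rpow_re_of_pos hpos]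
      exact Real.rpow_le_one (hF0 z) (hF1 z) hs.le
  have hint : Integrable (fun z : Fin d → ℤ_[p] => (‖MvPolynomial.eval z f‖ : ℂ) ^ s) μ :=
    Integrable.mono' (integrable_const 1) hgcont.aestronglyMeasurable (ae_of_all _ hbound)
  have hAmeas : ∀ i : ℕ,
      MeasurableSet {z : Fin d → ℤ_[p] | ‖MvPolynomial.eval z f‖ = (p : ℝ) ^ (-(i : ℤ))} :=
    fun i => hFcont.measurable (measurableSet_singleton ((p : ℝ) ^ (-(i : ℤ))))
  -- norm of p-adic value computation
  have hnormval : ∀ i : ℕ,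
      ‖(p : ℂ) ^ (-(i : ℂ) * s)‖ = ((p : ℝ) ^ (-s.re)) ^ i := by
    intro i
    have hcast : ((p : ℂ)) = (((p : ℝ) : ℂ)) := by push_cast; ring
    rw [hcast, Complex.norm_cpow_eq_rpow_re_of_pos hp0]
    have hre : (-(i : ℂ) * s).re = -s.re * (i : ℝ) := by
      simp [Complex.mul_re]
      ring
    rw [hre, Real.rpow_mul hp0.le, Real.rpow_natCast]
  have htoReal_le : ∀ i : ℕ,
      (μ {z : Fin d → ℤ_[p] | ‖MvPolynomial.eval z f‖ = (p : ℝ) ^ (-(i : ℤ))}).toReal ≤ 1 := by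
    intro i
    have := ENNReal.toReal_mono (by simp) (prob_le_one
      (μ := μ) (s := {z : Fin d → ℤ_[p] | ‖MvPolynomial.eval z f‖ = (p : ℝ) ^ (-(i : ℤ))}))
    simpa using this
  have hsummable : Summable (fun i : ℕ =>
      ‖((μ {z : Fin d → ℤ_[p] | ‖MvPolynomial.eval z f‖ = (p : ℝ) ^ (-(i : ℤ))}).toReal : ℂ)
        * (p : ℂ) ^ (-(i : ℂ) * s)‖) := by
    have hr0 : (0:ℝ) ≤ (p : ℝ) ^ (-s.re) := (Real.rpow_pos_of_pos hp0 _).le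
    have hr1 : (p : ℝ) ^ (-s.re) < 1 :=
      Real.rpow_lt_one_of_one_lt_of_neg hp1 (by linarith)
    refine Summable.of_nonneg_of_le (fun i => norm_nonneg _) (fun i => ?_)
      (summable_geometric_of_lt_one hr0 hr1)
    rw [norm_mul, hnormval i]
    have h1 : ‖((μ {z : Fin d → ℤ_[p] | ‖MvPolynomial.eval z f‖ = (p : ℝ) ^ (-(i : ℤ))}).toReal
        : ℂ)‖ ≤ 1 := by
      rw [Complex.norm_real, Real.norm_eq_abs, abs_of_nonneg ENNReal.toReal_nonneg]
      exact htoReal_le i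
    calc ‖((μ {z : Fin d → ℤ_[p] | ‖MvPolynomial.eval z f‖ = (p : ℝ) ^ (-(i : ℤ))}).toReal : ℂ)‖
          * ((p : ℝ) ^ (-s.re)) ^ i
        ≤ 1 * ((p : ℝ) ^ (-s.re)) ^ i := by
          exact mul_le_mul_of_nonneg_right h1 (pow_nonneg hr0 i)
      _ = ((p : ℝ) ^ (-s.re)) ^ i := one_mul _
  refine ⟨hint, hsummable, ?_⟩
  -- the integral computation
  set A : ℕ → Set (Fin d → ℤ_[p]) :=
    fun i => {z : Fin d → ℤ_[p] | ‖MvPolynomial.eval z f‖ = (p : ℝ) ^ (-(i : ℤ))} with hA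
  have hdisj : Pairwise (Function.onFun Disjoint A) := by
    intro i j hij
    refine Set.disjoint_left.2 fun z hzi hzj => hij ?_
    have : ((p : ℝ) ^ (-(i : ℤ)) : ℝ) = (p : ℝ) ^ (-(j : ℤ)) := by
      rw [← hzi, hzj]
    have := zpow_right_injective₀ hp0 (by linarith) this
    omega
  have hcompl : ∀ z : Fin d → ℤ_[p], z ∉ ⋃ i, A i →
      (‖MvPolynomial.eval z f‖ : ℂ) ^ s = 0 := by
    intro z hz
    have hzero : MvPolynomial.eval z f = 0 := by
      by_contra h0
      have hval := PadicInt.norm_eq_zpow_neg_valuation h0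
      apply hz
      refine Set.mem_iUnion.2 ⟨(MvPolynomial.eval z f).valuation, ?_⟩
      show ‖MvPolynomial.eval z f‖ = (p : ℝ) ^ (-((MvPolynomial.eval z f).valuation : ℤ))
      rw [hval]
    rw [hzero]
    simp [Complex.zero_cpow hs0]
  have hstep1 : ∫ z : Fin d → ℤ_[p], (‖MvPolynomial.eval z f‖ : ℂ) ^ s ∂μ
      = ∫ z in ⋃ i, A i, (‖MvPolynomial.eval z f‖ : ℂ) ^ s ∂μ :=
    (setIntegral_eq_integral_of_forall_compl_eq_zero hcompl).symm
  have hstep2 : ∫ z in ⋃ i, A i, (‖MvPolynomial.eval z f‖ : ℂ) ^ s ∂μ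
      = ∑' i : ℕ, ∫ z in A i, (‖MvPolynomial.eval z f‖ : ℂ) ^ s ∂μ :=
    integral_iUnion hAmeas hdisj hint.integrableOn
  have hstep3 : ∀ i : ℕ, ∫ z in A i, (‖MvPolynomial.eval z f‖ : ℂ) ^ s ∂μ
      = ((μ (A i)).toReal : ℂ) * (p : ℂ) ^ (-(i : ℂ) * s) := by
    intro i
    have : ∫ z in A i, (‖MvPolynomial.eval z f‖ : ℂ) ^ s ∂μ
        = ∫ _ in A i, ((((p : ℝ) ^ (-(i : ℤ)) : ℝ) : ℂ) ^ s) ∂μ := by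
      refine setIntegral_congr_fun (hAmeas i) (fun z hz => ?_)
      have hz' : ‖MvPolynomial.eval z f‖ = (p : ℝ) ^ (-(i : ℤ)) := hz
      rw [hz']
    rw [this, setIntegral_const, igusa_aux_cpow p s i, Complex.real_smul]
    rfl
  rw [hstep1, hstep2]
  exact tsum_congr hstep3
end

section
/- (Transformation formula relating the Igusa Poincaré series and the Igusa zeta function.) Let p be a prime, d ≥ 1, f ∈ ℤ_p[x_1,…,x_d], and s ∈ ℂ with Re(s) > 0. Then the series ∑_{m≥1} N_m(f) · p^{−m(d+s)} converges absolutely and equals (p^{−s}/(1 − p^{−s})) · (1 − ∫_{ℤ_p^d} |f(z)|_p^s dμ(z)). -/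
set_option linter.unusedSectionVars false
set_option linter.unusedVariables false



open MeasureTheory
open scoped ENNReal

variable {p : ℕ} [Fact p.Prime]

lemma pzt_coordSet_eq (m : ℕ) (c : ℤ_[p]) :
    {x : ℤ_[p] | PadicInt.toZModPow m x = PadicInt.toZModPow m c}
      = Metric.closedBall c ((p : ℝ) ^ (-(m : ℤ))) := by
  ext x
  simp only [Set.mem_setOf_eq, Metric.mem_closedBall, dist_eq_norm]
  rw [← sub_eq_zero, ← map_sub, ← RingHom.mem_ker, PadicInt.ker_toZModPow,
    ← PadicInt.norm_le_pow_iff_mem_span_pow]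

lemma pzt_toZModPow_surj (m : ℕ) : Function.Surjective (PadicInt.toZModPow (p := p) m) := by
  intro u
  refine ⟨((u.val : ℕ) : ℤ_[p]), ?_⟩
  haveI : NeZero (p ^ m) := ⟨pow_ne_zero m (Fact.out (p := p.Prime)).ne_zero⟩
  rw [map_natCast, ZMod.natCast_zmod_val]

lemma pzt_fiber_measurableSet (d m : ℕ) (u : Fin d → ZMod (p ^ m)) :
    MeasurableSet {z : Fin d → ℤ_[p] | ∀ i, PadicInt.toZModPow m (z i) = u i} := by
  choose c hc using fun i => pzt_toZModPow_surj m (u i)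
  have : {z : Fin d → ℤ_[p] | ∀ i, PadicInt.toZModPow m (z i) = u i}
      = Set.pi Set.univ (fun i => Metric.closedBall (c i) ((p : ℝ) ^ (-(m : ℤ)))) := by
    ext z
    simp only [Set.mem_setOf_eq, Set.mem_pi, Set.mem_univ, forall_true_left]
    refine forall_congr' fun i => ?_
    rw [← pzt_coordSet_eq m (c i), hc i]
    rfl
  rw [this]
  exact MeasurableSet.univ_pi fun i => measurableSet_closedBall

lemma pzt_measure_fiber (d m : ℕ) (μ : Measure (Fin d → ℤ_[p])) [μ.IsAddHaarMeasure]
    (hμ : μ Set.univ = 1) (u : Fin d → ZMod (p ^ m)) :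
    μ {z : Fin d → ℤ_[p] | ∀ i, PadicInt.toZModPow m (z i) = u i}
      = (((p : ℝ≥0∞) ^ m) ^ d)⁻¹ := by
  haveI : NeZero (p ^ m) := ⟨pow_ne_zero m (Fact.out (p := p.Prime)).ne_zero⟩
  set F : (Fin d → ZMod (p ^ m)) → Set (Fin d → ℤ_[p]) :=
    fun u => {z | ∀ i, PadicInt.toZModPow m (z i) = u i} with hF
  have key : ∀ u, μ (F u) = μ (F 0) := by
    intro u
    choose c hc using fun i => pzt_toZModPow_surj m (u i)
    have : F u = (fun z => -c + z) ⁻¹' F 0 := by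
      ext z
      simp only [hF, Set.mem_setOf_eq, Set.mem_preimage, Pi.add_apply, Pi.neg_apply,
        map_add, map_neg, hc, Pi.zero_apply, neg_add_eq_zero]
      exact forall_congr' fun i => eq_comm
    rw [this, measure_preimage_add]
  have hdisj : Pairwise (Function.onFun Disjoint F) := by
    intro u v huv
    refine Set.disjoint_left.2 fun z hz hz' => huv ?_
    funext i
    rw [← hz i, ← hz' i]
  have htot : Set.univ = ⋃ u, F u := by
    ext z
    simp only [Set.mem_univ, Set.mem_iUnion, true_iff]
    exact ⟨fun i => PadicInt.toZModPow m (z i), fun i => rfl⟩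
  have hsum : (1 : ℝ≥0∞) = ∑' u, μ (F u) := by
    rw [← hμ, htot, measure_iUnion hdisj (pzt_fiber_measurableSet d m)]
  have hcard : (Fintype.card (Fin d → ZMod (p ^ m)) : ℝ≥0∞) * μ (F 0) = 1 := by
    rw [hsum, tsum_fintype]
    simp only [key]
    rw [Finset.sum_const, nsmul_eq_mul, Finset.card_univ]
  have hcard' : (Fintype.card (Fin d → ZMod (p ^ m)) : ℝ≥0∞) = ((p : ℝ≥0∞) ^ m) ^ d := by
    rw [Fintype.card_fun, ZMod.card, Fintype.card_fin]
    push_cast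
    ring
  rw [key u]
  have hp0 : (p : ℝ≥0∞) ≠ 0 := Nat.cast_ne_zero.2 (Fact.out (p := p.Prime)).ne_zero
  have hne : ((p : ℝ≥0∞) ^ m) ^ d ≠ 0 := pow_ne_zero _ (pow_ne_zero _ hp0)
  have hnt : ((p : ℝ≥0∞) ^ m) ^ d ≠ ⊤ :=
    ENNReal.pow_ne_top (ENNReal.pow_ne_top (ENNReal.natCast_ne_top p))
  rw [hcard'] at hcard
  rw [← one_mul (μ (F 0)), ← ENNReal.inv_mul_cancel hne hnt, mul_assoc, hcard, mul_one]

lemma pzt_hom_eval_eq {d : ℕ} (m : ℕ) (f : MvPolynomial (Fin d) ℤ_[p]) (z : Fin d → ℤ_[p]) :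
    PadicInt.toZModPow m (MvPolynomial.eval z f)
      = MvPolynomial.eval (fun i => PadicInt.toZModPow m (z i))
          (MvPolynomial.map (PadicInt.toZModPow m) f) := by
  rw [MvPolynomial.eval_map]
  exact (MvPolynomial.eval₂_comp_left _ (RingHom.id _) z f).trans rfl

lemma pzt_mem_A_iff {d : ℕ} (m : ℕ) (f : MvPolynomial (Fin d) ℤ_[p]) (z : Fin d → ℤ_[p]) :
    ‖MvPolynomial.eval z f‖ ≤ (p : ℝ) ^ (-(m : ℤ))
      ↔ MvPolynomial.eval (fun i => PadicInt.toZModPow m (z i))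
          (MvPolynomial.map (PadicInt.toZModPow m) f) = 0 := by
  rw [PadicInt.norm_le_pow_iff_mem_span_pow, ← PadicInt.ker_toZModPow, RingHom.mem_ker,
    pzt_hom_eval_eq]

/-- The level set `A_m = {z : ‖f(z)‖ ≤ p^{-m}}`. -/
def pzt_levelA (p : ℕ) [Fact p.Prime] {d : ℕ} (f : MvPolynomial (Fin d) ℤ_[p]) (m : ℕ) :
    Set (Fin d → ℤ_[p]) :=
  {z : Fin d → ℤ_[p] | ‖MvPolynomial.eval z f‖ ≤ (p : ℝ) ^ (-(m : ℤ))}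

lemma pzt_measurableSet_pzt_levelA {d : ℕ} (f : MvPolynomial (Fin d) ℤ_[p]) (m : ℕ) :
    MeasurableSet (pzt_levelA p f m) := by
  have hc : Continuous fun z : Fin d → ℤ_[p] => MvPolynomial.eval z f :=
    MvPolynomial.continuous_eval f
  exact hc.measurable ((isClosed_le continuous_norm continuous_const).measurableSet)

lemma pzt_pzt_levelA_antitone {d : ℕ} (f : MvPolynomial (Fin d) ℤ_[p]) (m : ℕ) :
    pzt_levelA p f (m + 1) ⊆ pzt_levelA p f m := by
  intro z hz
  have hz' : ‖MvPolynomial.eval z f‖ ≤ (p : ℝ) ^ (-((m + 1 : ℕ) : ℤ)) := hz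
  show ‖MvPolynomial.eval z f‖ ≤ (p : ℝ) ^ (-(m : ℤ))
  refine le_trans hz' (zpow_le_zpow_right₀ ?_ ?_)
  · exact_mod_cast (Fact.out (p := p.Prime)).one_lt.le
  · push_cast; omega

lemma pzt_measure_pzt_levelA (d m : ℕ) (f : MvPolynomial (Fin d) ℤ_[p])
    (μ : Measure (Fin d → ℤ_[p])) [μ.IsAddHaarMeasure] (hμ : μ Set.univ = 1) :
    μ (pzt_levelA p f m) = (igusaN p d f m : ℝ≥0∞) * (((p : ℝ≥0∞) ^ m) ^ d)⁻¹ := by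
  classical
  haveI : NeZero (p ^ m) := ⟨pow_ne_zero m (Fact.out (p := p.Prime)).ne_zero⟩
  set T := {u : Fin d → ZMod (p ^ m) //
    MvPolynomial.eval u (MvPolynomial.map (PadicInt.toZModPow m) f) = 0}
  have hset : pzt_levelA p f m
      = ⋃ u : T, {z : Fin d → ℤ_[p] | ∀ i, PadicInt.toZModPow m (z i) = u.1 i} := by
    ext z
    simp only [pzt_levelA, Set.mem_setOf_eq, Set.mem_iUnion, pzt_mem_A_iff]
    constructor
    · intro h
      exact ⟨⟨fun i => PadicInt.toZModPow m (z i), h⟩, fun i => rfl⟩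
    · rintro ⟨u, hu⟩
      have : (fun i => PadicInt.toZModPow m (z i)) = u.1 := funext hu
      rw [this]
      exact u.2
  have hdisj : Pairwise (Function.onFun Disjoint
      (fun u : T => {z : Fin d → ℤ_[p] | ∀ i, PadicInt.toZModPow m (z i) = u.1 i})) := by
    intro u v huv
    refine Set.disjoint_left.2 fun z hz hz' => huv (Subtype.ext (funext fun i => ?_))
    rw [← hz i, ← hz' i]
  rw [hset, measure_iUnion hdisj (fun u => pzt_fiber_measurableSet d m u.1)]
  haveI : Fintype T := Fintype.ofFinite T
  rw [tsum_fintype]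
  simp only [pzt_measure_fiber d m μ hμ]
  rw [Finset.sum_const, nsmul_eq_mul, Finset.card_univ, igusaN, Nat.card_eq_fintype_card]

lemma pzt_igusaN_zero {d : ℕ} (f : MvPolynomial (Fin d) ℤ_[p]) : igusaN p d f 0 = 1 := by
  haveI : Subsingleton (ZMod (p ^ 0)) := by rw [pow_zero]; infer_instance
  rw [igusaN, Nat.card_eq_one_iff_unique]
  exact ⟨inferInstance, ⟨⟨0, Subsingleton.elim _ _⟩⟩⟩

lemma pzt_igusaN_le {d : ℕ} (f : MvPolynomial (Fin d) ℤ_[p]) (m : ℕ) :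
    igusaN p d f m ≤ (p ^ m) ^ d := by
  haveI : NeZero (p ^ m) := ⟨pow_ne_zero m (Fact.out (p := p.Prime)).ne_zero⟩
  calc igusaN p d f m ≤ Nat.card (Fin d → ZMod (p ^ m)) :=
        Finite.card_subtype_le _
    _ = (p ^ m) ^ d := by
        rw [Nat.card_eq_fintype_card, Fintype.card_fun, ZMod.card, Fintype.card_fin]

lemma pzt_cpow_helper (s : ℂ) (v : ℕ) (hp : 0 < p) :
    ((((p : ℝ) ^ (-(v : ℤ))) : ℝ) : ℂ) ^ s = ((p : ℂ) ^ (-s)) ^ v := by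
  have h0 : (0 : ℝ) ≤ (p : ℝ) := by positivity
  have him : (Complex.log (p : ℂ) * (-(v : ℂ))).im = 0 := by
    simp [Complex.mul_im, Complex.log_im]
  rw [← Real.rpow_intCast (p : ℝ) (-(v : ℤ)), Complex.ofReal_cpow h0]
  push_cast
  rw [← Complex.cpow_mul s (by rw [him]; exact neg_neg_iff_pos.2 Real.pi_pos)
      (by rw [him]; exact Real.pi_pos.le),
    show -(v : ℂ) * s = (v : ℂ) * (-s) by ring, Complex.cpow_nat_mul]

/-- (Transformation formula.)  For `Re(s) > 0`, the series
`∑_{m≥1} N_m(f) p^{-m(d+s)}` converges absolutely and equals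
`p^{-s}/(1-p^{-s}) · (1 - ∫_{ℤ_p^d} |f(z)|_p^s dμ(z))`, where `μ` is the Haar
measure normalized by `μ(ℤ_p^d) = 1`. -/
theorem poincare_zeta_transformation (p : ℕ) [Fact p.Prime] (d : ℕ) (hd : 1 ≤ d)
    (f : MvPolynomial (Fin d) ℤ_[p])
    (μ : Measure (Fin d → ℤ_[p])) [μ.IsAddHaarMeasure] (hμ : μ Set.univ = 1)
    (s : ℂ) (hs : 0 < s.re) :
    Summable (fun m : ℕ =>
      ‖(igusaN p d f (m + 1) : ℂ) * (p : ℂ) ^ (-((m : ℂ) + 1) * ((d : ℂ) + s))‖) ∧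
    ∑' m : ℕ, (igusaN p d f (m + 1) : ℂ) * (p : ℂ) ^ (-((m : ℂ) + 1) * ((d : ℂ) + s))
      = (p : ℂ) ^ (-s) / (1 - (p : ℂ) ^ (-s))
          * (1 - ∫ z : Fin d → ℤ_[p], (‖MvPolynomial.eval z f‖ : ℂ) ^ s ∂μ) := by
  classical
  have hp1 : 1 < p := (Fact.out (p := p.Prime)).one_lt
  have hp0 : 0 < p := lt_trans one_pos hp1
  have hpR : (1 : ℝ) < (p : ℝ) := by exact_mod_cast hp1
  have hpC : (p : ℂ) ≠ 0 := Nat.cast_ne_zero.2 (by omega)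
  have hs0 : s ≠ 0 := fun h => by simp [h] at hs
  set r : ℂ := (p : ℂ) ^ (-s) with hrdef
  have hrnorm : ‖r‖ < 1 := by
    rw [hrdef, Complex.norm_natCast_cpow_of_pos hp0, Complex.neg_re]
    exact Real.rpow_lt_one_of_one_lt_of_neg hpR (by linarith)
  have h1r : (1 : ℂ) - r ≠ 0 := by
    refine sub_ne_zero.2 fun h => ?_
    rw [← h] at hrnorm
    simp at hrnorm
  set A : ℕ → Set (Fin d → ℤ_[p]) := pzt_levelA p f with hAdef
  have hAmeas : ∀ m, MeasurableSet (A m) := pzt_measurableSet_pzt_levelA f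
  have hAsub : ∀ m, A (m + 1) ⊆ A m := pzt_pzt_levelA_antitone f
  set a : ℕ → ℝ := fun m => (igusaN p d f m : ℝ) / ((p : ℝ) ^ m) ^ d with hadef
  have ha0 : a 0 = 1 := by simp [hadef, pzt_igusaN_zero]
  have ha_nonneg : ∀ m, 0 ≤ a m := fun m => by positivity
  have ha_le_one : ∀ m, a m ≤ 1 := by
    intro m
    rw [hadef, div_le_one (by positivity)]
    exact_mod_cast (by exact_mod_cast pzt_igusaN_le f m : (igusaN p d f m : ℝ) ≤ ((p ^ m) ^ d : ℕ))
  have hA_toReal : ∀ m, (μ (A m)).toReal = a m := by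
    intro m
    rw [hAdef, pzt_measure_pzt_levelA d m f μ hμ, hadef]
    rw [ENNReal.toReal_mul, ENNReal.toReal_inv]
    simp [div_eq_mul_inv]
  have hAfin : ∀ m, μ (A m) ≠ ⊤ := by
    intro m
    exact (lt_of_le_of_lt ((measure_mono (Set.subset_univ _)).trans_eq hμ)
      ENNReal.one_lt_top).ne
  have hdiff : ∀ m, (μ (A m \ A (m + 1))).toReal = a m - a (m + 1) := by
    intro m
    rw [measure_diff (hAsub m) ((hAmeas (m + 1)).nullMeasurableSet) (hAfin (m + 1)),
      ENNReal.toReal_sub_of_le (measure_mono (hAsub m)) (hAfin m), hA_toReal, hA_toReal]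
  -- pointwise decomposition
  have hpt : ∀ z : Fin d → ℤ_[p], (‖MvPolynomial.eval z f‖ : ℂ) ^ s
      = ∑' m : ℕ, Set.indicator (A m \ A (m + 1)) (fun _ => r ^ m) z := by
    intro z
    by_cases hx : MvPolynomial.eval z f = 0
    · have hz : ∀ m : ℕ, Set.indicator (A m \ A (m + 1)) (fun _ => r ^ m) z = 0 := by
        intro m
        refine Set.indicator_of_notMem (fun hc => hc.2 ?_) _
        show z ∈ A (m + 1)
        rw [hAdef]
        show ‖MvPolynomial.eval z f‖ ≤ _
        rw [hx, norm_zero]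
        positivity
      simp only [hz, tsum_zero, hx, norm_zero, Complex.ofReal_zero]
      exact Complex.zero_cpow hs0
    · set v := (MvPolynomial.eval z f).valuation with hvdef
      have hvv : (v : ℤ) = (MvPolynomial.eval z f).valuation := rfl
      have hmem : ∀ m : ℕ, z ∈ A m ↔ m ≤ v := by
        intro m
        rw [hAdef]
        show ‖MvPolynomial.eval z f‖ ≤ (p : ℝ) ^ (-(m : ℤ)) ↔ _
        rw [PadicInt.norm_le_pow_iff_le_valuation _ hx]
      have hzero : ∀ m : ℕ, m ≠ v →
          Set.indicator (A m \ A (m + 1)) (fun _ => r ^ m) z = 0 := by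
        intro m hm
        rcases lt_or_gt_of_ne hm with h | h
        · exact Set.indicator_of_notMem
            (fun hc => hc.2 ((hmem (m + 1)).2 (by omega))) _
        · exact Set.indicator_of_notMem
            (fun hc => (by omega : ¬ m ≤ v) ((hmem m).1 hc.1)) _
      have hmemv : z ∈ A v \ A (v + 1) :=
        (Set.mem_diff z).2 ⟨(hmem v).2 le_rfl,
          fun h => by have := (hmem (v + 1)).1 h; omega⟩
      rw [tsum_eq_single v hzero, Set.indicator_of_mem hmemv]
      rw [PadicInt.norm_eq_zpow_neg_valuation hx]
      exact pzt_cpow_helper s v hp0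
  -- the integral
  have hmeas_ind : ∀ m : ℕ, AEStronglyMeasurable
      (fun z => Set.indicator (A m \ A (m + 1)) (fun _ => r ^ m) z) μ := fun m =>
    (stronglyMeasurable_const.indicator ((hAmeas m).diff (hAmeas (m + 1)))).aestronglyMeasurable
  have hlin : ∑' m : ℕ, ∫⁻ z, ‖Set.indicator (A m \ A (m + 1)) (fun _ => r ^ m) z‖₊ ∂μ ≠ ⊤ := by
    have hle : ∀ m : ℕ, ∫⁻ z, ‖Set.indicator (A m \ A (m + 1)) (fun _ => r ^ m) z‖₊ ∂μ
        ≤ (‖r‖₊ : ℝ≥0∞) ^ m := by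
      intro m
      have heq : (fun z => (‖Set.indicator (A m \ A (m + 1)) (fun _ => r ^ m) z‖₊ : ℝ≥0∞))
          = fun z => Set.indicator (A m \ A (m + 1)) (fun _ => (‖r ^ m‖₊ : ℝ≥0∞)) z := by
        funext z
        rw [nnnorm_indicator_eq_indicator_nnnorm]
        by_cases hz : z ∈ A m \ A (m + 1) <;> simp [hz]
      rw [lintegral_congr (fun z => congrFun heq z),
        lintegral_indicator ((hAmeas m).diff (hAmeas (m + 1))), setLIntegral_const]
      calc (‖r ^ m‖₊ : ℝ≥0∞) * μ (A m \ A (m + 1))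
          ≤ (‖r‖₊ : ℝ≥0∞) ^ m * 1 := by
            refine mul_le_mul ?_ ?_ (zero_le) (zero_le)
            · rw [← ENNReal.coe_pow]
              exact_mod_cast (nnnorm_pow r m).le
            · exact (measure_mono (Set.subset_univ _)).trans_eq hμ
        _ = (‖r‖₊ : ℝ≥0∞) ^ m := mul_one _
    refine ne_top_of_le_ne_top ?_ (ENNReal.tsum_le_tsum hle)
    rw [ENNReal.tsum_geometric]
    refine ENNReal.inv_ne_top.2 ?_
    have : (‖r‖₊ : ℝ≥0∞) < 1 := by
      rw [← ENNReal.coe_one, ENNReal.coe_lt_coe]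
      exact_mod_cast hrnorm
    simp only [ne_eq, tsub_eq_zero_iff_le, not_le]
    exact this
  have hint : ∫ z : Fin d → ℤ_[p], (‖MvPolynomial.eval z f‖ : ℂ) ^ s ∂μ
      = ∑' m : ℕ, ((a m - a (m + 1) : ℝ) : ℂ) * r ^ m := by
    rw [integral_congr_ae (Filter.Eventually.of_forall hpt), integral_tsum hmeas_ind hlin]
    refine tsum_congr fun m => ?_
    rw [integral_indicator_const _ ((hAmeas m).diff (hAmeas (m + 1))), measureReal_def, hdiff m]
    rw [Complex.real_smul]
  -- series manipulations
  have hgeom : Summable (fun m : ℕ => ‖r‖ ^ m) :=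
    summable_geometric_of_lt_one (norm_nonneg r) hrnorm
  have hsum1 : Summable (fun m : ℕ => ((a m : ℝ) : ℂ) * r ^ m) := by
    refine Summable.of_norm (hgeom.of_nonneg_of_le (fun m => norm_nonneg _) fun m => ?_)
    rw [norm_mul, norm_pow, Complex.norm_real, Real.norm_eq_abs,
      abs_of_nonneg (ha_nonneg m)]
    exact mul_le_of_le_one_left (by positivity) (ha_le_one m)
  have hsum2 : Summable (fun m : ℕ => ((a (m + 1) : ℝ) : ℂ) * r ^ m) := by
    refine Summable.of_norm (hgeom.of_nonneg_of_le (fun m => norm_nonneg _) fun m => ?_)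
    rw [norm_mul, norm_pow, Complex.norm_real, Real.norm_eq_abs,
      abs_of_nonneg (ha_nonneg _)]
    exact mul_le_of_le_one_left (by positivity) (ha_le_one _)
  set S : ℂ := ∑' m : ℕ, ((a (m + 1) : ℝ) : ℂ) * r ^ m with hSdef
  have hI : ∫ z : Fin d → ℤ_[p], (‖MvPolynomial.eval z f‖ : ℂ) ^ s ∂μ = 1 + r * S - S := by
    rw [hint]
    have : (fun m : ℕ => ((a m - a (m + 1) : ℝ) : ℂ) * r ^ m)
        = fun m : ℕ => ((a m : ℝ) : ℂ) * r ^ m - ((a (m + 1) : ℝ) : ℂ) * r ^ m := by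
      funext m
      push_cast
      ring
    rw [this, hsum1.tsum_sub hsum2, ← hSdef]
    congr 1
    rw [hsum1.tsum_eq_zero_add]
    have h2 : (fun m : ℕ => ((a (m + 1) : ℝ) : ℂ) * r ^ (m + 1))
        = fun m : ℕ => r * (((a (m + 1) : ℝ) : ℂ) * r ^ m) := by
      funext m
      rw [pow_succ]
      ring
    rw [ha0]
    simp only [Complex.ofReal_one, pow_zero, one_mul, h2]
    rw [tsum_mul_left, ← hSdef]
  -- identification of the terms of the LHS series
  have hterm : ∀ m : ℕ, (igusaN p d f (m + 1) : ℂ) * (p : ℂ) ^ (-((m : ℂ) + 1) * ((d : ℂ) + s))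
      = r * (((a (m + 1) : ℝ) : ℂ) * r ^ m) := by
    intro m
    have he : -((m : ℂ) + 1) * ((d : ℂ) + s)
        = (-(((m + 1) * d : ℕ) : ℂ)) + ((m + 1 : ℕ) : ℂ) * (-s) := by
      push_cast
      ring
    rw [he, Complex.cpow_add _ _ hpC, Complex.cpow_neg, Complex.cpow_natCast,
      Complex.cpow_nat_mul, ← hrdef]
    have hpow : ((p : ℂ) ^ ((m + 1) * d)) = ((p : ℂ) ^ (m + 1)) ^ d := by
      rw [← pow_mul]
    have hcast : ((a (m + 1) : ℝ) : ℂ)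
        = (igusaN p d f (m + 1) : ℂ) / ((p : ℂ) ^ (m + 1)) ^ d := by
      rw [hadef]
      push_cast
      ring
    rw [hcast, hpow, pow_succ r]
    have hne : ((p : ℂ) ^ (m + 1)) ^ d ≠ 0 := pow_ne_zero _ (pow_ne_zero _ hpC)
    field_simp
  constructor
  · refine (hgeom.mul_left ‖r‖).of_nonneg_of_le (fun m => norm_nonneg _) fun m => ?_
    rw [hterm m, norm_mul, norm_mul, norm_pow, Complex.norm_real, Real.norm_eq_abs,
      abs_of_nonneg (ha_nonneg _)]
    refine mul_le_mul_of_nonneg_left ?_ (norm_nonneg r)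
    exact mul_le_of_le_one_left (by positivity) (ha_le_one _)
  · calc ∑' m : ℕ, (igusaN p d f (m + 1) : ℂ) * (p : ℂ) ^ (-((m : ℂ) + 1) * ((d : ℂ) + s))
        = ∑' m : ℕ, r * (((a (m + 1) : ℝ) : ℂ) * r ^ m) := tsum_congr hterm
      _ = r * S := by rw [tsum_mul_left, ← hSdef]
      _ = r / (1 - r) * (1 - (1 + r * S - S)) := by
          field_simp
          ring
      _ = (p : ℂ) ^ (-s) / (1 - (p : ℂ) ^ (-s))
          * (1 - ∫ z : Fin d → ℤ_[p], (‖MvPolynomial.eval z f‖ : ℂ) ^ s ∂μ) := by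
          rw [← hI, hrdef]
end

section
/- Let p be a prime, d ≥ 1, and f ∈ ℤ_p[x_1,…,x_d], and suppose the reduction f̄ ∈ F_p[x_1,…,x_d] defines a smooth hypersurface. Then for every integer m ≥ 1 one has N_m(f) = N_1(f) · p^{(d−1)(m−1)}, where N_1(f) is the number of F_p-rational points of the hypersurface f̄ = 0 in F_p^d. -/
open MvPolynomial Finset


lemma taylor_eval {R : Type*} [CommRing R] {d : ℕ} (g : MvPolynomial (Fin d) R)
    (a b : Fin d → R) (hb : ∀ i j, b i * b j = 0) :
    eval (a + b) g = eval a g + ∑ i, eval a (pderiv i g) * b i := by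
  induction g using MvPolynomial.induction_on with
  | C c => simp
  | add q r hq hr =>
      simp only [map_add, hq, hr, add_mul, Finset.sum_add_distrib]
      ring
  | mul_X q i hq =>
      have hS : (∑ j, eval a (pderiv j q) * b j) * b i = 0 := by
        rw [Finset.sum_mul]
        apply Finset.sum_eq_zero
        intro j _
        rw [mul_assoc, hb, mul_zero]
      simp only [map_mul, eval_X, pderiv_mul, pderiv_X, map_add, add_mul, Finset.sum_add_distrib,
        hq, Pi.add_apply]
      have h3 : ∀ x, eval a q * eval a ((Pi.single x 1 : Fin d → MvPolynomial (Fin d) R) i) * b x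
          = if x = i then eval a q * b i else 0 := by
        intro x
        rcases eq_or_ne x i with h | h
        · subst h; simp
        · simp [Pi.single_apply, h]
      have h4 : ∑ x, eval a (pderiv x q) * a i * b x
          = (∑ x, eval a (pderiv x q) * b x) * a i := by
        rw [Finset.sum_mul]
        exact Finset.sum_congr rfl fun x _ => by ring
      rw [Finset.sum_congr rfl fun x _ => h3 x, Finset.sum_ite_eq' Finset.univ i, h4]
      simp only [Finset.mem_univ, if_true]
      linear_combination hS

lemma lin_count {F : Type*} [Field F] [Fintype F] [DecidableEq F] {d : ℕ}
    (g : Fin d → F) (c : F) (i0 : Fin d) (hg : g i0 ≠ 0) :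
    Nat.card {v : Fin d → F // c + ∑ i, g i * v i = 0} = Fintype.card F ^ (d - 1) := by
  classical
  have key : ∀ v : Fin d → F,
      ∑ i, g i * v i = g i0 * v i0 + ∑ j : {j : Fin d // j ≠ i0}, g j.1 * v j.1 := by
    intro v
    rw [← Finset.add_sum_erase Finset.univ (fun i => g i * v i) (Finset.mem_univ i0)]
    congr 1
    exact (Finset.sum_subtype (p := fun j => j ≠ i0) (Finset.univ.erase i0)
      (fun x => by simp [Finset.mem_erase]) (fun i => g i * v i))
  let ext : ({j : Fin d // j ≠ i0} → F) → (Fin d → F) := fun r i =>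
    if h : i = i0 then (g i0)⁻¹ * (-c - ∑ j : {j : Fin d // j ≠ i0}, g j.1 * r j) else r ⟨i, h⟩
  have hext_ne : ∀ r (j : {j : Fin d // j ≠ i0}), ext r j.1 = r j := fun r j => dif_neg j.2
  have hext_i0 : ∀ r, ext r i0 = (g i0)⁻¹ * (-c - ∑ j : {j : Fin d // j ≠ i0}, g j.1 * r j) :=
    fun r => dif_pos rfl
  have e : {v : Fin d → F // c + ∑ i, g i * v i = 0} ≃ ({j : Fin d // j ≠ i0} → F) :=
  { toFun := fun v j => v.1 j.1
    invFun := fun r => ⟨ext r, by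
      rw [key, hext_i0, ← mul_assoc, mul_inv_cancel₀ hg, one_mul]
      have : ∑ j : {j : Fin d // j ≠ i0}, g j.1 * ext r j.1
          = ∑ j : {j : Fin d // j ≠ i0}, g j.1 * r j :=
        Finset.sum_congr rfl fun j _ => by rw [hext_ne]
      rw [this]; ring⟩
    left_inv := by
      rintro ⟨v, hv⟩
      apply Subtype.ext
      funext i
      show ext (fun j => v j.1) i = v i
      rcases eq_or_ne i i0 with h | h
      · subst h
        rw [hext_i0]
        rw [key] at hv
        field_simp
        linear_combination -hv
      · exact dif_neg h
    right_inv := fun r => funext fun j => hext_ne r j }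
  rw [Nat.card_congr e, Nat.card_eq_fintype_card, Fintype.card_fun]
  congr 1
  rw [Fintype.card_subtype_compl, Fintype.card_subtype_eq, Fintype.card_fin]

section Mu
variable {p : ℕ} [Fact p.Prime] {m : ℕ}

/-- the additive embedding `ZMod p → ZMod (p^(m+1))`, `c ↦ p^m * c.val`. -/
noncomputable def mu (p m : ℕ) (c : ZMod p) : ZMod (p ^ (m + 1)) :=
  (p : ZMod (p ^ (m + 1))) ^ m * ((c.val : ℕ) : ZMod (p ^ (m + 1)))

lemma mu_L1 (x : ZMod (p ^ (m + 1))) :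
    (p : ZMod (p ^ (m + 1))) ^ m * x
      = mu p m (ZMod.castHom (dvd_pow_self p (Nat.succ_ne_zero m)) (ZMod p) x) := by
  haveI : NeZero (p ^ (m + 1)) := ⟨pow_ne_zero _ (Fact.out : p.Prime).ne_zero⟩
  haveI : NeZero p := ⟨(Fact.out : p.Prime).ne_zero⟩
  have h1 : ZMod.castHom (dvd_pow_self p (Nat.succ_ne_zero m)) (ZMod p) x
      = ((x.val : ℕ) : ZMod p) := by
    conv_lhs => rw [← ZMod.natCast_zmod_val x]
    rw [map_natCast]
  have hz : (p : ZMod (p ^ (m + 1))) ^ (m + 1) = 0 := by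
    rw [← Nat.cast_pow, ZMod.natCast_self]
  rw [h1]
  show _ = (p : ZMod (p ^ (m + 1))) ^ m * ((((x.val : ZMod p)).val : ℕ) : ZMod (p ^ (m + 1)))
  rw [ZMod.val_natCast]
  conv_lhs => rw [← ZMod.natCast_zmod_val x]
  calc (p : ZMod (p ^ (m+1))) ^ m * ((x.val : ℕ) : ZMod (p ^ (m+1)))
      = (p : ZMod (p ^ (m+1))) ^ m * ((p * (x.val / p) + x.val % p : ℕ) : ZMod (p ^ (m+1))) := by
        rw [Nat.div_add_mod]
    _ = (p : ZMod (p ^ (m+1))) ^ (m+1) * ((x.val / p : ℕ) : ZMod (p ^ (m+1)))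
        + (p : ZMod (p ^ (m+1))) ^ m * ((x.val % p : ℕ) : ZMod (p ^ (m+1))) := by
        push_cast; ring
    _ = (p : ZMod (p ^ (m+1))) ^ m * ((x.val % p : ℕ) : ZMod (p ^ (m+1))) := by
        rw [hz]; ring

lemma mu_inj (hm : 1 ≤ m) : Function.Injective (mu p m) := by
  haveI : NeZero (p ^ (m + 1)) := ⟨pow_ne_zero _ (Fact.out : p.Prime).ne_zero⟩
  haveI : NeZero p := ⟨(Fact.out : p.Prime).ne_zero⟩
  have hp : 0 < p := (Fact.out : p.Prime).pos
  intro a b hab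
  unfold mu at hab
  rw [← Nat.cast_pow, ← Nat.cast_mul, ← Nat.cast_mul, ZMod.natCast_eq_natCast_iff] at hab
  have h2 : p ^ (m + 1) = p ^ m * p := by ring
  rw [h2] at hab
  have hmod : a.val ≡ b.val [MOD p] :=
    Nat.ModEq.mul_left_cancel' (pow_ne_zero m hp.ne') hab
  have ha := ZMod.val_lt a
  have hb := ZMod.val_lt b
  have hval : a.val = b.val := by
    unfold Nat.ModEq at hmod
    rwa [Nat.mod_eq_of_lt ha, Nat.mod_eq_of_lt hb] at hmod
  exact ZMod.val_injective _ hval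

lemma mu_add (hm : 1 ≤ m) (a b : ZMod p) : mu p m (a + b) = mu p m a + mu p m b := by
  haveI : NeZero p := ⟨(Fact.out : p.Prime).ne_zero⟩
  have h1 : mu p m a + mu p m b
      = (p : ZMod (p ^ (m+1))) ^ m * (((a.val + b.val : ℕ) : ZMod (p ^ (m+1)))) := by
    unfold mu; push_cast; ring
  rw [h1, mu_L1, map_natCast]
  push_cast [ZMod.natCast_zmod_val]
  rfl

/-- as an AddMonoidHom. -/
noncomputable def muHom (p : ℕ) [Fact p.Prime] (m : ℕ) (hm : 1 ≤ m) :
    ZMod p →+ ZMod (p ^ (m + 1)) :=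
  AddMonoidHom.mk' (mu p m) (mu_add hm)

lemma mu_surj_ker (hm : 1 ≤ m) (x : ZMod (p ^ (m + 1)))
    (hx : ZMod.castHom (pow_dvd_pow p (Nat.le_succ m)) (ZMod (p ^ m)) x = 0) :
    ∃ c : ZMod p, x = mu p m c := by
  haveI : NeZero (p ^ (m + 1)) := ⟨pow_ne_zero _ (Fact.out : p.Prime).ne_zero⟩
  haveI : NeZero (p ^ m) := ⟨pow_ne_zero _ (Fact.out : p.Prime).ne_zero⟩
  have h1 : ZMod.castHom (pow_dvd_pow p (Nat.le_succ m)) (ZMod (p ^ m)) x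
      = ((x.val : ℕ) : ZMod (p ^ m)) := by
    conv_lhs => rw [← ZMod.natCast_zmod_val x]
    rw [map_natCast]
  rw [h1, ZMod.natCast_eq_zero_iff] at hx
  obtain ⟨k, hk⟩ := hx
  refine ⟨ZMod.castHom (dvd_pow_self p (Nat.succ_ne_zero m)) (ZMod p) ((k : ℕ) : ZMod (p^(m+1))),
    ?_⟩
  rw [← mu_L1]
  conv_lhs => rw [← ZMod.natCast_zmod_val x]
  rw [hk]
  push_cast
  ring

end Mu

variable {p : ℕ} [Fact p.Prime]

lemma bridge (k : ℕ) (hk : k ≠ 0) :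
    (ZMod.castHom (dvd_pow_self p hk) (ZMod p)).comp (PadicInt.toZModPow k)
      = (PadicInt.toZMod : ℤ_[p] →+* ZMod p) := by
  apply ZMod.ringHom_eq_of_ker_eq
  rw [PadicInt.ker_toZMod, PadicInt.maximalIdeal_eq_span_p]
  ext x
  haveI : NeZero (p ^ k) := ⟨pow_ne_zero _ (Fact.out : p.Prime).ne_zero⟩
  haveI : NeZero p := ⟨(Fact.out : p.Prime).ne_zero⟩
  simp only [RingHom.mem_ker, RingHom.comp_apply]
  rw [← ZMod.natCast_zmod_val (PadicInt.toZModPow k x), map_natCast,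
    ZMod.natCast_eq_zero_iff, Ideal.mem_span_singleton]
  constructor
  · intro h
    have h1 : (p : ℤ_[p]) ^ k ∣ x - ((PadicInt.toZModPow k x).val : ℤ_[p]) := by
      rw [← Ideal.mem_span_singleton, ← PadicInt.ker_toZModPow, RingHom.mem_ker, map_sub,
        map_natCast, ZMod.natCast_zmod_val, sub_self]
    obtain ⟨c, hc⟩ := h1
    obtain ⟨t, ht⟩ := h
    refine ⟨(p : ℤ_[p]) ^ (k - 1) * c + t, ?_⟩
    have hx : x = (p : ℤ_[p]) ^ k * c + ((PadicInt.toZModPow k x).val : ℤ_[p]) := by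
      linear_combination hc
    rw [hx, ht]
    push_cast
    have hpk : (p : ℤ_[p]) ^ k = p * p ^ (k - 1) := by
      conv_lhs => rw [← Nat.succ_pred_eq_of_pos (Nat.pos_of_ne_zero hk)]
      exact pow_succ' _ _
    rw [hpk]
    ring
  · intro h
    obtain ⟨t, ht⟩ := h
    have h1 : (PadicInt.toZModPow k x) = p * PadicInt.toZModPow k t := by
      rw [ht, map_mul, map_natCast]
    rw [h1, ZMod.val_mul, Nat.dvd_mod_iff (dvd_pow_self p hk)]
    exact Dvd.dvd.mul_right
      (by rw [ZMod.val_natCast]; exact (Nat.dvd_mod_iff (dvd_pow_self p hk)).mpr dvd_rfl) _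

lemma eval_cast_compat {d : ℕ} (f : MvPolynomial (Fin d) ℤ_[p]) {k l : ℕ} (h : k ≤ l)
    (w : Fin d → ZMod (p ^ l)) :
    ZMod.castHom (pow_dvd_pow p h) (ZMod (p ^ k))
        (eval w (MvPolynomial.map (PadicInt.toZModPow l) f))
      = eval (fun i => ZMod.castHom (pow_dvd_pow p h) (ZMod (p ^ k)) (w i))
          (MvPolynomial.map (PadicInt.toZModPow k) f) := by
  rw [eval_map, eval_map, eval₂_comp_left (ZMod.castHom (pow_dvd_pow p h) (ZMod (p ^ k)))
    (PadicInt.toZModPow l) w f, PadicInt.zmod_cast_comp_toZModPow _ _ h]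
  rfl

lemma eval_cast_compat_p {d : ℕ} (f : MvPolynomial (Fin d) ℤ_[p]) {l : ℕ} (hl : l ≠ 0)
    (w : Fin d → ZMod (p ^ l)) :
    ZMod.castHom (dvd_pow_self p hl) (ZMod p)
        (eval w (MvPolynomial.map (PadicInt.toZModPow l) f))
      = eval (fun i => ZMod.castHom (dvd_pow_self p hl) (ZMod p) (w i))
          (MvPolynomial.map (PadicInt.toZMod) f) := by
  rw [eval_map, eval_map, eval₂_comp_left (ZMod.castHom (dvd_pow_self p hl) (ZMod p))
    (PadicInt.toZModPow l) w f, bridge l hl]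
  rfl

/-- The reduction `f̄ ∈ F_p[x_1,…,x_d]` of `f` modulo `p` defines a smooth
hypersurface: `f̄ ≠ 0` and at every `F_p`-point of `f̄ = 0` some partial
derivative of `f̄` does not vanish. -/
def SmoothModP (p : ℕ) [Fact p.Prime] (d : ℕ) (f : MvPolynomial (Fin d) ℤ_[p]) : Prop :=
  MvPolynomial.map (PadicInt.toZMod) f ≠ 0 ∧
    ∀ a : Fin d → ZMod p,
      MvPolynomial.eval a (MvPolynomial.map (PadicInt.toZMod) f) = 0 →
        ∃ i : Fin d,
          MvPolynomial.eval a (MvPolynomial.pderiv i (MvPolynomial.map (PadicInt.toZMod) f)) ≠ 0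

lemma igusa_step (p : ℕ) [Fact p.Prime] (d : ℕ) (f : MvPolynomial (Fin d) ℤ_[p])
    (hf : SmoothModP p d f) (m : ℕ) (hm : 1 ≤ m) :
    igusaN p d f (m + 1) = igusaN p d f m * p ^ (d - 1) := by
  classical
  haveI : NeZero p := ⟨(Fact.out : p.Prime).ne_zero⟩
  haveI : NeZero (p ^ m) := ⟨pow_ne_zero _ (Fact.out : p.Prime).ne_zero⟩
  haveI : NeZero (p ^ (m + 1)) := ⟨pow_ne_zero _ (Fact.out : p.Prime).ne_zero⟩
  set F := MvPolynomial.map (PadicInt.toZModPow (p := p) (m + 1)) f with hF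
  set G := MvPolynomial.map (PadicInt.toZModPow (p := p) m) f with hG
  set π := ZMod.castHom (pow_dvd_pow p (Nat.le_succ m)) (ZMod (p ^ m)) with hπ
  set ρ := ZMod.castHom (dvd_pow_self p (Nat.succ_ne_zero m)) (ZMod p) with hρ
  -- the reduction map on solutions
  have hΦmem : ∀ w : {w : Fin d → ZMod (p ^ (m + 1)) // eval w F = 0},
      eval (fun i => π (w.1 i)) G = 0 := by
    intro w
    rw [← eval_cast_compat f (Nat.le_succ m) w.1, w.2, map_zero]
  set Φ : {w : Fin d → ZMod (p ^ (m + 1)) // eval w F = 0}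
      → {u : Fin d → ZMod (p ^ m) // eval u G = 0} :=
    fun w => ⟨fun i => π (w.1 i), hΦmem w⟩ with hΦ
  -- basic facts about mu
  have hπmu : ∀ x : ZMod p, π (mu p m x) = 0 := by
    intro x
    show π ((p : ZMod (p ^ (m + 1))) ^ m * _) = 0
    rw [map_mul, map_pow, map_natCast, ← Nat.cast_pow, ZMod.natCast_self, zero_mul]
  have hρmu : ∀ x : ZMod p, ρ (mu p m x) = 0 := by
    intro x
    show ρ ((p : ZMod (p ^ (m + 1))) ^ m * _) = 0
    rw [map_mul, map_pow, map_natCast, ZMod.natCast_self, zero_pow (by omega), zero_mul]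
  have hmu0 : mu p m 0 = 0 := by
    show (p : ZMod (p ^ (m + 1))) ^ m * _ = 0
    simp
  -- fiber cardinality
  have hfiber : ∀ u : {u : Fin d → ZMod (p ^ m) // eval u G = 0},
      Nat.card {w : {w : Fin d → ZMod (p ^ (m + 1)) // eval w F = 0} // Φ w = u}
        = p ^ (d - 1) := by
    intro u
    set w0 : Fin d → ZMod (p ^ (m + 1)) := fun i => (((u.1 i).val : ℕ) : ZMod (p ^ (m + 1)))
      with hw0def
    have hπw0 : ∀ i, π (w0 i) = u.1 i := by
      intro i
      rw [hw0def]
      simp only [map_natCast, ZMod.natCast_zmod_val]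
    have hevalw0 : π (eval w0 F) = 0 := by
      rw [hF, hπ, eval_cast_compat f (Nat.le_succ m) w0]
      have h1 : (fun i => ZMod.castHom (pow_dvd_pow p (Nat.le_succ m)) (ZMod (p ^ m)) (w0 i))
          = u.1 := funext fun i => hπw0 i
      rw [h1, ← hG]
      exact u.2
    obtain ⟨c, hc⟩ := mu_surj_ker hm _ hevalw0
    set g : Fin d → ZMod p := fun i => ρ (eval w0 (pderiv i F)) with hgdef
    set abar : Fin d → ZMod p := fun i => ρ (w0 i) with habar
    have habar0 : eval abar (MvPolynomial.map (PadicInt.toZMod) f) = 0 := by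
      have h2 := eval_cast_compat_p f (Nat.succ_ne_zero m) w0
      rw [← hF, ← hρ] at h2
      rw [habar, ← h2, hc, hρmu]
    have hgeval : ∀ i, g i
        = eval abar (pderiv i (MvPolynomial.map (PadicInt.toZMod) f)) := by
      intro i
      rw [hgdef]
      show ρ (eval w0 (pderiv i F)) = _
      rw [hF, pderiv_map, hρ, eval_cast_compat_p (pderiv i f) (Nat.succ_ne_zero m) w0,
        ← pderiv_map, ← habar]
    obtain ⟨i0, hi0⟩ := hf.2 abar habar0
    have hgi0 : g i0 ≠ 0 := by rw [hgeval i0]; exact hi0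
    -- key evaluation formula
    have keyv : ∀ v : Fin d → ZMod p,
        eval (w0 + fun i => mu p m (v i)) F = mu p m (c + ∑ i, g i * v i) := by
      intro v
      have hpp : (p : ZMod (p ^ (m + 1))) ^ m * (p : ZMod (p ^ (m + 1))) ^ m = 0 := by
        rw [← pow_add, ← Nat.cast_pow, ZMod.natCast_eq_zero_iff]
        exact pow_dvd_pow p (by omega)
      have hb : ∀ i j, mu p m (v i) * mu p m (v j) = 0 := by
        intro i j
        show ((p : ZMod (p ^ (m + 1))) ^ m * _) * ((p : ZMod (p ^ (m + 1))) ^ m * _) = 0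
        calc ((p : ZMod (p ^ (m+1))) ^ m * (((v i).val : ℕ) : ZMod (p ^ (m+1))))
              * ((p : ZMod (p ^ (m+1))) ^ m * (((v j).val : ℕ) : ZMod (p ^ (m+1))))
            = ((p : ZMod (p ^ (m+1))) ^ m * (p : ZMod (p ^ (m+1))) ^ m)
              * ((((v i).val : ℕ) : ZMod (p ^ (m+1))) * (((v j).val : ℕ) : ZMod (p ^ (m+1)))) := by
              ring
          _ = 0 := by rw [hpp, zero_mul]
      rw [taylor_eval F w0 (fun i => mu p m (v i)) hb, hc]
      have hterm : ∀ i, eval w0 (pderiv i F) * mu p m (v i) = mu p m (g i * v i) := by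
        intro i
        have h1 : mu p m (v i) = (p : ZMod (p ^ (m+1))) ^ m * (((v i).val : ℕ) : ZMod (p ^ (m+1))) := rfl
        have h2 : eval w0 (pderiv i F) * ((p : ZMod (p ^ (m+1))) ^ m * (((v i).val : ℕ) : ZMod (p ^ (m+1))))
            = (p : ZMod (p ^ (m+1))) ^ m * (eval w0 (pderiv i F) * (((v i).val : ℕ) : ZMod (p ^ (m+1)))) := by
          ring
        rw [h1, h2, mu_L1, ← hρ, map_mul, map_natCast, ZMod.natCast_zmod_val]
      rw [Finset.sum_congr rfl fun i _ => hterm i]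
      have h3 : mu p m c + ∑ i, mu p m (g i * v i)
          = muHom p m hm c + ∑ i, muHom p m hm (g i * v i) := rfl
      rw [h3, ← map_sum, ← map_add]
      rfl
    -- the equivalence with the linear solution set
    have hEfun : ∀ v : {v : Fin d → ZMod p // c + ∑ i, g i * v i = 0},
        eval (w0 + fun i => mu p m (v.1 i)) F = 0 := by
      intro v
      rw [keyv v.1, v.2, hmu0]
    set Efun : {v : Fin d → ZMod p // c + ∑ i, g i * v i = 0}
        → {w : {w : Fin d → ZMod (p ^ (m + 1)) // eval w F = 0} // Φ w = u} :=
      fun v => ⟨⟨w0 + fun i => mu p m (v.1 i), hEfun v⟩, by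
        apply Subtype.ext
        funext i
        show π (w0 i + mu p m (v.1 i)) = u.1 i
        rw [map_add, hπmu, add_zero, hπw0]⟩ with hEfundef
    have hbij : Function.Bijective Efun := by
      constructor
      · intro v v' hvv
        have h1 : w0 + (fun i => mu p m (v.1 i)) = w0 + fun i => mu p m (v'.1 i) := by
          have := congrArg (fun z => z.1.1) hvv
          exact this
        apply Subtype.ext
        funext i
        apply mu_inj hm
        have h2 := congrFun h1 i
        simp only [Pi.add_apply] at h2
        exact add_left_cancel h2
      · rintro ⟨⟨w, hw⟩, hΦw⟩
        have hπw : ∀ i, π (w i - w0 i) = 0 := by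
          intro i
          have h1 : π (w i) = u.1 i := by
            have := congrArg (fun z => z.1 i) hΦw
            exact this
          rw [map_sub, h1, hπw0, sub_self]
        choose v hv using fun i => mu_surj_ker hm _ (hπw i)
        have hw_eq : w = w0 + fun i => mu p m (v i) := by
          funext i
          simp only [Pi.add_apply]
          rw [← hv i]
          ring
        have hlin : c + ∑ i, g i * v i = 0 := by
          apply mu_inj hm
          rw [hmu0, ← keyv v, ← hw_eq]
          exact hw
        refine ⟨⟨v, hlin⟩, ?_⟩
        apply Subtype.ext
        apply Subtype.ext
        exact hw_eq.symm
    rw [Nat.card_congr (Equiv.ofBijective Efun hbij).symm, lin_count g c i0 hgi0, ZMod.card]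
  -- put it together
  rw [igusaN, igusaN]
  rw [Nat.card_congr (Equiv.sigmaFiberEquiv Φ).symm]
  rw [Nat.card_eq_fintype_card, Fintype.card_sigma]
  rw [Finset.sum_congr rfl fun (u : {u : Fin d → ZMod (p ^ m) // eval u G = 0}) _ =>
    ((Nat.card_eq_fintype_card).symm.trans (hfiber u))]
  rw [Finset.sum_const, smul_eq_mul, Finset.card_univ, ← Nat.card_eq_fintype_card]

/-- If the reduction of `f` mod `p` defines a smooth
hypersurface, then `N_m(f) = N_1(f) · p^{(d-1)(m-1)}` for every `m ≥ 1`. -/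
theorem count_solutions_smooth (p : ℕ) [Fact p.Prime] (d : ℕ) (hd : 1 ≤ d)
    (f : MvPolynomial (Fin d) ℤ_[p]) (hf : SmoothModP p d f)
    (m : ℕ) (hm : 1 ≤ m) :
    igusaN p d f m = igusaN p d f 1 * p ^ ((d - 1) * (m - 1)) := by
  induction m, hm using Nat.le_induction with
  | base => simp
  | succ k hk ih =>
      rw [igusa_step p d f hf k hk, ih, mul_assoc, ← pow_add]
      congr 2
      have h1 : k + 1 - 1 = (k - 1) + 1 := by omega
      rw [h1, Nat.mul_succ]
end

section
/- (Closed formula for the Igusa zeta function in the smooth case.) Let p be a prime, d ≥ 1, and f ∈ ℤ_p[x_1,…,x_d], and suppose the reduction f̄ ∈ F_p[x_1,…,x_d] defines a smooth hypersurface. Then for every s ∈ ℂ with Re(s) > 0, ∫_{ℤ_p^d} |f(z)|_p^s dμ(z) = p^{−d} N_1(f) (p−1) · p^{−1−s}/(1 − p^{−1−s}) + 1 − p^{−d} N_1(f), where N_1(f) is the number of a ∈ F_p^d with f̄(a) = 0. -/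
open MeasureTheory
open scoped ENNReal

set_option linter.unusedSectionVars false
set_option maxHeartbeats 1000000
open MvPolynomial

section IgusaAux

lemma mv_taylor {R : Type*} [CommRing R] {d : ℕ} (f : MvPolynomial (Fin d) R) (z h : Fin d → R) :
    eval (z + h) f - eval z f - ∑ j, h j * eval z (pderiv j f)
      ∈ (Ideal.span (Set.range h)) ^ 2 := by
  classical
  set I := Ideal.span (Set.range h) with hI
  have hhj : ∀ j, h j ∈ I := fun j => Ideal.subset_span ⟨j, rfl⟩
  have hI2 : ∀ x y, x ∈ I → y ∈ I → x * y ∈ I ^ 2 := fun x y hx hy => by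
    rw [sq]; exact Ideal.mul_mem_mul hx hy
  induction f using MvPolynomial.induction_on with
  | C a => simp
  | add f g hf hg =>
      have hsplit : ∑ j, h j * eval z (pderiv j (f + g))
          = (∑ j, h j * eval z (pderiv j f)) + ∑ j, h j * eval z (pderiv j g) := by
        rw [← Finset.sum_add_distrib]
        exact Finset.sum_congr rfl fun j _ => by rw [map_add, map_add, mul_add]
      have heq : eval (z + h) (f + g) - eval z (f + g) - ∑ j, h j * eval z (pderiv j (f + g))
          = (eval (z + h) f - eval z f - ∑ j, h j * eval z (pderiv j f))
            + (eval (z + h) g - eval z g - ∑ j, h j * eval z (pderiv j g)) := by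
        rw [hsplit, map_add, map_add]; ring
      rw [heq]; exact Ideal.add_mem _ hf hg
  | mul_X f i hf =>
      have hS : (∑ j, h j * eval z (pderiv j f)) ∈ I :=
        Ideal.sum_mem _ fun j _ => Ideal.mul_mem_right _ _ (hhj j)
      have key : eval (z + h) (f * X i) - eval z (f * X i)
            - ∑ j, h j * eval z (pderiv j (f * X i))
          = (eval (z + h) f - eval z f - ∑ j, h j * eval z (pderiv j f)) * z i
            + ((eval (z + h) f - eval z f - ∑ j, h j * eval z (pderiv j f))
                + ∑ j, h j * eval z (pderiv j f)) * h i := by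
        have hp : ∀ j, eval z (pderiv j (f * X i))
            = eval z (pderiv j f) * z i + (if j = i then eval z f else 0) := by
          intro j
          by_cases hji : j = i
          · subst hji
            rw [pderiv_mul, pderiv_X_self, map_add, map_mul, map_mul, eval_X]
            simp
          · rw [pderiv_mul, pderiv_X_of_ne (Ne.symm hji), map_add, map_mul, map_mul, eval_X]
            simp [hji]
        simp only [hp, mul_add, Finset.sum_add_distrib, mul_ite, mul_zero,
          Finset.sum_ite_eq' Finset.univ i (fun j => h j * eval z f), Finset.mem_univ, if_true,
          map_mul, eval_X, Pi.add_apply, Finset.mul_sum]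
        ring_nf
        rw [Finset.mul_sum]
        ring_nf
      rw [key]
      exact Ideal.add_mem _ (Ideal.mul_mem_right _ _ hf)
        (hI2 _ _ (Ideal.add_mem _ ((Ideal.pow_le_self two_ne_zero) hf) hS) (hhj i))

-- counting the solutions of an affine equation over a finite field
lemma card_affine {F : Type*} [Field F] [Fintype F] [DecidableEq F] {d : ℕ} (u : F)
    (b : Fin d → F) (i : Fin d) (hb : b i ≠ 0) :
    Fintype.card {t : Fin d → F // u + ∑ j, t j * b j = 0} = Fintype.card F ^ (d - 1) := by
  classical
  have hsplit : ∀ t : Fin d → F,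
      ∑ j, t j * b j = t i * b i + ∑ j' : {j : Fin d // j ≠ i}, t j'.1 * b j'.1 := by
    intro t
    rw [← Finset.sum_erase_add _ _ (Finset.mem_univ i), add_comm]
    congr 1
    rw [Finset.sum_subtype (p := fun j => j ≠ i) (Finset.univ.erase i)
      (fun x => by simp) (fun x => t x * b x)]
  let e : {t : Fin d → F // u + ∑ j, t j * b j = 0} ≃ ({j : Fin d // j ≠ i} → F) :=
    { toFun := fun t j => t.1 j.1
      invFun := fun w =>
        ⟨fun j => if h : j = i then (-u - ∑ j' : {j : Fin d // j ≠ i}, w j' * b j'.1) * (b i)⁻¹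
          else w ⟨j, h⟩, by
          rw [hsplit]
          rw [dif_pos rfl]
          have : ∀ j' : {j : Fin d // j ≠ i},
              (if h : j'.1 = i then (-u - ∑ j' : {j : Fin d // j ≠ i}, w j' * b j'.1) * (b i)⁻¹
                else w ⟨j'.1, h⟩) * b j'.1 = w j' * b j'.1 := fun j' => by
            rw [dif_neg j'.2]
          rw [Finset.sum_congr rfl fun j' _ => this j']
          field_simp
          ring⟩
      left_inv := fun t => Subtype.ext (funext fun j => by
        by_cases h : j = i
        · subst h
          dsimp only; rw [dif_pos rfl]
          have h2 := t.2
          rw [hsplit] at h2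
          field_simp
          linear_combination -h2
        · simp [dif_neg h])
      right_inv := fun w => funext fun j' => by
        simp [dif_neg j'.2] }
  rw [Fintype.card_congr e, Fintype.card_fun]
  congr 1
  rw [Fintype.card_subtype_compl, Fintype.card_subtype_eq, Fintype.card_fin]


variable {p : ℕ} [Fact p.Prime] {d : ℕ}

lemma red_eval (z : Fin d → ℤ_[p]) (g : MvPolynomial (Fin d) ℤ_[p]) :
    PadicInt.toZMod (eval z g)
      = eval (fun j => PadicInt.toZMod (z j)) (map PadicInt.toZMod g) := by
  rw [MvPolynomial.eval_map]
  have h := MvPolynomial.eval₂_comp_left (PadicInt.toZMod) (RingHom.id ℤ_[p]) z g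
  rw [RingHom.comp_id] at h
  rw [← MvPolynomial.eval₂_id, h]
  rfl

lemma toZModPow_eq_iff_dvd (k : ℕ) (x y : ℤ_[p]) :
    PadicInt.toZModPow k x = PadicInt.toZModPow k y ↔ (p : ℤ_[p]) ^ k ∣ x - y := by
  rw [← sub_eq_zero, ← map_sub, ← RingHom.mem_ker, PadicInt.ker_toZModPow,
    Ideal.mem_span_singleton]

lemma toZMod_eq_iff_dvd (x y : ℤ_[p]) :
    PadicInt.toZMod x = PadicInt.toZMod y ↔ (p : ℤ_[p]) ∣ x - y := by
  rw [← sub_eq_zero, ← map_sub, ← RingHom.mem_ker, PadicInt.ker_toZMod,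
    PadicInt.maximalIdeal_eq_span_p, Ideal.mem_span_singleton]

lemma norm_le_iff_dvd (x : ℤ_[p]) (k : ℕ) :
    ‖x‖ ≤ (p:ℝ) ^ (-(k:ℤ)) ↔ (p : ℤ_[p]) ^ k ∣ x := by
  rw [PadicInt.norm_le_pow_iff_mem_span_pow, Ideal.mem_span_singleton]

lemma toZModPow_surj (k : ℕ) : Function.Surjective (PadicInt.toZModPow (p := p) k) :=
  fun y => ⟨(y.val : ℤ_[p]), by rw [map_natCast]; exact ZMod.natCast_rightInverse y⟩

lemma toZMod_surj : Function.Surjective (PadicInt.toZMod : ℤ_[p] → ZMod p) :=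
  fun y => ⟨(y.val : ℤ_[p]), by rw [map_natCast]; exact ZMod.natCast_rightInverse y⟩

lemma toZMod_natCast_val (t : ZMod p) : PadicInt.toZMod ((t.val : ℤ_[p])) = t := by
  rw [map_natCast]; exact ZMod.natCast_rightInverse t

lemma toZModPow_eq_iff_norm (k : ℕ) (x y : ℤ_[p]) :
    PadicInt.toZModPow k x = PadicInt.toZModPow k y ↔ ‖x - y‖ ≤ (p:ℝ) ^ (-(k:ℤ)) := by
  rw [toZModPow_eq_iff_dvd, norm_le_iff_dvd]

lemma toZMod_eq_iff_norm (x y : ℤ_[p]) :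
    PadicInt.toZMod x = PadicInt.toZMod y ↔ ‖x - y‖ ≤ (p:ℝ) ^ (-(1:ℕ):ℤ) := by
  rw [toZMod_eq_iff_dvd, norm_le_iff_dvd, pow_one]

lemma taylor_dvd (f : MvPolynomial (Fin d) ℤ_[p]) (z h : Fin d → ℤ_[p]) (k : ℕ)
    (hh : ∀ j, (p : ℤ_[p]) ^ k ∣ h j) :
    ∃ r : ℤ_[p], (p : ℤ_[p]) ^ (2 * k) ∣ r ∧
      eval (z + h) f = eval z f + (∑ j, h j * eval z (pderiv j f)) + r := by
  refine ⟨eval (z + h) f - eval z f - ∑ j, h j * eval z (pderiv j f), ?_, by ring⟩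
  have h1 : Ideal.span (Set.range h) ≤ Ideal.span {(p : ℤ_[p]) ^ k} := by
    rw [Ideal.span_le]
    rintro x ⟨j, rfl⟩
    rw [SetLike.mem_coe, Ideal.mem_span_singleton]
    exact hh j
  have hsq : (Ideal.span (Set.range h)) ^ 2 ≤ (Ideal.span {(p : ℤ_[p]) ^ k}) ^ 2 := by
    rw [sq, sq]; exact Ideal.mul_mono h1 h1
  have h2 := hsq (mv_taylor f z h)
  rw [Ideal.span_singleton_pow, ← pow_mul, mul_comm k 2] at h2
  rwa [Ideal.mem_span_singleton] at h2
lemma eval_dvd_sub (f : MvPolynomial (Fin d) ℤ_[p]) (z z' : Fin d → ℤ_[p]) (k : ℕ)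
    (h : ∀ j, (p : ℤ_[p]) ^ k ∣ (z' j - z j)) :
    (p : ℤ_[p]) ^ k ∣ eval z' f - eval z f := by
  obtain ⟨r, hr, heq⟩ := taylor_dvd f z (z' - z) k (fun j => h j)
  have hz : z + (z' - z) = z' := by funext j; simp
  rw [hz] at heq
  rw [heq]
  have hsum : (p : ℤ_[p]) ^ k ∣ ∑ j, (z' - z) j * eval z (pderiv j f) :=
    Finset.dvd_sum fun j _ => Dvd.dvd.mul_right (h j) _
  have hr' : (p : ℤ_[p]) ^ k ∣ r := dvd_trans (pow_dvd_pow _ (by omega)) hr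
  have : eval z f + (∑ j, (z' - z) j * eval z (pderiv j f)) + r - eval z f
      = (∑ j, (z' - z) j * eval z (pderiv j f)) + r := by ring
  rw [this]
  exact dvd_add hsum hr'


section fiber
variable {S : Type*} [CommRing S] [Fintype S]

lemma measurableSet_fiber (φ : ℤ_[p] →+* S) (ε : ℝ)
    (hφ : ∀ x y : ℤ_[p], φ x = φ y ↔ ‖x - y‖ ≤ ε)
    (hs : Function.Surjective φ) (c : Fin d → S) :
    MeasurableSet {z : Fin d → ℤ_[p] | ∀ j, φ (z j) = c j} := by
  have h1 : {z : Fin d → ℤ_[p] | ∀ j, φ (z j) = c j}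
      = ⋂ j, (fun z : Fin d → ℤ_[p] => z j) ⁻¹' {x | φ x = c j} := by
    ext z; simp [Set.mem_iInter]
  rw [h1]
  refine MeasurableSet.iInter fun j => MeasurableSet.preimage ?_ (measurable_pi_apply j)
  obtain ⟨w, hw⟩ := hs (c j)
  have h2 : {x : ℤ_[p] | φ x = c j} = Metric.closedBall w ε := by
    ext x
    simp only [Set.mem_setOf_eq, Metric.mem_closedBall, dist_eq_norm, ← hw, hφ]
  rw [h2]; exact measurableSet_closedBall

lemma measure_fiber (μ : Measure (Fin d → ℤ_[p]))
    [μ.IsAddHaarMeasure] (hμ : μ Set.univ = 1)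
    (φ : ℤ_[p] →+* S) (ε : ℝ) (hφ : ∀ x y : ℤ_[p], φ x = φ y ↔ ‖x - y‖ ≤ ε)
    (hs : Function.Surjective φ) (c : Fin d → S) :
    μ {z | ∀ j, φ (z j) = c j} = ((Fintype.card S : ℝ≥0∞))⁻¹ ^ d := by
  classical
  set V : (Fin d → S) → Set (Fin d → ℤ_[p]) := fun c => {z | ∀ j, φ (z j) = c j} with hV
  have hmV : ∀ c, MeasurableSet (V c) := fun c => measurableSet_fiber φ ε hφ hs c
  have htrans : ∀ c c', μ (V c) = μ (V c') := by
    intro c c'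
    set w : Fin d → ℤ_[p] := fun j => (hs (c j)).choose with hwdef
    set w' : Fin d → ℤ_[p] := fun j => (hs (c' j)).choose with hw'def
    have hw : ∀ j, φ (w j) = c j := fun j => (hs (c j)).choose_spec
    have hw' : ∀ j, φ (w' j) = c' j := fun j => (hs (c' j)).choose_spec
    have h3 : V c = (fun z => (w' - w) + z) ⁻¹' V c' := by
      ext z
      simp only [hV, Set.mem_setOf_eq, Set.mem_preimage, Pi.add_apply, Pi.sub_apply]
      constructor
      · intro h j; rw [map_add, map_sub, hw j, hw' j, h j]; ring
      · intro h j
        have h4 := h j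
        rw [map_add, map_sub, hw j, hw' j] at h4
        linear_combination h4
    rw [h3, measure_preimage_add]
  have hcover : (⋃ c, V c) = Set.univ := by
    ext z; simp only [Set.mem_iUnion, Set.mem_univ, iff_true]
    exact ⟨fun j => φ (z j), fun j => rfl⟩
  have hdis : Pairwise (Function.onFun Disjoint V) := by
    intro c c' hcc
    refine Set.disjoint_left.2 fun z hz hz' => hcc ?_
    funext j; rw [← hz j, ← hz' j]
  have hsum : ∑ c : Fin d → S, μ (V c) = 1 := by
    rw [← tsum_fintype (L := .unconditional _), ← measure_iUnion hdis hmV, hcover, hμ]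
  have hall : ∀ c', μ (V c') = μ (V c) := fun c' => htrans c' c
  have hcard : (Fintype.card (Fin d → S) : ℝ≥0∞) * μ (V c) = 1 := by
    rw [← hsum, Finset.sum_congr rfl fun c' _ => hall c']
    simp [Finset.sum_const, mul_comm]
  have h0 : (Fintype.card (Fin d → S) : ℝ≥0∞) ≠ 0 := by
    have : Nonempty (Fin d → S) := ⟨c⟩
    simp [Fintype.card_ne_zero]
  have htop : (Fintype.card (Fin d → S) : ℝ≥0∞) ≠ ∞ := ENNReal.natCast_ne_top _
  have hVc : μ (V c) = ((Fintype.card (Fin d → S) : ℝ≥0∞))⁻¹ := by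
    calc μ (V c) = ((Fintype.card (Fin d → S) : ℝ≥0∞))⁻¹
          * ((Fintype.card (Fin d → S) : ℝ≥0∞) * μ (V c)) := by
          rw [← mul_assoc, ENNReal.inv_mul_cancel h0 htop, one_mul]
      _ = ((Fintype.card (Fin d → S) : ℝ≥0∞))⁻¹ := by rw [hcard, mul_one]
  rw [hVc, Fintype.card_fun, Fintype.card_fin]
  push_cast
  rw [ENNReal.inv_pow]

end fiber

lemma perball (μ : Measure (Fin d → ℤ_[p])) [μ.IsAddHaarMeasure] (hμ : μ Set.univ = 1)
    (f : MvPolynomial (Fin d) ℤ_[p]) (a : Fin d → ZMod p)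
    (hsm : ∃ i, eval a (pderiv i (map PadicInt.toZMod f)) ≠ 0)
    (k : ℕ) (hk : 1 ≤ k) (c : Fin d → ZMod (p ^ k))
    (hc : {z : Fin d → ℤ_[p] | ∀ j, PadicInt.toZModPow k (z j) = c j} ⊆
      {z | ∀ j, PadicInt.toZMod (z j) = a j} ∩ {z | ‖eval z f‖ ≤ (p:ℝ) ^ (-(k:ℤ))}) :
    μ ({z : Fin d → ℤ_[p] | ∀ j, PadicInt.toZModPow k (z j) = c j}
        ∩ {z | ‖eval z f‖ ≤ (p:ℝ) ^ (-((k+1:ℕ):ℤ))})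
      = (p : ℝ≥0∞) ^ (d - 1) * (((p:ℝ≥0∞) ^ (k+1))⁻¹) ^ d := by
  classical
  have hppos : 0 < p := (Fact.out : p.Prime).pos
  have hpz : (p:ℤ_[p]) ≠ 0 := Nat.cast_ne_zero.mpr (by omega)
  -- base point z₀
  choose z₀ hz₀ using fun j => toZModPow_surj k (c j)
  have hz₀mem : z₀ ∈ {z : Fin d → ℤ_[p] | ∀ j, PadicInt.toZModPow k (z j) = c j} :=
    fun j => hz₀ j
  obtain ⟨hz₀fib, hz₀lev⟩ := hc hz₀mem
  obtain ⟨u, hu⟩ := (norm_le_iff_dvd _ k).1 hz₀lev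
  set b : Fin d → ZMod p := fun j => PadicInt.toZMod (eval z₀ (pderiv j f)) with hbdef
  obtain ⟨i, hi⟩ := hsm
  have hbi : b i ≠ 0 := by
    have hbe : b i = eval a (pderiv i (map PadicInt.toZMod f)) := by
      show PadicInt.toZMod (eval z₀ (pderiv i f)) = _
      have ha' : (fun j => PadicInt.toZMod (z₀ j)) = a := funext fun j => hz₀fib j
      rw [red_eval, pderiv_map, ha']
    rw [hbe]; exact hi
  -- subdivision
  set y : (Fin d → ZMod p) → (Fin d → ℤ_[p]) :=
    fun t j => z₀ j + (p:ℤ_[p])^k * ((t j).val : ℤ_[p]) with hydef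
  set W : (Fin d → ZMod p) → Set (Fin d → ℤ_[p]) :=
    fun t => {z | ∀ j, PadicInt.toZModPow (k+1) (z j) = PadicInt.toZModPow (k+1) (y t j)}
    with hWdef
  have hWmeas : ∀ t, MeasurableSet (W t) := fun t =>
    measurableSet_fiber (PadicInt.toZModPow (k+1)) ((p:ℝ) ^ (-((k+1:ℕ):ℤ)))
      (toZModPow_eq_iff_norm (k+1)) (toZModPow_surj (k+1)) _
  haveI : NeZero (p ^ (k+1)) := ⟨pow_ne_zero _ (by omega)⟩
  have hWvol : ∀ t, μ (W t) = (((p:ℝ≥0∞) ^ (k+1))⁻¹) ^ d := by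
    intro t
    have := measure_fiber μ hμ (PadicInt.toZModPow (k+1)) ((p:ℝ) ^ (-((k+1:ℕ):ℤ)))
      (toZModPow_eq_iff_norm (k+1)) (toZModPow_surj (k+1))
      (fun j => PadicInt.toZModPow (k+1) (y t j))
    rw [hWdef]
    rw [this, ZMod.card]
    push_cast
    rfl
  -- W t is inside the ball
  have hWsub : ∀ t, W t ⊆ {z : Fin d → ℤ_[p] | ∀ j, PadicInt.toZModPow k (z j) = c j} := by
    intro t z hz j
    have h1 : (p:ℤ_[p])^(k+1) ∣ z j - y t j := (toZModPow_eq_iff_dvd _ _ _).1 (hz j)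
    have h2 : (p:ℤ_[p])^k ∣ z j - z₀ j := by
      have : z j - z₀ j = (z j - y t j) + (p:ℤ_[p])^k * ((t j).val : ℤ_[p]) := by
        rw [hydef]; ring
      rw [this]
      exact dvd_add ((pow_dvd_pow _ (by omega)).trans h1) (dvd_mul_right _ _)
    rw [← hz₀ j]
    exact (toZModPow_eq_iff_dvd _ _ _).2 h2
  -- the balls W t cover the big ball
  have hWcover : ∀ z ∈ {z : Fin d → ℤ_[p] | ∀ j, PadicInt.toZModPow k (z j) = c j},
      ∃ t, z ∈ W t := by
    intro z hz
    have h1 : ∀ j, (p:ℤ_[p])^k ∣ z j - z₀ j := fun j =>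
      (toZModPow_eq_iff_dvd _ _ _).1 ((hz j).trans (hz₀ j).symm)
    choose w hw using h1
    refine ⟨fun j => PadicInt.toZMod (w j), fun j => ?_⟩
    have h2 : z j - y (fun j => PadicInt.toZMod (w j)) j
        = (p:ℤ_[p])^k * (w j - (((PadicInt.toZMod (w j)).val : ℤ_[p]))) := by
      rw [hydef]
      have := hw j
      simp only []
      rw [mul_sub, ← this]
      ring
    refine (toZModPow_eq_iff_dvd _ _ _).2 ?_
    rw [h2, pow_succ]
    refine mul_dvd_mul dvd_rfl ?_
    refine (toZMod_eq_iff_dvd _ _).1 ?_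
    rw [toZMod_natCast_val]
  -- the W t are pairwise disjoint
  have hWdis : ∀ t t', t ≠ t' → Disjoint (W t) (W t') := by
    intro t t' htt
    refine Set.disjoint_left.2 fun z hz hz' => htt ?_
    funext j
    have h1 : (p:ℤ_[p])^(k+1) ∣ z j - y t j := (toZModPow_eq_iff_dvd _ _ _).1 (hz j)
    have h2 : (p:ℤ_[p])^(k+1) ∣ z j - y t' j := (toZModPow_eq_iff_dvd _ _ _).1 (hz' j)
    have h3 : (p:ℤ_[p])^(k+1) ∣ y t' j - y t j := by
      have : y t' j - y t j = (z j - y t j) - (z j - y t' j) := by ring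
      rw [this]; exact dvd_sub h1 h2
    have h4 : y t' j - y t j
        = (p:ℤ_[p])^k * ((((t' j).val : ℤ_[p])) - (((t j).val : ℤ_[p]))) := by
      rw [hydef]; ring
    rw [h4, pow_succ, mul_dvd_mul_iff_left (pow_ne_zero k hpz)] at h3
    have h5 : PadicInt.toZMod (((t j).val : ℤ_[p])) = PadicInt.toZMod (((t' j).val : ℤ_[p])) := by
      refine (toZMod_eq_iff_dvd _ _).2 ?_
      have : ((t j).val : ℤ_[p]) - ((t' j).val : ℤ_[p])
          = -((((t' j).val : ℤ_[p])) - (((t j).val : ℤ_[p]))) := by ring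
      rw [this]
      exact dvd_neg.2 h3
    rwa [toZMod_natCast_val, toZMod_natCast_val] at h5
  -- criterion for a sub-ball to consist of solutions mod p^(k+1)
  have hcrit : ∀ t, ∀ z ∈ W t,
      (‖eval z f‖ ≤ (p:ℝ) ^ (-((k+1:ℕ):ℤ)) ↔ PadicInt.toZMod u + ∑ j, t j * b j = 0) := by
    intro t z hz
    have h1 : (p:ℤ_[p])^(k+1) ∣ eval z f - eval (y t) f := by
      refine eval_dvd_sub f (y t) z (k+1) fun j => ?_
      exact (toZModPow_eq_iff_dvd _ _ _).1 (hz j)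
    obtain ⟨r, hr2k, hyeq⟩ := taylor_dvd f z₀
      (fun j => (p:ℤ_[p])^k * (((t j).val : ℤ_[p]))) k (fun j => dvd_mul_right _ _)
    have hyt : y t = z₀ + fun j => (p:ℤ_[p])^k * (((t j).val : ℤ_[p])) := by
      funext j; rw [hydef]; rfl
    have hr' : (p:ℤ_[p])^(k+1) ∣ r := (pow_dvd_pow _ (by omega)).trans hr2k
    have hsum : (∑ j, ((p:ℤ_[p])^k * (((t j).val : ℤ_[p]))) * eval z₀ (pderiv j f))
        = (p:ℤ_[p])^k * ∑ j, (((t j).val : ℤ_[p])) * eval z₀ (pderiv j f) := by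
      rw [Finset.mul_sum]
      exact Finset.sum_congr rfl fun j _ => by ring
    have hyval : eval (y t) f
        = (p:ℤ_[p])^k * (u + ∑ j, (((t j).val : ℤ_[p])) * eval z₀ (pderiv j f)) + r := by
      rw [hyt, hyeq, hsum, hu]; ring
    have hzval : eval z f
        = (p:ℤ_[p])^k * (u + ∑ j, (((t j).val : ℤ_[p])) * eval z₀ (pderiv j f))
          + (r + (eval z f - eval (y t) f)) := by
      linear_combination hyval
    have key : ∀ A B : ℤ_[p], (p:ℤ_[p])^(k+1) ∣ B →
        (((p:ℤ_[p])^(k+1) ∣ A + B) ↔ (p:ℤ_[p])^(k+1) ∣ A) := by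
      intro A B hB
      constructor
      · intro h; simpa using dvd_sub h hB
      · intro h; exact dvd_add h hB
    rw [norm_le_iff_dvd, hzval]
    rw [key _ _ (dvd_add hr' h1)]
    rw [pow_succ, mul_comm ((p:ℤ_[p])^k) ((p:ℤ_[p])), mul_comm ((p:ℤ_[p])^k)]
    rw [mul_dvd_mul_iff_right (pow_ne_zero k hpz)]
    have hdvd0 : ∀ x : ℤ_[p], (p:ℤ_[p]) ∣ x ↔ PadicInt.toZMod x = 0 := by
      intro x
      rw [show (0 : ZMod p) = PadicInt.toZMod (0 : ℤ_[p]) by rw [map_zero],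
        toZMod_eq_iff_dvd, sub_zero]
    rw [hdvd0, map_add, map_sum]
    have : ∀ j, PadicInt.toZMod ((((t j).val : ℤ_[p])) * eval z₀ (pderiv j f)) = t j * b j := by
      intro j
      rw [map_mul, toZMod_natCast_val, hbdef]
    rw [Finset.sum_congr rfl fun j _ => this j]
  -- the good set
  set G : Finset (Fin d → ZMod p) :=
    Finset.univ.filter (fun t => PadicInt.toZMod u + ∑ j, t j * b j = 0) with hGdef
  have hset : {z : Fin d → ℤ_[p] | ∀ j, PadicInt.toZModPow k (z j) = c j}
      ∩ {z | ‖eval z f‖ ≤ (p:ℝ) ^ (-((k+1:ℕ):ℤ))} = ⋃ t ∈ G, W t := by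
    ext z
    simp only [Set.mem_inter_iff, Set.mem_iUnion, exists_prop]
    constructor
    · rintro ⟨hz1, hz2⟩
      obtain ⟨t, ht⟩ := hWcover z hz1
      refine ⟨t, ?_, ht⟩
      rw [hGdef]
      simp only [Finset.mem_filter, Finset.mem_univ, true_and]
      exact (hcrit t z ht).1 hz2
    · rintro ⟨t, htG, htW⟩
      refine ⟨hWsub t htW, ?_⟩
      rw [hGdef] at htG
      simp only [Finset.mem_filter, Finset.mem_univ, true_and] at htG
      exact (hcrit t z htW).2 htG
  have hmeasure : μ ({z : Fin d → ℤ_[p] | ∀ j, PadicInt.toZModPow k (z j) = c j}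
      ∩ {z | ‖eval z f‖ ≤ (p:ℝ) ^ (-((k+1:ℕ):ℤ))})
      = ∑ t ∈ G, μ (W t) := by
    rw [hset]
    exact measure_biUnion_finset
      (fun t _ t' _ htt => hWdis t t' htt) (fun t _ => hWmeas t)
  rw [hmeasure, Finset.sum_congr rfl fun t _ => hWvol t, Finset.sum_const, nsmul_eq_mul]
  congr 1
  haveI : NeZero p := ⟨by omega⟩
  have hGcard : G.card = Fintype.card {t : Fin d → ZMod p //
      PadicInt.toZMod u + ∑ j, t j * b j = 0} := by
    rw [hGdef, Fintype.card_subtype]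
  rw [hGcard, card_affine _ b i hbi, ZMod.card p]
  push_cast
  ring

lemma measurableSet_lev (f : MvPolynomial (Fin d) ℤ_[p]) (m : ℕ) :
    MeasurableSet {z : Fin d → ℤ_[p] | ‖eval z f‖ ≤ (p:ℝ) ^ (-(m:ℤ))} := by
  classical
  set L := {z : Fin d → ℤ_[p] | ‖eval z f‖ ≤ (p:ℝ) ^ (-(m:ℤ))} with hL
  have hinv : ∀ z ∈ L, ∀ z', (∀ j, PadicInt.toZModPow m (z' j) = PadicInt.toZModPow m (z j))
      → z' ∈ L := by
    intro z hz z' hzz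
    have h1 : (p:ℤ_[p])^m ∣ eval z' f - eval z f :=
      eval_dvd_sub f z z' m fun j => (toZModPow_eq_iff_dvd _ _ _).1 (hzz j)
    have h2 : (p:ℤ_[p])^m ∣ eval z f := (norm_le_iff_dvd _ _).1 hz
    have h3 : (p:ℤ_[p])^m ∣ eval z' f := by
      have : eval z' f = (eval z' f - eval z f) + eval z f := by ring
      rw [this]; exact dvd_add h1 h2
    exact (norm_le_iff_dvd _ _).2 h3
  have hset : L = ⋃ c ∈ Finset.univ.filter
      (fun c : Fin d → ZMod (p^m) => {z : Fin d → ℤ_[p] |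
        ∀ j, PadicInt.toZModPow m (z j) = c j} ⊆ L),
      {z : Fin d → ℤ_[p] | ∀ j, PadicInt.toZModPow m (z j) = c j} := by
    ext z
    simp only [Set.mem_iUnion, exists_prop, Finset.mem_filter, Finset.mem_univ, true_and]
    constructor
    · intro hz
      refine ⟨fun j => PadicInt.toZModPow m (z j), fun z' hz' => hinv z hz z' hz', fun j => rfl⟩
    · rintro ⟨c, hsub, hzc⟩
      exact hsub hzc
  rw [hset]
  refine MeasurableSet.biUnion (Finset.countable_toSet _) fun c _ =>
    measurableSet_fiber (PadicInt.toZModPow m) ((p:ℝ) ^ (-(m:ℤ)))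
      (toZModPow_eq_iff_norm m) (toZModPow_surj m) c

lemma measure_T (μ : Measure (Fin d → ℤ_[p])) [μ.IsAddHaarMeasure] (hμ : μ Set.univ = 1)
    (hd : 1 ≤ d) (f : MvPolynomial (Fin d) ℤ_[p]) (a : Fin d → ZMod p)
    (ha : eval a (map PadicInt.toZMod f) = 0)
    (hsm : ∃ i, eval a (pderiv i (map PadicInt.toZMod f)) ≠ 0)
    (k : ℕ) :
    μ ({z : Fin d → ℤ_[p] | ∀ j, PadicInt.toZMod (z j) = a j}
        ∩ {z | ‖eval z f‖ ≤ (p:ℝ) ^ (-((k+1:ℕ):ℤ))})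
      = ((p:ℝ≥0∞) ^ d)⁻¹ * ((p:ℝ≥0∞) ^ k)⁻¹ := by
  classical
  have hppos : 0 < p := (Fact.out : p.Prime).pos
  haveI : NeZero p := ⟨by omega⟩
  have hP0 : (p:ℝ≥0∞) ≠ 0 := by exact_mod_cast Nat.cast_ne_zero.mpr (by omega)
  have hPtop : (p:ℝ≥0∞) ≠ ⊤ := ENNReal.natCast_ne_top p
  set Fib := {z : Fin d → ℤ_[p] | ∀ j, PadicInt.toZMod (z j) = a j} with hFibDef
  have hFibSub : ∀ m : ℕ, 1 ≤ m → Fib ∩ {z | ‖eval z f‖ ≤ (p:ℝ) ^ (-(m:ℤ))} ⊆ Fib :=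
    fun m _ => Set.inter_subset_left
  -- auxiliary: fiber is inside level 1
  have hFibLev : Fib ⊆ {z | ‖eval z f‖ ≤ (p:ℝ) ^ (-((1:ℕ):ℤ))} := by
    intro z hz
    have h1 : PadicInt.toZMod (eval z f) = 0 := by
      rw [red_eval]
      have : (fun j => PadicInt.toZMod (z j)) = a := funext fun j => hz j
      rw [this, ha]
    have h2 : (p:ℤ_[p]) ∣ eval z f := by
      have := (toZMod_eq_iff_dvd (eval z f) 0).1 (by rw [h1, map_zero])
      simpa using this
    have := (norm_le_iff_dvd (eval z f) 1).2 (by rwa [pow_one])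
    exact this
  -- helper for ENNReal powers
  have hpowinv : ∀ A B : ℕ, (p:ℝ≥0∞)^A * ((p:ℝ≥0∞)^(A+B))⁻¹ = ((p:ℝ≥0∞)^B)⁻¹ := by
    intro A B
    rw [pow_add, ENNReal.mul_inv (Or.inl (pow_ne_zero _ hP0)) (Or.inl (ENNReal.pow_ne_top hPtop)),
      ← mul_assoc, ENNReal.mul_inv_cancel (pow_ne_zero _ hP0) (ENNReal.pow_ne_top hPtop), one_mul]
  induction k with
  | zero =>
      have hset : Fib ∩ {z | ‖eval z f‖ ≤ (p:ℝ) ^ (-((0+1:ℕ):ℤ))} = Fib :=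
        Set.inter_eq_left.mpr hFibLev
      rw [hset, pow_zero, inv_one, mul_one]
      have := measure_fiber μ hμ (PadicInt.toZMod : ℤ_[p] →+* ZMod p) ((p:ℝ) ^ (-(1:ℕ):ℤ))
        toZMod_eq_iff_norm toZMod_surj a
      rw [hFibDef]
      rw [this, ZMod.card]
      rw [← ENNReal.inv_pow]
  | succ k ih =>
      set K := k + 1 with hKdef
      set T := Fib ∩ {z | ‖eval z f‖ ≤ (p:ℝ) ^ (-((K:ℕ):ℤ))} with hTdef
      set Bs : (Fin d → ZMod (p^K)) → Set (Fin d → ℤ_[p]) :=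
        fun c => {z | ∀ j, PadicInt.toZModPow K (z j) = c j} with hBsDef
      set D : Finset (Fin d → ZMod (p^K)) := Finset.univ.filter (fun c => Bs c ⊆ T) with hDdef
      -- T is the union of the balls in D
      have hTinv : ∀ z ∈ T, Bs (fun j => PadicInt.toZModPow K (z j)) ⊆ T := by
        intro z hz z' hz'
        have hdvd : ∀ j, (p:ℤ_[p])^K ∣ z' j - z j := fun j =>
          (toZModPow_eq_iff_dvd _ _ _).1 (hz' j)
        constructor
        · intro j
          have h1 : (p:ℤ_[p]) ∣ z' j - z j :=
            (dvd_pow_self (p:ℤ_[p]) (by omega : K ≠ 0)).trans (hdvd j)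
          rw [(toZMod_eq_iff_dvd _ _).2 h1]
          exact hz.1 j
        · have h1 : (p:ℤ_[p])^K ∣ eval z' f - eval z f := eval_dvd_sub f z z' K hdvd
          have h2 : (p:ℤ_[p])^K ∣ eval z f := (norm_le_iff_dvd _ _).1 hz.2
          have h3 : (p:ℤ_[p])^K ∣ eval z' f := by
            have : eval z' f = (eval z' f - eval z f) + eval z f := by ring
            rw [this]; exact dvd_add h1 h2
          exact (norm_le_iff_dvd _ _).2 h3
      have hTunion : T = ⋃ c ∈ D, Bs c := by
        ext z
        simp only [Set.mem_iUnion, exists_prop, hDdef, Finset.mem_filter, Finset.mem_univ,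
          true_and]
        constructor
        · intro hz
          exact ⟨fun j => PadicInt.toZModPow K (z j), hTinv z hz, fun j => rfl⟩
        · rintro ⟨c, hsub, hzc⟩
          exact hsub hzc
      have hBsdis : ∀ c ∈ D, ∀ c' ∈ D, c ≠ c' → Disjoint (Bs c) (Bs c') := by
        intro c _ c' _ hcc
        refine Set.disjoint_left.2 fun z hz hz' => hcc ?_
        funext j; rw [← hz j, ← hz' j]
      haveI : NeZero (p ^ K) := ⟨pow_ne_zero _ (by omega)⟩
      have hBsmeas : ∀ c, MeasurableSet (Bs c) := fun c =>
        measurableSet_fiber (PadicInt.toZModPow K) ((p:ℝ) ^ (-(K:ℤ)))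
          (toZModPow_eq_iff_norm K) (toZModPow_surj K) c
      have hBsvol : ∀ c, μ (Bs c) = (((p:ℝ≥0∞)^K)⁻¹)^d := by
        intro c
        rw [hBsDef]
        rw [measure_fiber μ hμ (PadicInt.toZModPow K) ((p:ℝ) ^ (-(K:ℤ)))
          (toZModPow_eq_iff_norm K) (toZModPow_surj K) c, ZMod.card]
        push_cast
        rfl
      -- measure of T
      have hTvol : μ T = (D.card : ℝ≥0∞) * (((p:ℝ≥0∞)^K)⁻¹)^d := by
        rw [hTunion, measure_biUnion_finset hBsdis (fun c _ => hBsmeas c),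
          Finset.sum_congr rfl (fun c _ => hBsvol c), Finset.sum_const, nsmul_eq_mul]
      -- decompose next level
      have hLsub : {z : Fin d → ℤ_[p] | ‖eval z f‖ ≤ (p:ℝ) ^ (-((K+1:ℕ):ℤ))}
          ⊆ {z | ‖eval z f‖ ≤ (p:ℝ) ^ (-((K:ℕ):ℤ))} := by
        intro z hz
        exact (norm_le_iff_dvd _ _).2 ((pow_dvd_pow _ (by omega)).trans
          ((norm_le_iff_dvd _ _).1 hz))
      have hT1 : Fib ∩ {z | ‖eval z f‖ ≤ (p:ℝ) ^ (-((K+1:ℕ):ℤ))}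
          = ⋃ c ∈ D, (Bs c ∩ {z | ‖eval z f‖ ≤ (p:ℝ) ^ (-((K+1:ℕ):ℤ))}) := by
        have h1 : Fib ∩ {z | ‖eval z f‖ ≤ (p:ℝ) ^ (-((K+1:ℕ):ℤ))}
            = T ∩ {z | ‖eval z f‖ ≤ (p:ℝ) ^ (-((K+1:ℕ):ℤ))} := by
          rw [hTdef]
          ext z
          simp only [Set.mem_inter_iff, Set.mem_setOf_eq]
          constructor
          · rintro ⟨h1, h2⟩; exact ⟨⟨h1, hLsub h2⟩, h2⟩
          · rintro ⟨⟨h1, _⟩, h2⟩; exact ⟨h1, h2⟩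
        rw [h1, hTunion, Set.iUnion₂_inter]
      have hmain : μ (Fib ∩ {z | ‖eval z f‖ ≤ (p:ℝ) ^ (-((K+1:ℕ):ℤ))})
          = (D.card : ℝ≥0∞) * ((p:ℝ≥0∞)^(d-1) * (((p:ℝ≥0∞)^(K+1))⁻¹)^d) := by
        rw [hT1, measure_biUnion_finset]
        · refine (Finset.sum_congr rfl fun c hcD => ?_).trans
            (by rw [Finset.sum_const, nsmul_eq_mul])
          have hcsub : Bs c ⊆ T := by
            rw [hDdef] at hcD
            simpa using (Finset.mem_filter.1 hcD).2
          exact perball μ hμ f a hsm K (by omega) c hcsub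
        · intro c hc c' hc' hcc
          exact Disjoint.mono Set.inter_subset_left Set.inter_subset_left
            (hBsdis c hc c' hc' hcc)
        · intro c _
          exact (hBsmeas c).inter (measurableSet_lev f (K+1))
      -- now the arithmetic
      have hcardK : (D.card : ℝ≥0∞) * (((p:ℝ≥0∞)^K)⁻¹)^d
          = ((p:ℝ≥0∞) ^ d)⁻¹ * ((p:ℝ≥0∞) ^ k)⁻¹ := by
        rw [← hTvol, hTdef]
        exact ih
      rw [hmain]
      have hsplit : (p:ℝ≥0∞)^(d-1) * (((p:ℝ≥0∞)^(K+1))⁻¹)^d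
          = (((p:ℝ≥0∞)^K)⁻¹)^d * ((p:ℝ≥0∞))⁻¹ := by
        rw [← ENNReal.inv_pow, ← ENNReal.inv_pow, ← pow_mul, ← pow_mul]
        obtain ⟨e, he⟩ : ∃ e, d = e + 1 := ⟨d - 1, by omega⟩
        have h2 : (K+1)*d = (d-1) + (K*d+1) := by
          subst he; simp only [Nat.add_sub_cancel]; ring
        rw [h2, hpowinv (d-1) (K*d+1)]
        rw [pow_succ, ENNReal.mul_inv (Or.inl (pow_ne_zero _ hP0))
          (Or.inl (ENNReal.pow_ne_top hPtop))]
      rw [hsplit, ← mul_assoc, hcardK, mul_assoc, ← ENNReal.mul_inv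
        (Or.inl (pow_ne_zero _ hP0)) (Or.inl (ENNReal.pow_ne_top hPtop)), ← pow_succ]

lemma measure_level (μ : Measure (Fin d → ℤ_[p])) [μ.IsAddHaarMeasure] (hμ : μ Set.univ = 1)
    (hd : 1 ≤ d) (f : MvPolynomial (Fin d) ℤ_[p])
    (hsm : ∀ a : Fin d → ZMod p, eval a (map PadicInt.toZMod f) = 0 →
      ∃ i, eval a (pderiv i (map PadicInt.toZMod f)) ≠ 0)
    (k : ℕ) :
    μ {z : Fin d → ℤ_[p] | ‖eval z f‖ ≤ (p:ℝ) ^ (-((k+1:ℕ):ℤ))}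
      = ((Finset.univ.filter
            (fun a : Fin d → ZMod p => eval a (map PadicInt.toZMod f) = 0)).card : ℝ≥0∞)
          * (((p:ℝ≥0∞) ^ d)⁻¹ * ((p:ℝ≥0∞) ^ k)⁻¹) := by
  classical
  set L := {z : Fin d → ℤ_[p] | ‖eval z f‖ ≤ (p:ℝ) ^ (-((k+1:ℕ):ℤ))} with hLdef
  set Fib : (Fin d → ZMod p) → Set (Fin d → ℤ_[p]) :=
    fun a => {z | ∀ j, PadicInt.toZMod (z j) = a j} with hFibDef
  have hLunion : L = ⋃ a, (Fib a ∩ L) := by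
    rw [← Set.iUnion_inter]
    have : (⋃ a, Fib a) = Set.univ := by
      ext z
      simp only [Set.mem_iUnion, Set.mem_univ, iff_true]
      exact ⟨fun j => PadicInt.toZMod (z j), fun j => rfl⟩
    rw [this, Set.univ_inter]
  have hFibMeas : ∀ a, MeasurableSet (Fib a) := fun a =>
    measurableSet_fiber (PadicInt.toZMod : ℤ_[p] →+* ZMod p) ((p:ℝ) ^ (-(1:ℕ):ℤ))
      toZMod_eq_iff_norm toZMod_surj a
  have hdis : Pairwise (Function.onFun Disjoint (fun a => Fib a ∩ L)) := by
    intro a a' haa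
    refine Set.disjoint_left.2 fun z hz hz' => haa ?_
    funext j; rw [← hz.1 j, ← hz'.1 j]
  have hvals : ∀ a : Fin d → ZMod p, μ (Fib a ∩ L)
      = if eval a (map PadicInt.toZMod f) = 0
        then ((p:ℝ≥0∞) ^ d)⁻¹ * ((p:ℝ≥0∞) ^ k)⁻¹ else 0 := by
    intro a
    by_cases ha : eval a (map PadicInt.toZMod f) = 0
    · rw [if_pos ha]
      exact measure_T μ hμ hd f a ha (hsm a ha) k
    · rw [if_neg ha]
      have hempty : Fib a ∩ L = ∅ := by
        ext z
        simp only [Set.mem_inter_iff, Set.mem_empty_iff_false, iff_false, not_and]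
        intro hzf hzL
        apply ha
        have h1 : (p:ℤ_[p]) ∣ eval z f :=
          (dvd_pow_self (p:ℤ_[p]) (by omega : k+1 ≠ 0)).trans ((norm_le_iff_dvd _ _).1 hzL)
        have h2 : PadicInt.toZMod (eval z f) = 0 := by
          have := (toZMod_eq_iff_dvd (eval z f) 0).2 (by simpa using h1)
          simpa using this
        rw [red_eval] at h2
        have : (fun j => PadicInt.toZMod (z j)) = a := funext fun j => hzf j
        rwa [this] at h2
      rw [hempty, measure_empty]
  rw [hLdef] at *
  rw [hLunion, measure_iUnion hdis (fun a => (hFibMeas a).inter (measurableSet_lev f (k+1))),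
    tsum_fintype, Finset.sum_congr rfl (fun a _ => hvals a), Finset.sum_ite, Finset.sum_const,
    Finset.sum_const_zero, add_zero, nsmul_eq_mul]


end IgusaAux


/-- `N_1(f)`: the number of `F_p`-rational points of the hypersurface `f̄ = 0`. -/
noncomputable def igusaN1 (p : ℕ) [Fact p.Prime] (d : ℕ)
    (f : MvPolynomial (Fin d) ℤ_[p]) : ℕ :=
  Nat.card {a : Fin d → ZMod p // MvPolynomial.eval a (MvPolynomial.map (PadicInt.toZMod) f) = 0}

/-- (Closed formula for the Igusa zeta function in the smooth
case.)  If the reduction of `f` mod `p` defines a smooth hypersurface, then for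
`Re(s) > 0`,
`∫ |f(z)|_p^s dμ = p^{-d} N_1(f) (p-1) p^{-1-s}/(1-p^{-1-s}) + 1 - p^{-d} N_1(f)`,
where `μ` is the Haar measure on `ℤ_p^d` normalized by `μ(ℤ_p^d) = 1`. -/
theorem igusa_zeta_smooth (p : ℕ) [Fact p.Prime] (d : ℕ) (hd : 1 ≤ d)
    (f : MvPolynomial (Fin d) ℤ_[p]) (hf : SmoothModP p d f)
    (μ : Measure (Fin d → ℤ_[p])) [μ.IsAddHaarMeasure] (hμ : μ Set.univ = 1)
    (s : ℂ) (hs : 0 < s.re) :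
    ∫ z : Fin d → ℤ_[p], (‖MvPolynomial.eval z f‖ : ℂ) ^ s ∂μ
      = (p : ℂ) ^ (-(d : ℂ)) * (igusaN1 p d f : ℂ) * ((p : ℂ) - 1)
            * ((p : ℂ) ^ (-1 - s) / (1 - (p : ℂ) ^ (-1 - s)))
          + 1 - (p : ℂ) ^ (-(d : ℂ)) * (igusaN1 p d f : ℂ) := by
    classical
  obtain ⟨hfne, hsm⟩ := hf
  have hppos : 0 < p := (Fact.out : p.Prime).pos
  have hp1 : 1 < p := (Fact.out : p.Prime).one_lt
  have hπpos : (0:ℝ) < p := by exact_mod_cast hppos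
  have hπ1 : (1:ℝ) < p := by exact_mod_cast hp1
  have hπne : (p:ℝ) ≠ 0 := ne_of_gt hπpos
  have hpCne : (p:ℂ) ≠ 0 := by exact_mod_cast Nat.cast_ne_zero.mpr (by omega)
  haveI : IsFiniteMeasure μ := ⟨by rw [hμ]; exact ENNReal.one_lt_top⟩
  have hs0 : s ≠ 0 := fun h => by simp [h] at hs
  set N : ℕ := (Finset.univ.filter
    (fun a : Fin d → ZMod p => eval a (map PadicInt.toZMod f) = 0)).card with hN
  have hNigusa : igusaN1 p d f = N := by
    rw [igusaN1, Nat.card_eq_fintype_card, Fintype.card_subtype]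
  set L : ℕ → Set (Fin d → ℤ_[p]) := fun m => {z | ‖eval z f‖ ≤ (p:ℝ)^(-(m:ℤ))} with hLdef
  set E : ℕ → Set (Fin d → ℤ_[p]) := fun m => L m \ L (m+1) with hEdef
  have hLmeas : ∀ m, MeasurableSet (L m) := measurableSet_lev f
  have hEmeas : ∀ m, MeasurableSet (E m) := fun m => (hLmeas m).diff (hLmeas (m+1))
  have hLmono : ∀ m, L (m+1) ⊆ L m := by
    intro m z hz
    exact (norm_le_iff_dvd _ _).2 ((pow_dvd_pow _ (by omega)).trans ((norm_le_iff_dvd _ _).1 hz))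
  have hL0 : L 0 = Set.univ := by
    ext z
    simp only [hLdef, Set.mem_setOf_eq, Set.mem_univ, iff_true, Nat.cast_zero, neg_zero,
      zpow_zero]
    exact PadicInt.norm_le_one _
  have hLvol : ∀ m : ℕ, μ (L (m+1)) = (N:ℝ≥0∞) * (((p:ℝ≥0∞)^d)⁻¹ * ((p:ℝ≥0∞)^m)⁻¹) := by
    intro m
    exact measure_level μ hμ hd f hsm m
  -- coefficient function
  set c : ℕ → ℂ := fun m => (((p:ℝ)^(-(m:ℤ)) : ℝ) : ℂ)^s with hcdef
  set q : ℂ := (p:ℂ)^(-1-s) with hqdef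
  -- norms on E m
  have hdecr : ∀ m : ℕ, (p:ℝ)^(-((m+1:ℕ):ℤ)) < (p:ℝ)^(-(m:ℤ)) := by
    intro m
    apply zpow_lt_zpow_right₀ hπ1
    omega
  have hEnorm : ∀ m z, z ∈ E m → ‖eval z f‖ = (p:ℝ)^(-(m:ℤ)) := by
    intro m z hz
    refine le_antisymm hz.1 ?_
    by_contra hlt
    push_neg at hlt
    have h2 : ‖eval z f‖ ≤ (p:ℝ)^(-(m:ℤ) - 1) :=
      (PadicInt.norm_lt_pow_iff_norm_le_pow_sub_one _ _).1 hlt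
    exact hz.2 (by
      show ‖eval z f‖ ≤ (p:ℝ)^(-((m+1:ℕ):ℤ))
      convert h2 using 2
      push_cast
      ring)
  -- pointwise expansion of the integrand
  have hpoint : ∀ z : Fin d → ℤ_[p],
      (‖eval z f‖ : ℂ)^s = ∑' m, Set.indicator (E m) (fun _ => c m) z := by
    intro z
    by_cases hz : eval z f = 0
    · have hL : ∀ m, z ∈ L m := by
        intro m
        show ‖eval z f‖ ≤ _
        rw [hz, norm_zero]
        positivity
      have : ∀ m, Set.indicator (E m) (fun _ => c m) z = 0 := fun m =>
        Set.indicator_of_notMem (fun hmem => hmem.2 (hL (m+1))) _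
      rw [tsum_congr this, tsum_zero, hz]
      simp [Complex.zero_cpow hs0]
    · set v : ℕ := (eval z f).valuation with hv
      have hnormv : ‖eval z f‖ = (p:ℝ)^(-(v:ℤ)) := by
        rw [PadicInt.norm_eq_zpow_neg_valuation hz]
      have hzv : z ∈ E v := by
        constructor
        · exact le_of_eq hnormv
        · intro hmem
          have h5 : (p:ℝ)^(-(v:ℤ)) ≤ (p:ℝ)^(-((v+1:ℕ):ℤ)) := by
            rw [← hnormv]; exact hmem
          exact absurd (lt_of_le_of_lt h5 (hdecr v)) (lt_irrefl _)
      rw [tsum_eq_single v ?_]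
      · rw [Set.indicator_of_mem hzv, hcdef, hnormv]
      · intro m hm
        refine Set.indicator_of_notMem (fun hmem => hm ?_) _
        have h1 := hEnorm m z hmem
        have h2 := hEnorm v z hzv
        have h3 : (p:ℝ)^(-(m:ℤ)) = (p:ℝ)^(-(v:ℤ)) := by rw [← h1, h2]
        have h4 : -(m:ℤ) = -(v:ℤ) := zpow_right_injective₀ hπpos (ne_of_gt hπ1) h3
        omega
  -- summability bound
  set r : ℝ := (p:ℝ) ^ (-s.re) with hr
  have hrpos : 0 ≤ r := le_of_lt (Real.rpow_pos_of_pos hπpos _)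
  have hrlt : r < 1 := Real.rpow_lt_one_of_one_lt_of_neg hπ1 (by linarith)
  have hcnorm : ∀ m : ℕ, ‖c m‖ = r ^ m := by
    intro m
    rw [hcdef]
    rw [Complex.norm_cpow_eq_rpow_re_of_pos (by positivity)]
    rw [← Real.rpow_intCast (p:ℝ) (-(m:ℤ)), ← Real.rpow_natCast r m, hr,
      ← Real.rpow_mul (le_of_lt hπpos), ← Real.rpow_mul (le_of_lt hπpos)]
    congr 1
    push_cast
    ring
  have hintm : ∀ m : ℕ, ∫⁻ z, ‖Set.indicator (E m) (fun _ => c m) z‖₊ ∂μ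
      = (‖c m‖₊ : ℝ≥0∞) * μ (E m) := by
    intro m
    simp only [nnnorm_indicator_eq_indicator_nnnorm]
    rw [← lintegral_indicator_const (hEmeas m) (‖c m‖₊ : ℝ≥0∞)]
    congr 1
    funext z
    by_cases hz : z ∈ E m
    · simp [hz]
    · simp [hz]
  have hne_top : ∑' m, ∫⁻ z, ‖Set.indicator (E m) (fun _ => c m) z‖₊ ∂μ ≠ ⊤ := by
    have hle : ∀ m : ℕ, ∫⁻ z, ‖Set.indicator (E m) (fun _ => c m) z‖₊ ∂μ
        ≤ (ENNReal.ofReal r) ^ m := by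
      intro m
      rw [hintm m]
      have h1 : μ (E m) ≤ 1 := by
        rw [← hμ]; exact measure_mono (Set.subset_univ _)
      calc (‖c m‖₊ : ℝ≥0∞) * μ (E m) ≤ (‖c m‖₊ : ℝ≥0∞) * 1 := by
            gcongr
        _ = ENNReal.ofReal (r ^ m) := by
            rw [mul_one, ← hcnorm m, ofReal_norm]; rfl
        _ = (ENNReal.ofReal r) ^ m := by
            rw [ENNReal.ofReal_pow hrpos]
    refine ne_top_of_le_ne_top ?_ (ENNReal.tsum_le_tsum hle)
    rw [ENNReal.tsum_geometric]
    exact ENNReal.inv_ne_top.2 (tsub_pos_of_lt (ENNReal.ofReal_lt_one.2 hrlt)).ne'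
  -- continue
  have hc_eq : ∀ m : ℕ, c m = (((p:ℝ)^(-(m:ℤ)) : ℝ) : ℂ)^s := fun m => rfl
  -- apply integral_tsum
  have hint : ∫ z, (‖eval z f‖ : ℂ)^s ∂μ
      = ∑' m, ((μ (E m)).toReal • c m) := by
    calc ∫ z, (‖eval z f‖ : ℂ)^s ∂μ
        = ∫ z, ∑' m, Set.indicator (E m) (fun _ => c m) z ∂μ :=
          integral_congr_ae (Filter.Eventually.of_forall hpoint)
      _ = ∑' m, ∫ z, Set.indicator (E m) (fun _ => c m) z ∂μ :=
          integral_tsum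
            (fun m => ((measurable_const.indicator (hEmeas m)).aestronglyMeasurable)) hne_top
      _ = ∑' m, ((μ (E m)).toReal • c m) := by
          refine tsum_congr fun m => ?_
          rw [integral_indicator_const (c m) (hEmeas m), measureReal_def]
  -- toReal of measures
  have hEfin : ∀ m, μ (L m) ≠ ⊤ := fun m => measure_ne_top μ _
  have hLreal : ∀ m : ℕ, (μ (L (m+1))).toReal = (N:ℝ) * (((p:ℝ)^d)⁻¹ * ((p:ℝ)^m)⁻¹) := by
    intro m
    rw [hLvol m]
    rw [ENNReal.toReal_mul, ENNReal.toReal_mul, ENNReal.toReal_inv, ENNReal.toReal_inv,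
      ENNReal.toReal_pow, ENNReal.toReal_pow, ENNReal.toReal_natCast, ENNReal.toReal_natCast]
  have hL0vol : μ (L 0) = 1 := by rw [hL0, hμ]
  have hE0real : (μ (E 0)).toReal = 1 - (N:ℝ) * ((p:ℝ)^d)⁻¹ := by
    simp only [hEdef]
    rw [measure_diff (hLmono 0) (hLmeas 1).nullMeasurableSet (hEfin 1),
      ENNReal.toReal_sub_of_le (measure_mono (hLmono 0)) (hEfin 0), hL0vol,
      ENNReal.toReal_one]
    rw [show (0+1 : ℕ) = 1 from rfl] at *
    rw [hLreal 0]
    norm_num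
  have hEmreal : ∀ k : ℕ, (μ (E (k+1))).toReal
      = (N:ℝ) * ((p:ℝ)^d)⁻¹ * (((p:ℝ)^k)⁻¹ - ((p:ℝ)^(k+1))⁻¹) := by
    intro k
    simp only [hEdef]
    rw [measure_diff (hLmono (k+1)) (hLmeas (k+2)).nullMeasurableSet (hEfin (k+2)),
      ENNReal.toReal_sub_of_le (measure_mono (hLmono (k+1))) (hEfin (k+1)),
      hLreal k, hLreal (k+1)]
    ring
  -- cpow identities
  have hargp : ((p:ℂ)).arg ≠ Real.pi := by
    rw [show ((p:ℂ)) = ((p:ℕ):ℂ) from rfl, Complex.natCast_arg]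
    exact Ne.symm Real.pi_ne_zero
  have hinvs : (((p:ℝ)⁻¹ : ℝ) : ℂ)^s = (p:ℂ)^(-s) := by
    rw [Complex.ofReal_inv, Complex.ofReal_natCast]
    rw [Complex.inv_cpow _ _ hargp, ← Complex.cpow_neg]
  have hcm : ∀ m : ℕ, (((p:ℝ)^(-(m:ℤ)) : ℝ) : ℂ)^s = ((p:ℂ)^(-s))^m := by
    intro m
    induction m with
    | zero => simp
    | succ m ih =>
        have hsplit : (p:ℝ)^(-((m+1:ℕ):ℤ)) = (p:ℝ)^(-(m:ℤ)) * (p:ℝ)⁻¹ := by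
          rw [← zpow_neg_one, ← zpow_add₀ hπne]
          congr 1
          push_cast; ring
        rw [hsplit, Complex.ofReal_mul,
          Complex.mul_cpow_ofReal_nonneg (by positivity) (by positivity)]
        rw [pow_succ, ih, hinvs]
  have hq_split : q = (p:ℂ)⁻¹ * (p:ℂ)^(-s) := by
    rw [hqdef, show (-1 - s : ℂ) = (-1) + (-s) by ring, Complex.cpow_add _ _ hpCne,
      Complex.cpow_neg_one]
  have hqnorm : ‖q‖ < 1 := by
    rw [hqdef]
    rw [show ((p:ℂ)) = (((p:ℝ)):ℂ) by push_cast; rfl]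
    rw [Complex.norm_cpow_eq_rpow_re_of_pos hπpos]
    apply Real.rpow_lt_one_of_one_lt_of_neg hπ1
    simp only [Complex.sub_re, Complex.neg_re, Complex.one_re]
    linarith
  set A : ℂ := (N:ℂ) * ((p:ℂ)^(d:ℕ))⁻¹ with hA
  have hqpow : ∀ m : ℕ, ((p:ℂ)^m)⁻¹ * c m = q^m := by
    intro m
    rw [hc_eq m, hcm m, hq_split, mul_pow, inv_pow]
  set G : ℕ → ℂ := fun m => if m = 0 then 1 - A else A * ((p:ℂ) - 1) * q^m with hG
  have hterm : ∀ m, (μ (E m)).toReal • c m = G m := by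
    intro m
    cases m with
    | zero =>
        have hc0 : c 0 = 1 := by
          rw [hc_eq 0]
          simp
        have hG0' : G 0 = 1 - A := by simp [hG]
        rw [hc0, Complex.real_smul, mul_one, hE0real, hG0', hA]
        push_cast
        ring
    | succ k =>
        have hGk : G (k+1) = A * ((p:ℂ) - 1) * q^(k+1) := by
          simp [hG]
        rw [hGk, Complex.real_smul, hEmreal k]
        have hfac : ((p:ℝ)^k)⁻¹ - ((p:ℝ)^(k+1))⁻¹ = ((p:ℝ)^(k+1))⁻¹ * ((p:ℝ) - 1) := by
          have h1 : ((p:ℝ)^k) ≠ 0 := by positivity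
          have h2 : ((p:ℝ)^(k+1)) ≠ 0 := by positivity
          field_simp
          ring
        rw [hfac, ← hqpow (k+1)]
        push_cast
        rw [hA]
        ring
  have hshift : (fun m : ℕ => G (m+1)) = fun m => (A * ((p:ℂ)-1) * q) * q^m := by
    funext m
    have : G (m+1) = A * ((p:ℂ) - 1) * q^(m+1) := by simp [hG]
    rw [this, pow_succ]
    ring
  have hsummable1 : Summable (fun m : ℕ => G (m+1)) := by
    rw [hshift]
    exact (summable_geometric_of_norm_lt_one hqnorm).mul_left _
  have hsumG : Summable G := (summable_nat_add_iff 1).1 hsummable1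
  have hG0 : G 0 = 1 - A := by simp [hG]
  have htsum : ∑' m, G m = (1 - A) + A * ((p:ℂ)-1) * (q / (1 - q)) := by
    rw [hsumG.tsum_eq_zero_add, hG0, hshift, tsum_mul_left,
      tsum_geometric_of_norm_lt_one hqnorm, div_eq_mul_inv]
    ring
  rw [hint, tsum_congr hterm, htsum]
  have hPd : (p:ℂ)^(-(d:ℂ)) = ((p:ℂ)^(d:ℕ))⁻¹ := by
    rw [Complex.cpow_neg]
    congr 1
    rw [show ((d:ℂ)) = ((d:ℕ):ℂ) from rfl, Complex.cpow_natCast]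
  rw [hNigusa, hPd, hA]
  ring
end

section
/- (Explicit Igusa Poincaré series of the cusp.) Let p be a prime with p ≠ 3, and for each integer m ≥ 1 let N_m = #{(x,y) ∈ (ℤ/p^mℤ)² : y² = x³}. Then in the formal power series ring ℚ[[t]] one has the identity (1 − p t)(1 − p⁷ t⁶) · ∑_{m≥1} N_m t^m = p t + p(p−1) t² + (p−1) p⁶ t⁶ − p⁸ t⁷. -/
open PowerSeries

namespace IgusaCuspAux


lemma zmod_eq_iff_dvd (n : ℕ) [NeZero n] (x y : ZMod n) :
    y ^ 2 = x ^ 3 ↔ (n : ℤ) ∣ (y.val : ℤ) ^ 2 - (x.val : ℤ) ^ 3 := by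
  rw [← ZMod.intCast_zmod_eq_zero_iff_dvd, ← sub_eq_zero (a := y ^ 2)]
  push_cast [ZMod.natCast_val, ZMod.cast_id]
  rfl

variable {p : ℕ} (hp : p.Prime) {x y : ℤ}
include hp

lemma pcancel {k : ℕ} {a : ℤ} (h : (p:ℤ)^(k+1) ∣ (p:ℤ)^k * a) : (p:ℤ) ∣ a := by
  rw [pow_succ] at h
  exact (mul_dvd_mul_iff_left (pow_ne_zero k (by exact_mod_cast hp.ne_zero))).mp h

lemma psq {a : ℤ} (h : (p:ℤ) ∣ a ^ 2) : (p:ℤ) ∣ a :=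
  (Nat.prime_iff_prime_int.mp hp).dvd_of_dvd_pow h

lemma pcb {a : ℤ} (h : (p:ℤ) ∣ a ^ 3) : (p:ℤ) ∣ a :=
  (Nat.prime_iff_prime_int.mp hp).dvd_of_dvd_pow h

lemma casc1 {m : ℕ} (hm : 1 ≤ m) (h : (p:ℤ)^m ∣ y^2 - x^3) (hx : (p:ℤ) ∣ x) : (p:ℤ) ∣ y := by
  have h1 : (p:ℤ) ∣ y^2 - x^3 := (dvd_pow_self (p:ℤ) (by omega : m ≠ 0)).trans h
  exact psq hp (by have := dvd_add h1 (hx.pow (by norm_num : (3:ℕ) ≠ 0)); simpa using this)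

lemma casc2 {m : ℕ} (hm : 3 ≤ m) (h : (p:ℤ)^m ∣ y^2 - x^3) (hx : (p:ℤ) ∣ x) : (p:ℤ)^2 ∣ y := by
  obtain ⟨X, rfl⟩ := hx
  obtain ⟨Y, rfl⟩ := casc1 hp (by omega) h (dvd_mul_right _ _)
  have h4 : (p:ℤ)^(2+1) ∣ (p:ℤ)^2 * (Y^2 - p*X^3) := by
    refine dvd_trans (pow_dvd_pow _ hm) (?_ : (p:ℤ)^m ∣ _); convert h using 1; ring
  obtain ⟨Z, rfl⟩ := psq hp (by have := dvd_add (pcancel hp h4) (Dvd.intro (X^3) rfl); simpa using this)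
  exact ⟨Z, by ring⟩

lemma casc3 {m : ℕ} (hm : 4 ≤ m) (h : (p:ℤ)^m ∣ y^2 - x^3) (hx : (p:ℤ) ∣ x) : (p:ℤ)^2 ∣ x := by
  obtain ⟨Y, rfl⟩ := casc2 hp (by omega) h hx
  obtain ⟨X, rfl⟩ := hx
  have h4 : (p:ℤ)^(3+1) ∣ (p:ℤ)^3 * (p*Y^2 - X^3) := by
    refine dvd_trans (pow_dvd_pow _ hm) (?_ : (p:ℤ)^m ∣ _); convert h using 1; ring
  obtain ⟨Z, rfl⟩ := pcb hp (by have := dvd_sub (Dvd.intro (Y^2) rfl) (pcancel hp h4); simpa using this)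
  exact ⟨Z, by ring⟩

lemma casc4 {m : ℕ} (hm : 5 ≤ m) (h : (p:ℤ)^m ∣ y^2 - x^3) (hx : (p:ℤ) ∣ x) : (p:ℤ)^3 ∣ y := by
  obtain ⟨Y, rfl⟩ := casc2 hp (by omega) h hx
  obtain ⟨X, rfl⟩ := casc3 hp (by omega) h hx
  have h4 : (p:ℤ)^(4+1) ∣ (p:ℤ)^4 * (Y^2 - p^2*X^3) := by
    refine dvd_trans (pow_dvd_pow _ hm) (?_ : (p:ℤ)^m ∣ _); convert h using 1; ring
  have hxx : (p:ℤ) ∣ (p:ℤ)^2*X^3 := ⟨p*X^3, by ring⟩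
  obtain ⟨Z, rfl⟩ := psq hp (by have := dvd_add (pcancel hp h4) hxx; simpa using this)
  exact ⟨Z, by ring⟩

lemma card_unit_sols (n : ℕ) [NeZero n] :
    Nat.card {s : {xy : ZMod n × ZMod n // xy.2 ^ 2 = xy.1 ^ 3} // IsUnit s.1.1} =
      Nat.card (ZMod n)ˣ := by
  refine (Nat.card_eq_of_bijective
    (fun u : (ZMod n)ˣ => ⟨⟨(↑(u^2), ↑(u^3)), by push_cast; ring⟩, ⟨u^2, rfl⟩⟩) ⟨?_, ?_⟩).symm
  · intro u v h
    simp only [Subtype.mk.injEq, Prod.mk.injEq] at h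
    have h2 : u^2 = v^2 := Units.ext (congrArg (fun s => s.1.1.1) h)
    have h3 : u^3 = v^3 := Units.ext (congrArg (fun s => s.1.1.2) h)
    calc u = u^3 * (u^2)⁻¹ := by group
    _ = v^3 * (v^2)⁻¹ := by rw [h2, h3]
    _ = v := by group
  · rintro ⟨⟨⟨x, y⟩, hxy⟩, hx⟩
    simp only at hx hxy
    have hy : IsUnit y := (isUnit_pow_iff two_ne_zero).mp (by rw [hxy]; exact hx.pow 3)
    obtain ⟨ux, rfl⟩ := hx
    obtain ⟨uy, rfl⟩ := hy
    have h2 : uy^2 = ux^3 := Units.ext (by push_cast; exact hxy)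
    refine ⟨uy * ux⁻¹, ?_⟩
    have e2 : (uy * ux⁻¹)^2 = ux := by rw [mul_pow, h2]; group
    have e3 : (uy * ux⁻¹)^3 = uy := by
      have : (uy * ux⁻¹)^3 = uy * uy^2 * (ux⁻¹)^3 := by
        rw [mul_pow, pow_succ, mul_comm (uy^2) uy]
      rw [this, h2]; group
    simp [e2, e3]

lemma nonunit_iff {m : ℕ} (hm : 1 ≤ m) (x : ZMod (p^m)) :
    haveI : NeZero (p^m) := ⟨pow_ne_zero _ hp.ne_zero⟩
    ¬ IsUnit x ↔ p ∣ x.val := by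
  haveI : NeZero (p^m) := ⟨pow_ne_zero _ hp.ne_zero⟩
  have hx : (x.val : ZMod (p^m)) = x := by simp [ZMod.natCast_val, ZMod.cast_id]
  have h2 := ZMod.isUnit_iff_coprime x.val (p^m)
  rw [hx] at h2
  rw [h2, Nat.coprime_pow_right_iff (by omega),
    Nat.coprime_comm, hp.coprime_iff_not_dvd, not_not]

lemma small_count {m a b : ℕ} (ha1 : 1 ≤ a) (ham : a ≤ m) (hbm : b ≤ m)
    (h3a : m ≤ 3*a) (h2b : m ≤ 2*b)
    (H : ∀ x y : ℤ, (p:ℤ)^m ∣ y^2 - x^3 → (p:ℤ) ∣ x → (p:ℤ)^a ∣ x ∧ (p:ℤ)^b ∣ y) :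
    Nat.card {s : {xy : ZMod (p^m) × ZMod (p^m) // xy.2 ^ 2 = xy.1 ^ 3} // ¬ IsUnit s.1.1}
      = p^(m-a) * p^(m-b) := by
  haveI : NeZero (p^m) := ⟨pow_ne_zero _ hp.ne_zero⟩
  haveI : NeZero (p^(m-a)) := ⟨pow_ne_zero _ hp.ne_zero⟩
  haveI : NeZero (p^(m-b)) := ⟨pow_ne_zero _ hp.ne_zero⟩
  have hm : 1 ≤ m := le_trans ha1 ham
  have hzero : ∀ c k : ℕ, m ≤ c * k → ∀ v : ℕ, ((p^k * v : ℕ) : ZMod (p^m))^c = 0 := by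
    intro c k hck v
    rw [← Nat.cast_pow, ZMod.natCast_eq_zero_iff]
    calc p^m ∣ p^(c*k) := pow_dvd_pow _ hck
    _ ∣ (p^k * v)^c := ⟨v^c, by rw [mul_pow, ← pow_mul, Nat.mul_comm c k]⟩
  have hnu : ∀ k v : ℕ, 1 ≤ k → ¬ IsUnit ((p^k * v : ℕ) : ZMod (p^m)) := by
    intro k v hk
    rw [nonunit_iff hp hm, ZMod.val_natCast,
      Nat.dvd_mod_iff (dvd_pow_self p (by omega : m ≠ 0))]
    exact Dvd.dvd.mul_right (dvd_pow_self p (by omega : k ≠ 0)) v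
  have key : ∀ k v : ZMod (p^m), ∀ j : ℕ, j ≤ m →
      ((p^j * v.val : ℕ) : ZMod (p^m)) = ((p^j * k.val : ℕ) : ZMod (p^m)) → True := fun _ _ _ _ _ => trivial
  rw [show p^(m-a) * p^(m-b) = Nat.card (ZMod (p^(m-a)) × ZMod (p^(m-b))) by
    rw [Nat.card_prod, Nat.card_zmod, Nat.card_zmod]]
  refine (Nat.card_eq_of_bijective
    (fun st : ZMod (p^(m-a)) × ZMod (p^(m-b)) =>
      (⟨⟨⟨((p^a * st.1.val : ℕ) : ZMod (p^m)), ((p^b * st.2.val : ℕ) : ZMod (p^m))⟩,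
        by rw [hzero 2 b h2b, hzero 3 a h3a]⟩, hnu a _ ha1⟩ :
        {s : {xy : ZMod (p^m) × ZMod (p^m) // xy.2 ^ 2 = xy.1 ^ 3} // ¬ IsUnit s.1.1}))
    ⟨?_, ?_⟩).symm
  · -- injectivity
    have cancel : ∀ (c : ℕ) (hc : c ≤ m) (u v : ZMod (p^(m-c))),
        ((p^c * u.val : ℕ) : ZMod (p^m)) = ((p^c * v.val : ℕ) : ZMod (p^m)) → u = v := by
      intro c hc u v huv
      haveI : NeZero (p^(m-c)) := ⟨pow_ne_zero _ hp.ne_zero⟩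
      rw [ZMod.natCast_eq_natCast_iff'] at huv
      have hu : p^c * u.val < p^m := by
        calc p^c * u.val < p^c * p^(m-c) := by
              exact (Nat.mul_lt_mul_left (pow_pos hp.pos c)).mpr (ZMod.val_lt u)
        _ = p^m := by rw [← pow_add]; congr 1; omega
      have hv : p^c * v.val < p^m := by
        calc p^c * v.val < p^c * p^(m-c) := by
              exact (Nat.mul_lt_mul_left (pow_pos hp.pos c)).mpr (ZMod.val_lt v)
        _ = p^m := by rw [← pow_add]; congr 1; omega
      rw [Nat.mod_eq_of_lt hu, Nat.mod_eq_of_lt hv] at huv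
      exact ZMod.val_injective _ (Nat.eq_of_mul_eq_mul_left (pow_pos hp.pos c) huv)
    rintro ⟨s, t⟩ ⟨s', t'⟩ h
    simp only [Subtype.mk.injEq, Prod.mk.injEq] at h
    exact Prod.ext (cancel a ham s s' h.1) (cancel b hbm t t' h.2)
  · -- surjectivity
    rintro ⟨⟨⟨x, y⟩, hxy⟩, hnux⟩
    simp only at hxy hnux
    have hpx : p ∣ x.val := (nonunit_iff hp hm x).mp hnux
    have hdvd : (p:ℤ)^m ∣ (y.val : ℤ)^2 - (x.val : ℤ)^3 := by
      have := (zmod_eq_iff_dvd _ x y).mp hxy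
      exact_mod_cast this
    obtain ⟨hax, hby⟩ := H x.val y.val hdvd (by exact_mod_cast Int.natCast_dvd_natCast.mpr hpx)
    obtain ⟨X, hX⟩ : p^a ∣ x.val := by exact_mod_cast hax
    obtain ⟨Y, hY⟩ : p^b ∣ y.val := by exact_mod_cast hby
    have hXlt : X < p^(m-a) := by
      have : p^a * X < p^a * p^(m-a) := by
        rw [← pow_add, ← hX]
        convert ZMod.val_lt x using 2
        omega
      exact lt_of_mul_lt_mul_left this (Nat.zero_le _)
    have hYlt : Y < p^(m-b) := by
      have : p^b * Y < p^b * p^(m-b) := by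
        rw [← pow_add, ← hY]
        convert ZMod.val_lt y using 2
        omega
      exact lt_of_mul_lt_mul_left this (Nat.zero_le _)
    refine ⟨⟨(X : ZMod (p^(m-a))), (Y : ZMod (p^(m-b)))⟩, ?_⟩
    apply Subtype.ext
    apply Subtype.ext
    apply Prod.ext
    · show ((p^a * (X : ZMod (p^(m-a))).val : ℕ) : ZMod (p^m)) = x
      rw [ZMod.val_cast_of_lt hXlt, ← hX]
      simp [ZMod.natCast_val, ZMod.cast_id]
    · show ((p^b * (Y : ZMod (p^(m-b))).val : ℕ) : ZMod (p^m)) = y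
      rw [ZMod.val_cast_of_lt hYlt, ← hY]
      simp [ZMod.natCast_val, ZMod.cast_id]

lemma big_count {m : ℕ} (hm : 6 ≤ m) :
    Nat.card {s : {xy : ZMod (p^m) × ZMod (p^m) // xy.2 ^ 2 = xy.1 ^ 3} // ¬ IsUnit s.1.1}
      = Nat.card {xy : ZMod (p^(m-6)) × ZMod (p^(m-6)) // xy.2 ^ 2 = xy.1 ^ 3} * p^7 := by
  haveI : NeZero (p^m) := ⟨pow_ne_zero _ hp.ne_zero⟩
  haveI : NeZero (p^(m-6)) := ⟨pow_ne_zero _ hp.ne_zero⟩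
  haveI : NeZero (p^4) := ⟨pow_ne_zero _ hp.ne_zero⟩
  haveI : NeZero (p^3) := ⟨pow_ne_zero _ hp.ne_zero⟩
  have hm1 : 1 ≤ m := by omega
  set n := p^(m-6) with hn
  have hnu : ∀ k v : ℕ, 1 ≤ k → ¬ IsUnit ((p^k * v : ℕ) : ZMod (p^m)) := by
    intro k v hk
    rw [nonunit_iff hp hm1, ZMod.val_natCast,
      Nat.dvd_mod_iff (dvd_pow_self p (by omega : m ≠ 0))]
    exact Dvd.dvd.mul_right (dvd_pow_self p (by omega : k ≠ 0)) v
  have hp6n : (p:ℤ)^m = (p:ℤ)^6 * (n:ℤ) := by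
    rw [hn]; push_cast; rw [← pow_add]; congr 1; omega
  -- the equation condition for images
  have heq : ∀ (a b : ZMod n) (s : ZMod (p^4)) (t : ZMod (p^3)), b^2 = a^3 →
      (((p^3 * (b.val + n * t.val) : ℕ) : ZMod (p^m)))^2
        = (((p^2 * (a.val + n * s.val) : ℕ) : ZMod (p^m)))^3 := by
    intro a b s t hab
    have hd : (n:ℤ) ∣ (b.val:ℤ)^2 - (a.val:ℤ)^3 := (zmod_eq_iff_dvd n a b).mp hab
    have hd2 : (n:ℤ) ∣ ((b.val:ℤ) + n*t.val)^2 - ((a.val:ℤ) + n*s.val)^3 := by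
      have : ((b.val:ℤ) + n*t.val)^2 - ((a.val:ℤ) + n*s.val)^3
          = ((b.val:ℤ)^2 - (a.val:ℤ)^3)
            + n * (2*b.val*t.val + n*t.val^2 - 3*(a.val:ℤ)^2*s.val
              - 3*a.val*n*s.val^2 - n^2*s.val^3) := by ring
      rw [this]
      exact dvd_add hd ⟨_, rfl⟩
    rw [← sub_eq_zero]
    have : ((((p^3 * (b.val + n * t.val) : ℕ) : ZMod (p^m)))^2
        - (((p^2 * (a.val + n * s.val) : ℕ) : ZMod (p^m)))^3)
        = ((((p:ℤ)^3 * (b.val + n * t.val))^2 - ((p:ℤ)^2 * (a.val + n * s.val))^3 : ℤ)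
            : ZMod (p^m)) := by push_cast; ring
    rw [this, ZMod.intCast_zmod_eq_zero_iff_dvd]
    have : ((p:ℤ)^3 * (b.val + n * t.val))^2 - ((p:ℤ)^2 * (a.val + n * s.val))^3
        = (p:ℤ)^6 * (((b.val:ℤ) + n*t.val)^2 - ((a.val:ℤ) + n*s.val)^3) := by ring
    rw [this]
    push_cast
    rw [hp6n]
    exact mul_dvd_mul_left _ hd2
  refine (Nat.card_eq_of_bijective
    (fun w : {xy : ZMod n × ZMod n // xy.2 ^ 2 = xy.1 ^ 3} × (ZMod (p^4) × ZMod (p^3)) =>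
      (⟨⟨⟨((p^2 * (w.1.1.1.val + n * w.2.1.val) : ℕ) : ZMod (p^m)),
          ((p^3 * (w.1.1.2.val + n * w.2.2.val) : ℕ) : ZMod (p^m))⟩,
        heq _ _ _ _ w.1.2⟩, hnu 2 _ (by norm_num)⟩ :
        {s : {xy : ZMod (p^m) × ZMod (p^m) // xy.2 ^ 2 = xy.1 ^ 3} // ¬ IsUnit s.1.1}))
    ⟨?_, ?_⟩).symm.trans
    (by rw [Nat.card_prod, Nat.card_prod, Nat.card_zmod, Nat.card_zmod, ← pow_add])
  · -- injectivity
    have npos : 0 < n := pow_pos hp.pos _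
    have cancel : ∀ (c e : ℕ), c + e = m - 6 + (m - 6) → c ≤ m → False ∨ True := fun _ _ _ _ => Or.inr trivial
    have key : ∀ (c e : ℕ) (hce : c + (m - 6) + e = m) (u v : ZMod n) (s' t' : ZMod (p^e)),
        ((p^c * (u.val + n * s'.val) : ℕ) : ZMod (p^m)) = ((p^c * (v.val + n * t'.val) : ℕ) : ZMod (p^m))
        → u = v ∧ s' = t' := by
      intro c e hce u v s' t' h
      haveI : NeZero (p^e) := ⟨pow_ne_zero _ hp.ne_zero⟩
      rw [ZMod.natCast_eq_natCast_iff'] at h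
      have hbound : ∀ (w : ZMod n) (r : ZMod (p^e)), p^c * (w.val + n * r.val) < p^m := by
        intro w r
        have h1 : w.val + n * r.val < n * p^e := by
          have := ZMod.val_lt w
          have := ZMod.val_lt r
          calc w.val + n * r.val < n + n * r.val := by omega
          _ = n * (r.val + 1) := by ring
          _ ≤ n * p^e := Nat.mul_le_mul_left n (by omega)
        calc p^c * (w.val + n * r.val) < p^c * (n * p^e) := by
              exact (Nat.mul_lt_mul_left (pow_pos hp.pos c)).mpr h1
        _ = p^m := by rw [hn, ← pow_add, ← pow_add]; congr 1; omega
      rw [Nat.mod_eq_of_lt (hbound u s'), Nat.mod_eq_of_lt (hbound v t')] at h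
      have h2 : u.val + n * s'.val = v.val + n * t'.val :=
        Nat.eq_of_mul_eq_mul_left (pow_pos hp.pos c) h
      have hu : u.val = v.val := by
        have e1 : (u.val + n * s'.val) % n = u.val := by
          rw [Nat.add_mul_mod_self_left, Nat.mod_eq_of_lt (ZMod.val_lt u)]
        have e2 : (v.val + n * t'.val) % n = v.val := by
          rw [Nat.add_mul_mod_self_left, Nat.mod_eq_of_lt (ZMod.val_lt v)]
        rw [← e1, ← e2, h2]
      have hs : s'.val = t'.val := by
        have e1 : (u.val + n * s'.val) / n = s'.val := by
          rw [Nat.add_mul_div_left _ _ npos, Nat.div_eq_of_lt (ZMod.val_lt u), Nat.zero_add]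
        have e2 : (v.val + n * t'.val) / n = t'.val := by
          rw [Nat.add_mul_div_left _ _ npos, Nat.div_eq_of_lt (ZMod.val_lt v), Nat.zero_add]
        rw [← e1, ← e2, h2]
      exact ⟨ZMod.val_injective _ hu, ZMod.val_injective _ hs⟩
    rintro ⟨⟨⟨a, b⟩, hab⟩, s, t⟩ ⟨⟨⟨a', b'⟩, hab'⟩, s', t'⟩ h
    simp only [Subtype.mk.injEq, Prod.mk.injEq] at h
    obtain ⟨h1a, h1s⟩ := key 2 4 (by omega) a a' s s' h.1
    obtain ⟨h1b, h1t⟩ := key 3 3 (by omega) b b' t t' h.2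
    simp [Prod.ext_iff, Subtype.ext_iff, h1a, h1s, h1b, h1t]
  · -- surjectivity
    rintro ⟨⟨⟨x, y⟩, hxy⟩, hnux⟩
    simp only at hxy hnux
    have hpx : p ∣ x.val := (nonunit_iff hp hm1 x).mp hnux
    have hdvd : (p:ℤ)^m ∣ (y.val : ℤ)^2 - (x.val : ℤ)^3 := by
      have := (zmod_eq_iff_dvd _ x y).mp hxy
      exact_mod_cast this
    have hpxZ : (p:ℤ) ∣ (x.val:ℤ) := Int.natCast_dvd_natCast.mpr hpx
    obtain ⟨X, hX⟩ : p^2 ∣ x.val := by exact_mod_cast casc3 hp (by omega) hdvd hpxZ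
    obtain ⟨Y, hY⟩ : p^3 ∣ y.val := by exact_mod_cast casc4 hp (by omega) hdvd hpxZ
    have hXlt : X < n * p^4 := by
      have : p^2 * X < p^2 * (n * p^4) := by
        rw [← hX]
        calc x.val < p^m := ZMod.val_lt x
        _ = p^2 * (n * p^4) := by rw [hn, ← pow_add, ← pow_add]; congr 1; omega
      exact lt_of_mul_lt_mul_left this (Nat.zero_le _)
    have hYlt : Y < n * p^3 := by
      have : p^3 * Y < p^3 * (n * p^3) := by
        rw [← hY]
        calc y.val < p^m := ZMod.val_lt y
        _ = p^3 * (n * p^3) := by rw [hn, ← pow_add, ← pow_add]; congr 1; omega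
      exact lt_of_mul_lt_mul_left this (Nat.zero_le _)
    have hsol : (n:ℤ) ∣ (Y:ℤ)^2 - (X:ℤ)^3 := by
      have h6 : (p:ℤ)^6 * ((Y:ℤ)^2 - (X:ℤ)^3) = (y.val:ℤ)^2 - (x.val:ℤ)^3 := by
        rw [hX, hY]; push_cast; ring
      have := hdvd
      rw [← h6, hp6n] at this
      exact (mul_dvd_mul_iff_left (pow_ne_zero 6 (by exact_mod_cast hp.ne_zero : (p:ℤ) ≠ 0))).mp this
    have hab : ((Y : ZMod n))^2 = ((X : ZMod n))^3 := by
      rw [zmod_eq_iff_dvd]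
      have hXm : ((X : ZMod n)).val = X % n := ZMod.val_natCast n X
      have hYm : ((Y : ZMod n)).val = Y % n := ZMod.val_natCast n Y
      rw [hXm, hYm]
      have mX : ((X % n : ℕ) : ℤ) ≡ (X:ℤ) [ZMOD (n:ℤ)] := by
        push_cast; exact Int.emod_emod_of_dvd _ dvd_rfl
      have mY : ((Y % n : ℕ) : ℤ) ≡ (Y:ℤ) [ZMOD (n:ℤ)] := by
        push_cast; exact Int.emod_emod_of_dvd _ dvd_rfl
      have : ((Y % n : ℕ) : ℤ)^2 - ((X % n : ℕ) : ℤ)^3 ≡ (Y:ℤ)^2 - (X:ℤ)^3 [ZMOD (n:ℤ)] :=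
        (mY.pow 2).sub (mX.pow 3)
      have hA := dvd_sub hsol this.dvd
      simpa using hA
    refine ⟨⟨⟨⟨(X : ZMod n), (Y : ZMod n)⟩, hab⟩, ⟨((X / n : ℕ) : ZMod (p^4)), ((Y / n : ℕ) : ZMod (p^3))⟩⟩, ?_⟩
    have hXd : X / n < p^4 := Nat.div_lt_of_lt_mul hXlt
    have hYd : Y / n < p^3 := Nat.div_lt_of_lt_mul hYlt
    apply Subtype.ext
    apply Subtype.ext
    apply Prod.ext
    · show ((p^2 * ((X : ZMod n).val + n * ((X / n : ℕ) : ZMod (p^4)).val) : ℕ) : ZMod (p^m)) = x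
      rw [ZMod.val_natCast, ZMod.val_cast_of_lt hXd, Nat.mod_add_div, ← hX]
      simp [ZMod.natCast_val, ZMod.cast_id]
    · show ((p^3 * ((Y : ZMod n).val + n * ((Y / n : ℕ) : ZMod (p^3)).val) : ℕ) : ZMod (p^m)) = y
      rw [ZMod.val_natCast, ZMod.val_cast_of_lt hYd, Nat.mod_add_div, ← hY]
      simp [ZMod.natCast_val, ZMod.cast_id]

omit hp in
lemma card_split {α : Type*} [Finite α] (q : α → Prop) :
    Nat.card α = Nat.card {a // q a} + Nat.card {a // ¬ q a} := by
  classical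
  rw [← Nat.card_sum]
  exact Nat.card_congr (Equiv.sumCompl q).symm


def F (p : ℕ) : ℕ → ℕ
  | 0 => 1
  | 1 => p
  | 2 => p * (p-1) + p^2
  | 3 => p^2 * (p-1) + p^3
  | 4 => p^3 * (p-1) + p^4
  | 5 => p^4 * (p-1) + p^5
  | (m+6) => p^(m+5) * (p-1) + p^7 * F p m

lemma card_units_pow {m : ℕ} (hm : 1 ≤ m) :
    Nat.card (ZMod (p^m))ˣ = p^(m-1) * (p-1) := by
  haveI : NeZero (p^m) := ⟨pow_ne_zero _ hp.ne_zero⟩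
  rw [Nat.card_eq_fintype_card, ZMod.card_units_eq_totient, Nat.totient_prime_pow hp (by omega)]

lemma count_small {m a b : ℕ} (ha1 : 1 ≤ a) (ham : a ≤ m) (hbm : b ≤ m)
    (h3a : m ≤ 3*a) (h2b : m ≤ 2*b)
    (H : ∀ x y : ℤ, (p:ℤ)^m ∣ y^2 - x^3 → (p:ℤ) ∣ x → (p:ℤ)^a ∣ x ∧ (p:ℤ)^b ∣ y) :
    Nat.card {xy : ZMod (p^m) × ZMod (p^m) // xy.2 ^ 2 = xy.1 ^ 3}
      = p^(m-1) * (p-1) + p^(m-a) * p^(m-b) := by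
  haveI : NeZero (p^m) := ⟨pow_ne_zero _ hp.ne_zero⟩
  rw [card_split (q := fun s => IsUnit s.1.1), card_unit_sols hp,
    card_units_pow hp (le_trans ha1 ham), small_count hp ha1 ham hbm h3a h2b H]

lemma count_big {m : ℕ} (hm : 6 ≤ m) :
    Nat.card {xy : ZMod (p^m) × ZMod (p^m) // xy.2 ^ 2 = xy.1 ^ 3}
      = p^(m-1) * (p-1)
        + Nat.card {xy : ZMod (p^(m-6)) × ZMod (p^(m-6)) // xy.2 ^ 2 = xy.1 ^ 3} * p^7 := by
  haveI : NeZero (p^m) := ⟨pow_ne_zero _ hp.ne_zero⟩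
  rw [card_split (q := fun s => IsUnit s.1.1), card_unit_sols hp,
    card_units_pow hp (by omega), big_count hp hm]

lemma count (m : ℕ) :
    Nat.card {xy : ZMod (p^m) × ZMod (p^m) // xy.2 ^ 2 = xy.1 ^ 3} = F p m := by
  induction m using Nat.strong_induction_on with
  | _ m ih =>
  have hp1 := hp.one_lt
  obtain _|_|_|_|_|_|m := m
  · haveI : Subsingleton (ZMod (p^0)) := by rw [pow_zero]; infer_instance
    rw [show F p 0 = 1 from rfl, Nat.card_eq_one_iff_unique]
    exact ⟨⟨fun a b => Subtype.ext (Subsingleton.elim _ _)⟩,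
      ⟨⟨(0,0), by exact Subsingleton.elim _ _⟩⟩⟩
  · rw [count_small hp le_rfl le_rfl le_rfl (by omega) (by omega)
      (fun x y h hx => ⟨by simpa using hx, by simpa using casc1 hp le_rfl h hx⟩)]
    simp [F]
    omega
  · rw [count_small hp (a := 1) (b := 1) le_rfl (by omega) (by omega) (by omega) (by omega)
      (fun x y h hx => ⟨by simpa using hx, by simpa using casc1 hp (by omega) h hx⟩)]
    simp [F]
    ring
  · rw [count_small hp (a := 1) (b := 2) le_rfl (by omega) (by omega) (by omega) (by omega)
      (fun x y h hx => ⟨by simpa using hx, casc2 hp le_rfl h hx⟩)]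
    simp [F]
    ring
  · rw [count_small hp (a := 2) (b := 2) (by omega) (by omega) (by omega) (by omega) (by omega)
      (fun x y h hx => ⟨casc3 hp le_rfl h hx, casc2 hp (by omega) h hx⟩)]
    simp [F]
    ring
  · rw [count_small hp (a := 2) (b := 3) (by omega) (by omega) (by omega) (by omega) (by omega)
      (fun x y h hx => ⟨casc3 hp (by omega) h hx, casc4 hp le_rfl h hx⟩)]
    simp [F]
    ring
  · rw [count_big hp (by omega)]
    rw [show m + 1 + 1 + 1 + 1 + 1 + 1 - 6 = m by omega, ih m (by omega)]
    rw [show m + 1 + 1 + 1 + 1 + 1 + 1 = m + 6 by omega]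
    simp [F]
    ring

omit hp in
lemma F_add6 (m : ℕ) : F p (m+6) = p^(m+5) * (p-1) + p^7 * F p m := rfl

open PowerSeries in
theorem cusp_poincare_series' :
    (1 - PowerSeries.C (R := ℚ) (p : ℚ) * PowerSeries.X)
        * (1 - PowerSeries.C (R := ℚ) ((p : ℚ) ^ 7) * PowerSeries.X ^ 6)
        * PowerSeries.mk (fun m => if m = 0 then 0 else
            (Nat.card {xy : ZMod (p ^ m) × ZMod (p ^ m) // xy.2 ^ 2 = xy.1 ^ 3} : ℚ))
      = PowerSeries.C (R := ℚ) (p : ℚ) * PowerSeries.X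
          + PowerSeries.C (R := ℚ) ((p : ℚ) * ((p : ℚ) - 1)) * PowerSeries.X ^ 2
          + PowerSeries.C (R := ℚ) (((p : ℚ) - 1) * (p : ℚ) ^ 6) * PowerSeries.X ^ 6
          - PowerSeries.C (R := ℚ) ((p : ℚ) ^ 8) * PowerSeries.X ^ 7 := by
  have hp1 : (1:ℕ) ≤ p := hp.one_le
  have hmk : (PowerSeries.mk (fun m => if m = 0 then 0 else
      (Nat.card {xy : ZMod (p ^ m) × ZMod (p ^ m) // xy.2 ^ 2 = xy.1 ^ 3} : ℚ)))
      = PowerSeries.mk (fun m => if m = 0 then 0 else (F p m : ℚ)) :=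
    congrArg _ (funext fun m => by rw [count hp])
  rw [hmk]
  set S := PowerSeries.mk (fun m => if m = 0 then 0 else (F p m : ℚ)) with hS
  have hL : (1 - PowerSeries.C (R := ℚ) (p : ℚ) * PowerSeries.X)
        * (1 - PowerSeries.C (R := ℚ) ((p : ℚ) ^ 7) * PowerSeries.X ^ 6) * S
      = S - PowerSeries.C (R := ℚ) (p:ℚ) * (S * PowerSeries.X ^ 1)
          - PowerSeries.C (R := ℚ) ((p:ℚ)^7) * (S * PowerSeries.X ^ 6)
          + PowerSeries.C (R := ℚ) ((p:ℚ)^8) * (S * PowerSeries.X ^ 7) := by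
    have hC : PowerSeries.C (R := ℚ) ((p:ℚ)^8) = PowerSeries.C (R := ℚ) (p:ℚ) * PowerSeries.C (R := ℚ) ((p:ℚ)^7) := by
      rw [← map_mul]
      norm_num
      ring_nf
    rw [hC]
    ring
  rw [hL]
  have hR : (PowerSeries.C (R := ℚ) (p:ℚ)) * PowerSeries.X = PowerSeries.C (R := ℚ) (p:ℚ) * PowerSeries.X ^ 1 := by
    rw [pow_one]
  rw [hR]
  ext n
  simp only [hS, map_add, map_sub, PowerSeries.coeff_C_mul, PowerSeries.coeff_mul_X_pow',
    PowerSeries.coeff_mk, PowerSeries.coeff_X_pow, PowerSeries.coeff_C,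
    PowerSeries.coeff_zero_eq_constantCoeff, PowerSeries.constantCoeff_mk]
  rcases n with _|_|_|_|_|_|_|_|n
  · norm_num
  · norm_num [F]
  · norm_num [F]
    push_cast [Nat.cast_sub hp1]
    ring
  · norm_num [F]
    push_cast [Nat.cast_sub hp1]
    ring
  · norm_num [F]
    push_cast [Nat.cast_sub hp1]
    ring
  · norm_num [F]
    push_cast [Nat.cast_sub hp1]
    ring
  · norm_num [F]
    push_cast [Nat.cast_sub hp1]
    ring
  · norm_num [F, F_add6]
    push_cast [Nat.cast_sub hp1]
    ring
  · have c1 : (1:ℕ) ≤ n+8 := by omega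
    have c6 : (6:ℕ) ≤ n+8 := by omega
    have c7 : (7:ℕ) ≤ n+8 := by omega
    have e1 : n+8-1 = n+7 := by omega
    have e6 : n+8-6 = n+2 := by omega
    have e7 : n+8-7 = n+1 := by omega
    have ne0 : n+8 ≠ 0 := by omega
    have ne1 : n+8 ≠ 1 := by omega
    have ne2 : n+8 ≠ 2 := by omega
    have ne6 : n+8 ≠ 6 := by omega
    have ne7 : n+8 ≠ 7 := by omega
    simp only [if_pos c1, if_pos c6, if_pos c7, e1, e6, e7, if_neg ne0, if_neg ne1,
      if_neg ne2, if_neg ne6, if_neg ne7]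
    norm_num
    rw [show n+8 = (n+2)+6 by omega, show n+7 = (n+1)+6 by omega, F_add6, F_add6]
    push_cast [Nat.cast_sub hp1]
    ring

end IgusaCuspAux

/-- (Explicit Igusa Poincaré series of the cusp `y² = x³`.)
For a prime `p ≠ 3`, with `N_m = #{(x,y) ∈ (ℤ/p^mℤ)² : y² = x³}`, one has
`(1 - pt)(1 - p⁷t⁶) ∑_{m≥1} N_m t^m = pt + p(p-1)t² + (p-1)p⁶t⁶ - p⁸t⁷`
in `ℚ[[t]]`. -/
theorem cusp_poincare_series (p : ℕ) [Fact p.Prime] (hp3 : p ≠ 3) :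
    (1 - PowerSeries.C (R := ℚ) (p : ℚ) * PowerSeries.X)
        * (1 - PowerSeries.C (R := ℚ) ((p : ℚ) ^ 7) * PowerSeries.X ^ 6)
        * PowerSeries.mk (fun m => if m = 0 then 0 else
            (Nat.card {xy : ZMod (p ^ m) × ZMod (p ^ m) // xy.2 ^ 2 = xy.1 ^ 3} : ℚ))
      = PowerSeries.C (R := ℚ) (p : ℚ) * PowerSeries.X
          + PowerSeries.C (R := ℚ) ((p : ℚ) * ((p : ℚ) - 1)) * PowerSeries.X ^ 2
          + PowerSeries.C (R := ℚ) (((p : ℚ) - 1) * (p : ℚ) ^ 6) * PowerSeries.X ^ 6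
          - PowerSeries.C (R := ℚ) ((p : ℚ) ^ 8) * PowerSeries.X ^ 7 :=
  IgusaCuspAux.cusp_poincare_series' Fact.out
end

section
/- (Solvability criterion for a cube equal to a square modulo p^m.) Let p be a prime with p ≠ 3, let m ≥ 1 be an integer, and let a be a nonzero integer. Then there exists an integer y with y³ ≡ a² (mod p^m) if and only if either (1) 2·v_p(a) ≥ m, or (2) 2·v_p(a) < m, 3 divides v_p(a), and the reduced angular component ac_p(a²) = (ac_p(a))² is a cube in F_p, i.e. there exists u ∈ F_p with u³ = ac_p(a)². -/
/-- The reduced angular component `ac_p(a) ∈ F_p` of a nonzero integer `a`: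
the reduction modulo `p` of `a · p^{-v_p(a)}`. -/
def angularComponent (p : ℕ) (a : ℤ) : ZMod p :=
  ((a / (p : ℤ) ^ (padicValInt p a) : ℤ) : ZMod p)

lemma cube_lift (p : ℕ) [hp : Fact p.Prime] (hp3 : p ≠ 3) (k : ℕ) (b : ℤ)
    (hb : ¬ (p : ℤ) ∣ b) (u : ZMod p) (hu : u ^ 3 = (b : ZMod p) ^ 2) :
    ∃ c : ℤ, ((c : ZMod (p ^ k))) ^ 3 = ((b : ZMod (p ^ k))) ^ 2 := by
  have hb0 : (b : ZMod p) ≠ 0 := by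
    rwa [Ne, ZMod.intCast_zmod_eq_zero_iff_dvd]
  have hu0 : u ≠ 0 := by
    intro h
    apply hb0
    have : (b : ZMod p) ^ 2 = 0 := by rw [← hu, h]; ring
    exact pow_eq_zero_iff (by norm_num) |>.mp this
  set c₀ : ℤ := (u.val : ℤ) with hc₀def
  have hc₀ : ((c₀ : ℤ) : ZMod p) = u := by
    simp [hc₀def, ZMod.natCast_val, ZMod.cast_id]
  have hdvd : (p : ℤ) ∣ c₀ ^ 3 - b ^ 2 := by
    rw [← ZMod.intCast_zmod_eq_zero_iff_dvd]
    push_cast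
    rw [hc₀, hu]
    ring
  have hndvd : ¬ (p : ℤ) ∣ c₀ := by
    rw [← ZMod.intCast_zmod_eq_zero_iff_dvd, hc₀]
    exact hu0
  have hndvd3 : ¬ (p : ℤ) ∣ (3 : ℤ) := by
    intro h
    have h' : p ∣ 3 := by exact_mod_cast h
    exact hp3 ((Nat.prime_dvd_prime_iff_eq hp.out (by norm_num)).mp h')
  -- Hensel's lemma
  set F : Polynomial ℤ_[p] := Polynomial.X ^ 3 - Polynomial.C ((b : ℤ_[p]) ^ 2) with hF
  have hevalF : ∀ x : ℤ_[p], F.eval x = x ^ 3 - (b : ℤ_[p]) ^ 2 := by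
    intro x; simp [hF]
  have hderiv : ∀ x : ℤ_[p], F.derivative.eval x = 3 * x ^ 2 := by
    intro x; simp [hF, Polynomial.derivative_pow]
  have hnorm_one : ∀ n : ℤ, ¬ (p : ℤ) ∣ n → ‖(n : ℤ_[p])‖ = 1 := by
    intro n hn
    refine le_antisymm (PadicInt.norm_le_one _) ?_
    by_contra h
    push_neg at h
    exact hn ((PadicInt.norm_int_lt_one_iff_dvd n).mp h)
  have hnorm1 : ‖F.derivative.eval (c₀ : ℤ_[p])‖ = 1 := by
    rw [hderiv]
    have h3 : ((3 : ℤ) : ℤ_[p]) = (3 : ℤ_[p]) := by push_cast; ring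
    rw [norm_mul, ← h3, hnorm_one 3 hndvd3, norm_pow,
      hnorm_one c₀ hndvd]
    norm_num
  have hnorm2 : ‖F.eval (c₀ : ℤ_[p])‖ < 1 := by
    rw [hevalF]
    have : ((c₀ ^ 3 - b ^ 2 : ℤ) : ℤ_[p]) = (c₀ : ℤ_[p]) ^ 3 - (b : ℤ_[p]) ^ 2 := by
      push_cast; ring
    rw [← this]
    exact (PadicInt.norm_int_lt_one_iff_dvd _).mpr hdvd
  obtain ⟨z, hz, -, -, -⟩ := hensels_lemma (F := F) (a := (c₀ : ℤ_[p]))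
    (by simp only [Polynomial.coe_aeval_eq_eval]; rw [hnorm1]; simpa using hnorm2)
  have hz3 : z ^ 3 = (b : ℤ_[p]) ^ 2 := by
    have := hevalF z
    rw [Polynomial.coe_aeval_eq_eval] at hz
    rw [hz] at this
    exact sub_eq_zero.mp this.symm
  haveI : NeZero (p ^ k) := ⟨pow_ne_zero k hp.out.ne_zero⟩
  refine ⟨((PadicInt.toZModPow k z).val : ℤ), ?_⟩
  have hval : (((PadicInt.toZModPow k z).val : ℤ) : ZMod (p ^ k)) = PadicInt.toZModPow k z := by
    push_cast
    rw [ZMod.natCast_val, ZMod.cast_id]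
  rw [hval, ← map_pow, hz3]
  rw [map_pow, map_intCast]

/-- (Solvability criterion for `y³ ≡ a² (mod p^m)`.)
Let `p ≠ 3` be a prime, `m ≥ 1`, and `a` a nonzero integer.  Then
`y³ ≡ a² (mod p^m)` has an integer solution iff either `2 v_p(a) ≥ m`, or
`2 v_p(a) < m`, `3 ∣ v_p(a)`, and `ac_p(a)²` is a cube in `F_p`. -/
theorem cube_eq_square_solvable (p : ℕ) [Fact p.Prime] (hp3 : p ≠ 3)
    (m : ℕ) (hm : 1 ≤ m) (a : ℤ) (ha : a ≠ 0) :
    (∃ y : ℤ, ((y : ZMod (p ^ m))) ^ 3 = ((a : ZMod (p ^ m))) ^ 2) ↔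
      (m ≤ 2 * padicValInt p a ∨
        (2 * padicValInt p a < m ∧ 3 ∣ padicValInt p a ∧
          ∃ u : ZMod p, u ^ 3 = (angularComponent p a) ^ 2)) := by
  have hp := (Fact.out : p.Prime)
  set v := padicValInt p a with hv
  set b := a / (p : ℤ) ^ v with hbdef
  have hab : (p : ℤ) ^ v * b = a := Int.mul_ediv_cancel' (padicValInt_dvd a)
  have hb0 : b ≠ 0 := by
    intro h; rw [h, mul_zero] at hab; exact ha hab.symm
  have hb : ¬ (p : ℤ) ∣ b := by
    rintro ⟨d, hd⟩
    have hdvd : (p : ℤ) ^ (v + 1) ∣ a := ⟨d, by rw [← hab, hd]; ring⟩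
    rcases (padicValInt_dvd_iff (v + 1) a).mp hdvd with h | h
    · exact ha h
    · omega
  have hang : angularComponent p a = (b : ZMod p) := rfl
  have key : ∀ y : ℤ, ((y : ZMod (p ^ m))) ^ 3 = ((a : ZMod (p ^ m))) ^ 2 ↔
      (p : ℤ) ^ m ∣ y ^ 3 - a ^ 2 := by
    intro y
    have h1 := ZMod.intCast_zmod_eq_zero_iff_dvd (y ^ 3 - a ^ 2) (p ^ m)
    push_cast at h1
    rw [← h1, sub_eq_zero]
  have hva2 : padicValInt p (a ^ 2) = 2 * v := by
    rw [sq, padicValInt.mul ha ha]; omega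
  constructor
  · rintro ⟨y, hy⟩
    rw [key] at hy
    by_cases hcase : m ≤ 2 * v
    · exact Or.inl hcase
    push_neg at hcase
    right
    have ha2 : a ^ 2 = (p : ℤ) ^ (2 * v) * b ^ 2 := by rw [← hab]; ring
    have ha20 : a ^ 2 ≠ 0 := pow_ne_zero 2 ha
    have hpv2 : ¬ (p : ℤ) ^ (2 * v + 1) ∣ a ^ 2 := by
      rw [padicValInt_dvd_iff, hva2]
      push_neg
      exact ⟨ha20, by omega⟩
    have hy0 : y ≠ 0 := by
      intro h
      apply hpv2
      have : (p : ℤ) ^ m ∣ a ^ 2 := by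
        have := hy; rw [h] at this; simpa using this.neg_right
      exact dvd_trans (pow_dvd_pow _ (by omega)) this
    set w' := padicValInt p y with hw'def
    have hvy3 : padicValInt p (y ^ 3) = 3 * w' := by
      have h3 : y ^ 3 = y * (y * y) := by ring
      rw [h3, padicValInt.mul hy0 (mul_ne_zero hy0 hy0), padicValInt.mul hy0 hy0]
      omega
    have hy30 : y ^ 3 ≠ 0 := pow_ne_zero 3 hy0
    have hle1 : 2 * v ≤ 3 * w' := by
      have hdvd : (p : ℤ) ^ (2 * v) ∣ y ^ 3 := by
        have h1 : (p : ℤ) ^ (2 * v) ∣ y ^ 3 - a ^ 2 :=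
          dvd_trans (pow_dvd_pow _ (by omega)) hy
        have h2 : (p : ℤ) ^ (2 * v) ∣ a ^ 2 := ⟨b ^ 2, ha2⟩
        simpa using dvd_add h1 h2
      rcases (padicValInt_dvd_iff (2 * v) (y ^ 3)).mp hdvd with h | h
      · exact absurd h hy30
      · omega
    have hle2 : 3 * w' ≤ 2 * v := by
      by_contra h
      push_neg at h
      apply hpv2
      have hdvd : (p : ℤ) ^ (2 * v + 1) ∣ y ^ 3 := by
        rw [padicValInt_dvd_iff, hvy3]
        exact Or.inr (by omega)
      have h2 : (p : ℤ) ^ (2 * v + 1) ∣ y ^ 3 - a ^ 2 :=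
        dvd_trans (pow_dvd_pow _ (by omega)) hy
      simpa using dvd_sub hdvd h2
    have h3v : 3 ∣ v := by
      have h32 : (3 : ℕ) ∣ 2 * v := ⟨w', by omega⟩
      exact (Nat.Coprime.dvd_of_dvd_mul_left (by norm_num) h32)
    refine ⟨hcase, h3v, ?_⟩
    obtain ⟨w, hw⟩ := h3v
    have hww : w' = 2 * w := by omega
    set c := y / (p : ℤ) ^ w' with hcdef
    have hyc : (p : ℤ) ^ w' * c = y := Int.mul_ediv_cancel' (padicValInt_dvd y)
    have hfact : (p : ℤ) ^ (6 * w) * (c ^ 3 - b ^ 2) = y ^ 3 - a ^ 2 := by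
      rw [← hyc, ← hab, hww, hw]; ring
    have hpc : (p : ℤ) ∣ c ^ 3 - b ^ 2 := by
      have hsplit : (p : ℤ) ^ (6 * w) * (p : ℤ) ^ (m - 6 * w) = (p : ℤ) ^ m := by
        rw [← pow_add]; congr 1; omega
      have hne : ((p : ℤ) ^ (6 * w)) ≠ 0 :=
        pow_ne_zero _ (by exact_mod_cast hp.ne_zero)
      have hdvd' : (p : ℤ) ^ (6 * w) * (p : ℤ) ^ (m - 6 * w) ∣
          (p : ℤ) ^ (6 * w) * (c ^ 3 - b ^ 2) := by
        rw [hsplit, hfact]; exact hy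
      have h2 : (p : ℤ) ^ (m - 6 * w) ∣ c ^ 3 - b ^ 2 :=
        (mul_dvd_mul_iff_left hne).mp hdvd'
      exact dvd_trans (dvd_pow_self _ (by omega)) h2
    refine ⟨(c : ZMod p), ?_⟩
    rw [hang]
    have := (ZMod.intCast_zmod_eq_zero_iff_dvd (c ^ 3 - b ^ 2) p).mpr hpc
    push_cast at this
    rw [sub_eq_zero] at this
    exact this
  · rintro (hcase | ⟨hcase, h3v, u, hu⟩)
    · refine ⟨0, ?_⟩
      rw [key]
      have : (p : ℤ) ^ m ∣ a ^ 2 := by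
        refine dvd_trans (pow_dvd_pow _ hcase) ⟨b ^ 2, by rw [← hab]; ring⟩
      simpa using this.neg_right
    · obtain ⟨w, hw⟩ := h3v
      rw [hang] at hu
      obtain ⟨c, hc⟩ := cube_lift p hp3 m b hb u hu
      refine ⟨(p : ℤ) ^ (2 * w) * c, ?_⟩
      have hacast : ((a : ℤ) : ZMod (p ^ m)) =
          ((p : ℤ) : ZMod (p ^ m)) ^ (3 * w) * ((b : ℤ) : ZMod (p ^ m)) := by
        rw [← hab, hw]; push_cast; ring
      have hl : ((((p : ℤ) ^ (2 * w) * c : ℤ)) : ZMod (p ^ m)) ^ 3 =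
          ((p : ℤ) : ZMod (p ^ m)) ^ (6 * w) * ((c : ℤ) : ZMod (p ^ m)) ^ 3 := by
        push_cast; ring
      rw [hl, hc, hacast]; ring
end

section
/- (Count of cube roots of a square modulo p^m in the generic case.) Let p be a prime with p ≠ 3, let a be a nonzero integer whose p-adic valuation equals 3ω for some integer ω ≥ 0, and let m be an integer with m > 6ω. Then the number of y ∈ ℤ/p^mℤ with y³ = a² in ℤ/p^mℤ equals r · p^{4ω}, where r = #{u ∈ F_p : u³ = ac_p(a)²}. -/
lemma pow_int_dvd_iff (p k : ℕ) [NeZero (p ^ k)] (x : ℤ) :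
    (p : ℤ) ^ k ∣ x ↔ ((x : ZMod (p ^ k)) = 0) := by
  rw [show ((p : ℤ) ^ k) = ((p ^ k : ℕ) : ℤ) by push_cast; ring]
  exact (ZMod.intCast_zmod_eq_zero_iff_dvd x (p ^ k)).symm

lemma castHom_val (n d : ℕ) [NeZero n] (h : d ∣ n) (x : ZMod n) :
    ZMod.castHom h (ZMod d) x = ((x.val : ℕ) : ZMod d) := by
  have hx : ((x.val : ℕ) : ZMod n) = x := by simp [ZMod.natCast_val, ZMod.cast_id]
  conv_lhs => rw [← hx]
  rw [map_natCast]

lemma card_subtype_comp {A B : Type*} [AddCommGroup A] [AddCommGroup B] [Finite A]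
    (f : A →+ B) (hf : Function.Surjective f) (P : B → Prop) :
    Nat.card {x : A // P (f x)} = Nat.card {b : B // P b} * Nat.card f.ker := by
  have e : {x : A // P (f x)} ≃ {b : B // P b} × f.ker :=
    { toFun := fun x => (⟨f x.1, x.2⟩,
        ⟨x.1 - Function.surjInv hf (f x.1), by
          simp [AddMonoidHom.mem_ker, map_sub, Function.surjInv_eq hf]⟩)
      invFun := fun bk => ⟨Function.surjInv hf bk.1.1 + bk.2.1, by
        have h1 : f (Function.surjInv hf bk.1.1 + bk.2.1) = bk.1.1 := by
          rw [map_add, Function.surjInv_eq hf, AddMonoidHom.mem_ker.1 bk.2.2, add_zero]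
        rw [h1]; exact bk.1.2⟩
      left_inv := fun x => by ext; simp
      right_inv := fun bk => by
        have h1 : f (Function.surjInv hf bk.1.1 + bk.2.1) = bk.1.1 := by
          rw [map_add, Function.surjInv_eq hf, AddMonoidHom.mem_ker.1 bk.2.2, add_zero]
        ext
        · exact h1
        · simp [h1] }
  rw [Nat.card_congr e, Nat.card_prod]

lemma card_eq_card_mul_card_ker {A B : Type*} [AddCommGroup A] [AddCommGroup B] [Finite A]
    (f : A →+ B) (hf : Function.Surjective f) :
    Nat.card A = Nat.card B * Nat.card f.ker := by
  have h := card_subtype_comp f hf (fun _ => True)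
  simpa [Nat.card_congr (Equiv.subtypeUnivEquiv (fun _ => trivial))] using h

lemma zmod_three_ne_zero (p : ℕ) [hp : Fact p.Prime] (hp3 : p ≠ 3) : (3 : ZMod p) ≠ 0 := by
  have h : ((3 : ℕ) : ZMod p) ≠ 0 := by
    rw [Ne, ZMod.natCast_eq_zero_iff]
    intro h
    exact hp3 ((Nat.prime_dvd_prime_iff_eq hp.out (by norm_num)).1 h)
  simpa using h

lemma not_dvd_root (p : ℕ) [hp : Fact p.Prime] (c Z : ℤ) (hc : ¬ (p : ℤ) ∣ c)
    {k : ℕ} (hk : 1 ≤ k) (h : (p : ℤ) ^ k ∣ Z ^ 3 - c) : ¬ (p : ℤ) ∣ Z := by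
  intro hZ
  apply hc
  have h1 : (p : ℤ) ∣ Z ^ 3 - c := dvd_trans (dvd_pow_self _ (by omega)) h
  have h2 : (p : ℤ) ∣ Z ^ 3 := dvd_pow hZ (by norm_num)
  simpa using dvd_sub h2 h1

lemma root_ne_zero (p : ℕ) [hp : Fact p.Prime] (c Z : ℤ) (hc : ¬ (p : ℤ) ∣ c)
    {k : ℕ} (hk : 1 ≤ k) (h : (p : ℤ) ^ k ∣ Z ^ 3 - c) : ((Z : ZMod p) ≠ 0) := by
  haveI : NeZero p := ⟨hp.out.ne_zero⟩
  rw [Ne, ZMod.intCast_zmod_eq_zero_iff_dvd]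
  exact not_dvd_root p c Z hc hk h

-- Hensel step
lemma hensel_step (p : ℕ) [hp : Fact p.Prime] (hp3 : p ≠ 3) (c : ℤ) (hc : ¬ (p : ℤ) ∣ c)
    (k : ℕ) (hk : 1 ≤ k) :
    Nat.card {z : ZMod (p ^ (k+1)) // z ^ 3 = (c : ZMod (p ^ (k+1)))}
      = Nat.card {z : ZMod (p ^ k) // z ^ 3 = (c : ZMod (p ^ k))} := by
  haveI : NeZero (p ^ (k+1)) := ⟨pow_ne_zero _ hp.out.ne_zero⟩
  haveI : NeZero (p ^ k) := ⟨pow_ne_zero _ hp.out.ne_zero⟩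
  haveI : NeZero p := ⟨hp.out.ne_zero⟩
  have hp0 : ((p : ℤ)) ≠ 0 := by exact_mod_cast hp.out.ne_zero
  have hpk0 : ((p : ℤ) ^ k) ≠ 0 := pow_ne_zero _ hp0
  have hdvd : p ^ k ∣ p ^ (k+1) := pow_dvd_pow p (Nat.le_succ k)
  set f := ZMod.castHom hdvd (ZMod (p ^ k)) with hf
  have hmap : ∀ z : {z : ZMod (p ^ (k+1)) // z ^ 3 = (c : ZMod (p ^ (k+1)))},
      (f z.1) ^ 3 = (c : ZMod (p ^ k)) := by
    rintro ⟨z, hz⟩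
    have h1 : f (z ^ 3) = f ((c : ℤ) : ZMod (p ^ (k+1))) := by rw [hz]
    simpa [map_pow, map_intCast] using h1
  refine Nat.card_congr (Equiv.ofBijective
    (fun z => ⟨f z.1, hmap z⟩) ⟨?_, ?_⟩)
  · -- injective
    rintro ⟨z, hz⟩ ⟨z', hz'⟩ hzz
    simp only [Subtype.mk.injEq] at hzz ⊢
    set Z : ℤ := (z.val : ℤ) with hZ
    set Z' : ℤ := (z'.val : ℤ) with hZ'
    have hz1 : ((Z : ℤ) : ZMod (p ^ (k+1))) = z := by simp [hZ, ZMod.natCast_val, ZMod.cast_id]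
    have hz1' : ((Z' : ℤ) : ZMod (p ^ (k+1))) = z' := by simp [hZ', ZMod.natCast_val, ZMod.cast_id]
    have hd1 : ((p : ℤ) ^ (k+1)) ∣ Z ^ 3 - c := by
      rw [pow_int_dvd_iff]; push_cast; rw [hz1, hz, sub_self]
    have hd1' : ((p : ℤ) ^ (k+1)) ∣ Z' ^ 3 - c := by
      rw [pow_int_dvd_iff]; push_cast; rw [hz1', hz', sub_self]
    have hZk : ((p : ℤ) ^ k) ∣ Z' - Z := by
      rw [pow_int_dvd_iff]
      push_cast
      have e1 : ((Z : ℤ) : ZMod (p ^ k)) = f z := by rw [← hz1]; simp [hf]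
      have e1' : ((Z' : ℤ) : ZMod (p ^ k)) = f z' := by rw [← hz1']; simp [hf]
      rw [e1', e1, hzz, sub_self]
    obtain ⟨t, ht⟩ := hZk
    have hZ'eq : Z' = Z + (p:ℤ)^k * t := by linarith [ht]
    have h5 : (p : ℤ) ∣ t * (3*Z^2 + 3*Z*((p:ℤ)^k)*t + ((p:ℤ)^k)^2 * t^2) := by
      have h6 : (p:ℤ)^k * (p:ℤ) ∣ (p:ℤ)^k * (t * (3*Z^2 + 3*Z*((p:ℤ)^k)*t + ((p:ℤ)^k)^2 * t^2)) := by
        rw [← pow_succ]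
        have : (p:ℤ)^k * (t * (3*Z^2 + 3*Z*((p:ℤ)^k)*t + ((p:ℤ)^k)^2 * t^2)) = (Z'^3 - c) - (Z^3 - c) := by
          rw [hZ'eq]; ring
        rw [this]
        exact dvd_sub hd1' hd1
      exact (mul_dvd_mul_iff_left hpk0).1 h6
    -- reduce mod p
    have h7 : ((t : ZMod p)) * (3 * (Z : ZMod p)^2) = 0 := by
      have h8 : (((t * (3*Z^2 + 3*Z*((p:ℤ)^k)*t + ((p:ℤ)^k)^2 * t^2)) : ℤ) : ZMod p) = 0 := by
        rw [ZMod.intCast_zmod_eq_zero_iff_dvd]; exact h5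
      push_cast at h8
      rw [ZMod.natCast_self] at h8
      rw [zero_pow (by omega : k ≠ 0)] at h8
      ring_nf at h8 ⊢
      simpa using h8
    have hZne : (Z : ZMod p) ≠ 0 := root_ne_zero p c Z hc (by omega) (dvd_trans (pow_dvd_pow _ (Nat.le_succ k)) hd1)
    have h3ne : (3 : ZMod p) ≠ 0 := zmod_three_ne_zero p hp3
    have ht0 : ((t : ZMod p)) = 0 := by
      rcases mul_eq_zero.1 h7 with h | h
      · exact h
      · exact absurd h (by
          intro h
          rcases mul_eq_zero.1 h with h' | h'
          · exact h3ne h'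
          · exact hZne (pow_eq_zero_iff (by norm_num : (2:ℕ) ≠ 0) |>.1 h'))
    have hpt : (p : ℤ) ∣ t := by rwa [← ZMod.intCast_zmod_eq_zero_iff_dvd]
    have hfinal : ((p : ℤ) ^ (k+1)) ∣ Z' - Z := by
      obtain ⟨u, hu⟩ := hpt
      rw [ht, hu, pow_succ]
      exact ⟨u, by ring⟩
    rw [← hz1, ← hz1']
    have : ((Z' - Z : ℤ) : ZMod (p ^ (k+1))) = 0 := by
      rw [← pow_int_dvd_iff p (k+1)]; exact hfinal
    push_cast at this
    linear_combination -this
  · -- surjective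
    rintro ⟨w, hw⟩
    set Z : ℤ := (w.val : ℤ) with hZ
    have hw1 : ((Z : ℤ) : ZMod (p ^ k)) = w := by simp [hZ, ZMod.natCast_val, ZMod.cast_id]
    have hd1 : ((p : ℤ) ^ k) ∣ Z ^ 3 - c := by
      rw [pow_int_dvd_iff]; push_cast; rw [hw1, hw, sub_self]
    obtain ⟨d, hd⟩ := hd1
    have hZne : (Z : ZMod p) ≠ 0 := root_ne_zero p c Z hc hk ⟨d, hd⟩
    have h3ne : (3 : ZMod p) ≠ 0 := zmod_three_ne_zero p hp3
    have h3Zne : (3 * (Z : ZMod p)^2) ≠ 0 := by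
      intro h
      rcases mul_eq_zero.1 h with h' | h'
      · exact h3ne h'
      · exact hZne (pow_eq_zero_iff (by norm_num : (2:ℕ) ≠ 0) |>.1 h')
    set t : ℤ := (((-d : ZMod p) * (3 * (Z : ZMod p)^2)⁻¹).val : ℤ) with htdef
    have htcast : ((t : ℤ) : ZMod p) = (-d : ZMod p) * (3 * (Z : ZMod p)^2)⁻¹ := by
      simp [htdef, ZMod.natCast_val, ZMod.cast_id]
    have hkey : (p : ℤ) ∣ d + 3*Z^2*t := by
      rw [← ZMod.intCast_zmod_eq_zero_iff_dvd]
      push_cast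
      rw [htcast]
      push_cast
      field_simp
      ring
    set Z' : ℤ := Z + (p:ℤ)^k * t with hZ'def
    have hroot : ((p : ℤ) ^ (k+1)) ∣ Z' ^ 3 - c := by
      have hid : Z' ^ 3 - c = (p:ℤ)^k * (d + 3*Z^2*t) + ((p:ℤ)^k)^2 * (3*Z*t^2 + (p:ℤ)^k * t^3) := by
        rw [hZ'def]
        have : Z ^ 3 - c = (p:ℤ)^k * d := hd
        linear_combination this
      rw [hid]
      apply dvd_add
      · rw [pow_succ]
        exact mul_dvd_mul_left _ hkey
      · apply Dvd.dvd.mul_right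
        rw [← pow_mul]
        exact pow_dvd_pow _ (by omega)
    refine ⟨⟨((Z' : ℤ) : ZMod (p ^ (k+1))), ?_⟩, ?_⟩
    · have h9 := (pow_int_dvd_iff p (k+1) _).1 hroot
      push_cast at h9
      linear_combination h9
    · apply Subtype.ext
      show f ((Z' : ℤ) : ZMod (p ^ (k+1))) = w
      rw [map_intCast]
      have hpk : (((p:ℤ)^k : ℤ) : ZMod (p ^ k)) = 0 := (pow_int_dvd_iff p k _).1 dvd_rfl
      rw [hZ'def]
      push_cast
      push_cast at hpk
      rw [hpk, hw1]
      ring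

lemma hensel_card (p : ℕ) [hp : Fact p.Prime] (hp3 : p ≠ 3) (c : ℤ) (hc : ¬ (p : ℤ) ∣ c)
    (k : ℕ) (hk : 1 ≤ k) :
    Nat.card {z : ZMod (p ^ k) // z ^ 3 = (c : ZMod (p ^ k))}
      = Nat.card {u : ZMod p // u ^ 3 = (c : ZMod p)} := by
  induction k, hk using Nat.le_induction with
  | base => rw [pow_one]
  | succ k hk ih => rw [hensel_step p hp3 c hc k hk, ih]

/-- (Count of cube roots of a square modulo `p^m` in the
generic case.)  Let `p ≠ 3` be a prime and `a` a nonzero integer with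
`v_p(a) = 3ω`.  Then for `m > 6ω`, the number of `y ∈ ℤ/p^mℤ` with `y³ = a²` is
`r · p^{4ω}`, where `r = #{u ∈ F_p : u³ = ac_p(a)²}`. -/
theorem cube_roots_of_square_count (p : ℕ) [Fact p.Prime] (hp3 : p ≠ 3)
    (a : ℤ) (ha : a ≠ 0) (ω : ℕ) (hv : padicValInt p a = 3 * ω)
    (m : ℕ) (hm : 6 * ω < m) :
    Nat.card {y : ZMod (p ^ m) // y ^ 3 = ((a : ZMod (p ^ m))) ^ 2}
      = Nat.card {u : ZMod p // u ^ 3 = (angularComponent p a) ^ 2} * p ^ (4 * ω) := by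
  have hp := ‹Fact p.Prime›
  obtain ⟨k, hk1, rfl⟩ : ∃ k, 1 ≤ k ∧ m = 6*ω + k := ⟨m - 6*ω, by omega, by omega⟩
  haveI : NeZero p := ⟨hp.out.ne_zero⟩
  haveI h1 : NeZero (p ^ (6*ω+k)) := ⟨pow_ne_zero _ hp.out.ne_zero⟩
  haveI h2 : NeZero (p ^ (4*ω+k)) := ⟨pow_ne_zero _ hp.out.ne_zero⟩
  haveI h3 : NeZero (p ^ k) := ⟨pow_ne_zero _ hp.out.ne_zero⟩
  have hp0 : ((p : ℤ)) ≠ 0 := by exact_mod_cast hp.out.ne_zero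
  -- decompose a
  set b : ℤ := a / (p:ℤ)^(3*ω) with hb
  have hdvd0 : (p:ℤ)^(3*ω) ∣ a := by rw [← hv]; exact padicValInt_dvd a
  have hab : a = (p:ℤ)^(3*ω) * b := (Int.mul_ediv_cancel' hdvd0).symm
  have hpb : ¬ (p:ℤ) ∣ b := by
    intro h
    obtain ⟨e, he⟩ := h
    have hdd : (p:ℤ)^(3*ω+1) ∣ a := ⟨e, by rw [hab, he, pow_succ]; ring⟩
    rcases (padicValInt_dvd_iff (3*ω+1) a).1 hdd with h' | h'
    · exact ha h'
    · omega
  have hc : ¬ (p:ℤ) ∣ b^2 := fun h => hpb ((Nat.prime_iff_prime_int.1 hp.out).dvd_of_dvd_pow h)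
  have hangular : angularComponent p a = ((b : ℤ) : ZMod p) := by
    unfold angularComponent
    rw [hv]
  -- the cast hom
  have hdvd2 : p ^ k ∣ p ^ (4*ω+k) := pow_dvd_pow p (by omega)
  set f := ZMod.castHom hdvd2 (ZMod (p ^ k)) with hfdef
  have hfsurj : Function.Surjective f := by
    intro w
    refine ⟨((w.val : ℕ) : ZMod (p ^ (4*ω+k))), ?_⟩
    rw [map_natCast]
    simp [ZMod.natCast_val, ZMod.cast_id]
  set P : ZMod (p ^ k) → Prop := fun u => u ^ 3 = ((b^2 : ℤ) : ZMod (p ^ k)) with hP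
  -- the bijection
  have key : Nat.card {y : ZMod (p ^ (6*ω+k)) // y ^ 3 = ((a : ZMod (p ^ (6*ω+k)))) ^ 2}
      = Nat.card {x : ZMod (p ^ (4*ω+k)) // P (f x)} := by
    refine (Nat.card_congr (Equiv.ofBijective (fun x => ?_) ⟨?_, ?_⟩)).symm
    · refine ⟨(((p:ℤ)^(2*ω) * (x.1.val : ℤ) : ℤ) : ZMod (p ^ (6*ω+k))), ?_⟩
      have hx1 : (((x.1.val : ℤ)) : ZMod (p ^ (4*ω+k))) = x.1 := by
        simp [ZMod.natCast_val, ZMod.cast_id]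
      have hPx : (p:ℤ)^k ∣ (x.1.val : ℤ)^3 - b^2 := by
        rw [pow_int_dvd_iff]
        push_cast
        rw [← castHom_val _ _ hdvd2 x.1]
        have hx2 := x.2
        simp only [hP] at hx2
        push_cast at hx2
        linear_combination hx2
      have hdd : (p:ℤ)^(6*ω+k) ∣ ((p:ℤ)^(2*ω) * (x.1.val : ℤ))^3 - a^2 := by
        have e1 : ((p:ℤ)^(2*ω))^3 = (p:ℤ)^(6*ω) := by rw [← pow_mul]; congr 1; omega
        have e2 : ((p:ℤ)^(3*ω))^2 = (p:ℤ)^(6*ω) := by rw [← pow_mul]; congr 1; omega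
        have hid : ((p:ℤ)^(2*ω) * (x.1.val : ℤ))^3 - a^2
            = (p:ℤ)^(6*ω) * ((x.1.val : ℤ)^3 - b^2) := by
          rw [hab]
          linear_combination ((x.1.val : ℤ)^3) * e1 - (b^2) * e2
        rw [hid, pow_add]
        exact mul_dvd_mul_left _ hPx
      have h9 := (pow_int_dvd_iff p (6*ω+k) _).1 hdd
      push_cast at h9 ⊢
      linear_combination h9
    · -- injective
      rintro ⟨x, hx⟩ ⟨x', hx'⟩ hxx
      simp only [Subtype.mk.injEq] at hxx ⊢
      set X : ℤ := (x.val : ℤ) with hX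
      set X' : ℤ := (x'.val : ℤ) with hX'
      have hdd : (p:ℤ)^(6*ω+k) ∣ (p:ℤ)^(2*ω) * X - (p:ℤ)^(2*ω) * X' := by
        rw [pow_int_dvd_iff]
        push_cast
        push_cast at hxx
        linear_combination hxx
      have hcancel : (p:ℤ)^(4*ω+k) ∣ X - X' := by
        have e : (p:ℤ)^(6*ω+k) = (p:ℤ)^(2*ω) * (p:ℤ)^(4*ω+k) := by
          rw [← pow_add]; congr 1; omega
        rw [e] at hdd
        have : (p:ℤ)^(2*ω) * X - (p:ℤ)^(2*ω) * X' = (p:ℤ)^(2*ω) * (X - X') := by ring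
        rw [this] at hdd
        exact (mul_dvd_mul_iff_left (pow_ne_zero _ hp0)).1 hdd
      have hx1 : ((X : ℤ) : ZMod (p ^ (4*ω+k))) = x := by simp [hX, ZMod.natCast_val, ZMod.cast_id]
      have hx1' : ((X' : ℤ) : ZMod (p ^ (4*ω+k))) = x' := by simp [hX', ZMod.natCast_val, ZMod.cast_id]
      rw [← hx1, ← hx1']
      have : ((X - X' : ℤ) : ZMod (p ^ (4*ω+k))) = 0 := by
        rw [← pow_int_dvd_iff p (4*ω+k)]; exact hcancel
      push_cast at this
      linear_combination this
    · -- surjective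
      rintro ⟨y, hy⟩
      set Y : ℤ := (y.val : ℤ) with hYdef
      have hy1 : ((Y : ℤ) : ZMod (p ^ (6*ω+k))) = y := by simp [hYdef, ZMod.natCast_val, ZMod.cast_id]
      have hdd : (p:ℤ)^(6*ω+k) ∣ Y^3 - a^2 := by
        rw [pow_int_dvd_iff]
        push_cast
        rw [hy1, hy, sub_self]
      have hY3 : (p:ℤ)^(6*ω) ∣ Y^3 := by
        have d1 : (p:ℤ)^(6*ω) ∣ Y^3 - a^2 := dvd_trans (pow_dvd_pow _ (by omega)) hdd
        have e2 : ((p:ℤ)^(3*ω))^2 = (p:ℤ)^(6*ω) := by rw [← pow_mul]; congr 1; omega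
        have d2 : (p:ℤ)^(6*ω) ∣ a^2 := ⟨b^2, by rw [hab]; linear_combination (b^2) * e2⟩
        simpa using dvd_add d1 d2
      have hYW : (p:ℤ)^(2*ω) ∣ Y := by
        rw [← Int.pow_dvd_pow_iff (by norm_num : (3:ℕ) ≠ 0)]
        rw [← pow_mul]
        rw [show 2*ω*3 = 6*ω by ring]
        exact hY3
      obtain ⟨W, hW⟩ := hYW
      have hWc : (p:ℤ)^k ∣ W^3 - b^2 := by
        have e : (p:ℤ)^(6*ω+k) = (p:ℤ)^(6*ω) * (p:ℤ)^k := by rw [← pow_add]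
        have e1 : ((p:ℤ)^(2*ω))^3 = (p:ℤ)^(6*ω) := by rw [← pow_mul]; congr 1; omega
        have e2 : ((p:ℤ)^(3*ω))^2 = (p:ℤ)^(6*ω) := by rw [← pow_mul]; congr 1; omega
        have hid : Y^3 - a^2 = (p:ℤ)^(6*ω) * (W^3 - b^2) := by
          rw [hW, hab]
          linear_combination (W^3) * e1 - (b^2) * e2
        rw [hid, e] at hdd
        exact (mul_dvd_mul_iff_left (pow_ne_zero _ hp0)).1 hdd
      refine ⟨⟨((W : ℤ) : ZMod (p ^ (4*ω+k))), ?_⟩, ?_⟩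
      · rw [hP]
        show (f ((W : ℤ) : ZMod (p ^ (4*ω+k))))^3 = _
        rw [map_intCast]
        have h9 := (pow_int_dvd_iff p k _).1 hWc
        push_cast at h9
        push_cast
        linear_combination h9
      · apply Subtype.ext
        show (((p:ℤ)^(2*ω) * ((((W : ℤ) : ZMod (p ^ (4*ω+k)))).val : ℤ) : ℤ) : ZMod (p ^ (6*ω+k))) = y
        set V : ℤ := ((((W : ℤ) : ZMod (p ^ (4*ω+k)))).val : ℤ) with hV
        have hVW : (p:ℤ)^(4*ω+k) ∣ V - W := by
          rw [pow_int_dvd_iff]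
          push_cast
          have : ((V : ℤ) : ZMod (p ^ (4*ω+k))) = ((W : ℤ) : ZMod (p ^ (4*ω+k))) := by
            simp [hV, ZMod.natCast_val, ZMod.cast_id]
          rw [this, sub_self]
        have hfin : (p:ℤ)^(6*ω+k) ∣ (p:ℤ)^(2*ω) * V - Y := by
          rw [hW]
          have e : (p:ℤ)^(6*ω+k) = (p:ℤ)^(2*ω) * (p:ℤ)^(4*ω+k) := by
            rw [← pow_add]; congr 1; omega
          rw [e]
          have : (p:ℤ)^(2*ω) * V - (p:ℤ)^(2*ω) * W = (p:ℤ)^(2*ω) * (V - W) := by ring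
          rw [this]
          exact mul_dvd_mul_left _ hVW
        rw [← hy1]
        have h9 := (pow_int_dvd_iff p (6*ω+k) _).1 hfin
        push_cast at h9 ⊢
        linear_combination h9
  have hcomp : Nat.card {x : ZMod (p^(4*ω+k)) // P (f x)}
      = Nat.card {u : ZMod (p^k) // P u} * Nat.card f.toAddMonoidHom.ker :=
    card_subtype_comp f.toAddMonoidHom hfsurj P
  rw [key, hcomp]
  -- kernel cardinality
  have hker : Nat.card f.toAddMonoidHom.ker = p ^ (4*ω) := by
    have h10 := card_eq_card_mul_card_ker f.toAddMonoidHom hfsurj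
    rw [Nat.card_zmod, Nat.card_zmod] at h10
    have hpk : 0 < p ^ k := pow_pos hp.out.pos _
    have he : p ^ (4*ω+k) = p ^ k * p ^ (4*ω) := by rw [← pow_add]; congr 1; omega
    exact Nat.eq_of_mul_eq_mul_left hpk (by rw [← h10]; exact he)
  rw [hker]
  congr 1
  -- hensel + angular component
  have hhen := hensel_card p hp3 (b^2) hc k hk1
  have : {u : ZMod (p^k) // P u} = {z : ZMod (p ^ k) // z ^ 3 = ((b^2 : ℤ) : ZMod (p ^ k))} := rfl
  rw [this, hhen]
  have e2 : ((b^2 : ℤ) : ZMod p) = (angularComponent p a) ^ 2 := by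
    rw [hangular]; push_cast; ring
  simp only [e2]
end
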